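/- arXiv:1608.00769 — 8 statements merged into one kernel-verified Lean document; each statement's English description precedes it below -/
import Mathlib

section
/- Let G=(V,E) be a connected graph with at least two vertices, let t ≥ 2 be an integer, let x ∈ V and let w, w' ∈ V^{t-1}. Then the distance in the generalized Sierpiński graph S(G,t) between the vertices xw and xw' equals the distance in S(G,t-1) between w and w': d_{S(G,t)}(xw, xw') = d_{S(G,t-1)}(w, w'). -/
/-- The generalized Sierpiński graph `S(G,t)` of a base graph `G`: vertices are words of
length `t` over the vertex set (encoded as `Fin t → V`); two words are adjacent iff they are
of the form `w x y^{d-1}` and `w y x^{d-1}` for some edge `{x,y}` of `G`. -/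
def SierpinskiGraph {V : Type*} (G : SimpleGraph V) (t : ℕ) : SimpleGraph (Fin t → V) where
  Adj u v := ∃ i : Fin t, G.Adj (u i) (v i) ∧
      (∀ j : Fin t, j < i → u j = v j) ∧
      (∀ j : Fin t, i < j → u j = v i ∧ v j = u i)
  symm := by
    constructor
    rintro u v ⟨i, h1, h2, h3⟩
    exact ⟨i, h1.symm, fun j hj => (h2 j hj).symm, fun j hj => ⟨(h3 j hj).2, (h3 j hj).1⟩⟩
  loopless := by
    constructor
    rintro u ⟨i, h1, -, -⟩
    exact G.loopless.irrefl _ h1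

namespace SierpinskiAux

variable {V : Type*} {G : SimpleGraph V} {t : ℕ}

/-- An edge of `S(G,t+1)` between vertices with the same first letter projects to an
edge between the tails. -/
lemma adj_tail {u v : Fin (t + 1) → V}
    (h : (SierpinskiGraph G (t + 1)).Adj u v) (h0 : u 0 = v 0) :
    (SierpinskiGraph G t).Adj (Fin.tail u) (Fin.tail v) := by
  obtain ⟨i, h1, h2, h3⟩ := h
  rcases Fin.eq_zero_or_eq_succ i with rfl | ⟨k, rfl⟩
  · rw [h0] at h1
    exact absurd h1 (G.loopless.irrefl _)
  · exact ⟨k, h1, fun j hj => h2 j.succ (Fin.succ_lt_succ_iff.mpr hj),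
      fun j hj => h3 j.succ (Fin.succ_lt_succ_iff.mpr hj)⟩

/-- An edge of `S(G,t+1)` between vertices with different first letters is a bridge edge:
it connects `a b^t` with `b a^t`. -/
lemma adj_bridge {u v : Fin (t + 1) → V}
    (h : (SierpinskiGraph G (t + 1)).Adj u v) (h0 : u 0 ≠ v 0) :
    G.Adj (u 0) (v 0) ∧ Fin.tail u = (fun _ => v 0) ∧ Fin.tail v = (fun _ => u 0) := by
  obtain ⟨i, h1, h2, h3⟩ := h
  rcases Fin.eq_zero_or_eq_succ i with rfl | ⟨k, rfl⟩
  · exact ⟨h1, funext fun j => (h3 j.succ (Fin.succ_pos j)).1,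
      funext fun j => (h3 j.succ (Fin.succ_pos j)).2⟩
  · exact absurd (h2 0 (Fin.succ_pos k)) h0

/-- Prepending a letter is a graph homomorphism `S(G,t) → S(G,t+1)` (into a copy). -/
lemma adj_cons {a : V} {v v' : Fin t → V} (h : (SierpinskiGraph G t).Adj v v') :
    (SierpinskiGraph G (t + 1)).Adj (Fin.cons a v) (Fin.cons a v') := by
  obtain ⟨i, h1, h2, h3⟩ := h
  refine ⟨i.succ, by simpa using h1, ?_, ?_⟩
  · intro j hj
    rcases Fin.eq_zero_or_eq_succ j with rfl | ⟨k, rfl⟩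
    · simp
    · simpa using h2 k (Fin.succ_lt_succ_iff.mp hj)
  · intro j hj
    rcases Fin.eq_zero_or_eq_succ j with rfl | ⟨k, rfl⟩
    · exact absurd hj (by simp [Fin.pos_iff_ne_zero])
    · simpa using h3 k (Fin.succ_lt_succ_iff.mp hj)

/-- The bridge edge of `S(G,t+1)` associated to an edge `{a,b}` of `G`. -/
lemma adj_bridge' {a b : V} (h : G.Adj a b) :
    (SierpinskiGraph G (t + 1)).Adj (Fin.cons a fun _ => b) (Fin.cons b fun _ => a) := by
  refine ⟨0, by simpa using h, ?_, ?_⟩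
  · intro j hj
    exact absurd hj (by simp)
  · intro j hj
    rcases Fin.eq_zero_or_eq_succ j with rfl | ⟨k, rfl⟩
    · exact absurd hj (by simp)
    · simp

/-- `Fin.cons a` as a graph homomorphism `S(G,t) → S(G,t+1)`. -/
def consHom (G : SimpleGraph V) (t : ℕ) (a : V) :
    SierpinskiGraph G t →g SierpinskiGraph G (t + 1) where
  toFun := fun v => Fin.cons a v
  map_rel' := by intro v v' h; exact adj_cons (a := a) h

@[simp] lemma consHom_apply (G : SimpleGraph V) (t : ℕ) (a : V) (v : Fin t → V) :
    consHom G t a v = Fin.cons a v := rfl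

/-- If `G` is connected then so is every generalized Sierpiński graph `S(G,t)`. -/
lemma sconn (hconn : G.Connected) : ∀ t, (SierpinskiGraph G t).Connected := by
  intro t
  induction t with
  | zero =>
    refine { preconnected := fun u v => ?_, nonempty := ⟨fun i => i.elim0⟩ }
    have huv : u = v := funext fun i => i.elim0
    rw [huv]
  | succ t ih =>
    have hreach : ∀ {a b : V} (_ : G.Walk a b) (vv ww : Fin t → V),
        (SierpinskiGraph G (t + 1)).Reachable (Fin.cons a vv) (Fin.cons b ww) := by
      intro a b p
      induction p with
      | @nil a =>
        intro vv ww
        have h := (ih.preconnected vv ww).map (consHom G t a)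
        simpa using h
      | @cons a c b hadj q ihq =>
        intro vv ww
        have h1 := (ih.preconnected vv fun _ => c).map (consHom G t a)
        simp only [consHom_apply] at h1
        exact h1.trans (((adj_bridge' hadj).reachable).trans (ihq (fun _ => a) ww))
    obtain ⟨a⟩ := hconn.nonempty
    refine { preconnected := fun u v => ?_, nonempty := ⟨fun _ => a⟩ }
    obtain ⟨p⟩ := hconn.preconnected (u 0) (v 0)
    have := hreach p (Fin.tail u) (Fin.tail v)
    rwa [Fin.cons_self_tail, Fin.cons_self_tail] at this

/-- The key lower bound, proven by simultaneous strong induction on the walk length: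
(1) a walk inside `S(G,t+1)` between two vertices of the copy `x` has length at least the
distance of the tails in `S(G,t)`; (2) a walk from a vertex outside the copy `x` to a vertex
of the copy `x` is bounded below by a min-of-two-routes potential. -/
lemma key (hconn : G.Connected) (t : ℕ) (x : V) :
    ∀ n : ℕ,
      (∀ s tg : Fin (t + 1) → V, s 0 = x → tg 0 = x →
        ∀ p : (SierpinskiGraph G (t + 1)).Walk s tg, p.length = n →
          (SierpinskiGraph G t).dist (Fin.tail s) (Fin.tail tg) ≤ n) ∧
      (∀ s tg : Fin (t + 1) → V, s 0 ≠ x → tg 0 = x →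
        ∀ p : (SierpinskiGraph G (t + 1)).Walk s tg, p.length = n →
          min ((SierpinskiGraph G t).dist (Fin.tail s) (fun _ => x) + 1 +
                (SierpinskiGraph G t).dist (fun _ => s 0) (Fin.tail tg))
              ((SierpinskiGraph G t).dist (fun _ => s 0) (fun _ => x) + 1 +
                (SierpinskiGraph G t).dist (Fin.tail s) (Fin.tail tg)) ≤ n) := by
  have ct := sconn hconn t
  intro n
  induction n using Nat.strong_induction_on with
  | _ n IH =>
    constructor
    · intro s tg hs htg p hlen
      cases p with
      | nil =>
        rw [SimpleGraph.dist_self]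
        exact Nat.zero_le n
      | @cons _ u₁ _ hadj q =>
        rw [SimpleGraph.Walk.length_cons] at hlen
        by_cases h0 : u₁ 0 = x
        · have hadj' : (SierpinskiGraph G t).Adj (Fin.tail s) (Fin.tail u₁) :=
            adj_tail hadj (by rw [hs, h0])
          have hq := (IH q.length (by omega)).1 u₁ tg h0 htg q rfl
          have tri := ct.dist_triangle (u := Fin.tail s) (v := Fin.tail u₁) (w := Fin.tail tg)
          have h1 : (SierpinskiGraph G t).dist (Fin.tail s) (Fin.tail u₁) ≤ 1 := by
            simpa using SimpleGraph.dist_le (SimpleGraph.Walk.cons hadj' SimpleGraph.Walk.nil)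
          omega
        · have hne : s 0 ≠ u₁ 0 := by rw [hs]; exact fun h => h0 h.symm
          obtain ⟨hGadj, hts, htu⟩ := adj_bridge hadj hne
          have hA := (IH q.length (by omega)).2 u₁ tg h0 htg q rfl
          rw [htu, hs] at hA
          rw [hts]
          rcases min_le_iff.mp hA with h' | h'
          · rw [SimpleGraph.dist_self] at h'
            omega
          · have tri := ct.dist_triangle (u := fun _ => u₁ 0) (v := fun _ => x)
              (w := Fin.tail tg)
            omega
    · intro s tg hs htg p hlen
      cases p with
      | nil => exact absurd htg hs
      | @cons _ u₁ _ hadj q =>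
        rw [SimpleGraph.Walk.length_cons] at hlen
        by_cases h0 : u₁ 0 = s 0
        · have hadj' : (SierpinskiGraph G t).Adj (Fin.tail s) (Fin.tail u₁) :=
            adj_tail hadj h0.symm
          have hA := (IH q.length (by omega)).2 u₁ tg (by rw [h0]; exact hs) htg q rfl
          rw [h0] at hA
          have h1 : (SierpinskiGraph G t).dist (Fin.tail s) (Fin.tail u₁) ≤ 1 := by
            simpa using SimpleGraph.dist_le (SimpleGraph.Walk.cons hadj' SimpleGraph.Walk.nil)
          have t1 := ct.dist_triangle (u := Fin.tail s) (v := Fin.tail u₁) (w := fun _ => x)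
          have t2 := ct.dist_triangle (u := Fin.tail s) (v := Fin.tail u₁) (w := Fin.tail tg)
          rcases min_le_iff.mp hA with h' | h'
          · exact le_trans (min_le_left _ _) (by omega)
          · exact le_trans (min_le_right _ _) (by omega)
        · obtain ⟨hGadj, hts, htu⟩ := adj_bridge hadj fun h => h0 h.symm
          by_cases hx : u₁ 0 = x
          · have hq := (IH q.length (by omega)).1 u₁ tg hx htg q rfl
            rw [htu] at hq
            refine le_trans (min_le_left _ _) ?_
            rw [hts, hx, SimpleGraph.dist_self]
            omega
          · have hA := (IH q.length (by omega)).2 u₁ tg hx htg q rfl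
            rw [htu] at hA
            rw [hts]
            rw [min_comm] at hA
            exact hA.trans (by omega)

end SierpinskiAux

/-- for a connected graph `G` with at least two vertices, `t ≥ 2` (here `t + 1`
with `t ≥ 1`), a vertex `x` and words `w, w'` of length `t`,
`d_{S(G,t+1)}(xw, xw') = d_{S(G,t)}(w, w')`. -/
theorem stmt_0 {V : Type*} (G : SimpleGraph V) (hconn : G.Connected) (hV : Nontrivial V)
    (t : ℕ) (ht : 1 ≤ t) (x : V) (w w' : Fin t → V) :
    (SierpinskiGraph G (t + 1)).dist (Fin.cons x w) (Fin.cons x w') =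
      (SierpinskiGraph G t).dist w w' := by
  have ct := SierpinskiAux.sconn hconn t
  have ct1 := SierpinskiAux.sconn hconn (t + 1)
  apply le_antisymm
  · obtain ⟨p, hp⟩ := (ct.preconnected w w').exists_walk_length_eq_dist
    have hle := SimpleGraph.dist_le (p.map (SierpinskiAux.consHom G t x))
    rw [SimpleGraph.Walk.length_map, hp] at hle
    simpa using hle
  · obtain ⟨q, hq⟩ :=
      (ct1.preconnected (Fin.cons x w) (Fin.cons x w')).exists_walk_length_eq_dist
    have hkey := (SierpinskiAux.key hconn t x q.length).1 (Fin.cons x w) (Fin.cons x w')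
      (by simp) (by simp) q rfl
    rwa [Fin.tail_cons, Fin.tail_cons, hq] at hkey
end

section
/- Let G=(V,E) be a connected graph with at least two vertices and let r ≥ 1 and t ≥ 1 be integers. If v_0 w_0^{(0)}, v_0 w_1^{(0)}, …, v_0 w_{l_0}^{(0)}, v_1 w_0^{(1)}, …, v_1 w_{l_1}^{(1)}, …, v_r w_0^{(r)}, …, v_r w_{l_r}^{(r)} is a shortest path in the generalized Sierpiński graph S(G,t), where v_i ∈ V and w_j^{(i)} ∈ V^{t-1} for i ∈ {0,1,…,r} and j ∈ {0,1,…,l_i}, and consecutive groups have distinct first letters (v_i ≠ v_{i+1}), then v_0, v_1, …, v_r is a path in G. -/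
set_option linter.unusedSectionVars false

section Aux

variable {V : Type*} [DecidableEq V] {G : SimpleGraph V} {n : ℕ}

/-- Either the first letters of adjacent words agree, or they are adjacent in `G`. -/
lemma SierpAux.adj_head {u v : Fin (n + 1) → V} (h : (SierpinskiGraph G (n + 1)).Adj u v) :
    u 0 = v 0 ∨ G.Adj (u 0) (v 0) := by
  obtain ⟨i, h1, h2, h3⟩ := h
  by_cases hi : i = 0
  · subst hi; exact Or.inr h1
  · exact Or.inl (h2 0 (Fin.pos_of_ne_zero hi))

/-- If adjacent words share their first letter, their tails are adjacent one level down. -/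
lemma SierpAux.adj_tail {u v : Fin (n + 1) → V} (h : (SierpinskiGraph G (n + 1)).Adj u v)
    (h0 : u 0 = v 0) : (SierpinskiGraph G n).Adj (Fin.tail u) (Fin.tail v) := by
  obtain ⟨i, h1, h2, h3⟩ := h
  have hi : i ≠ 0 := by
    rintro rfl
    rw [h0] at h1
    exact G.loopless.irrefl _ h1
  obtain ⟨k, rfl⟩ : ∃ k : Fin n, i = k.succ := by
    obtain ⟨k, hk⟩ := Fin.exists_succ_eq.2 hi
    exact ⟨k, hk.symm⟩
  refine ⟨k, h1, ?_, ?_⟩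
  · intro j hj
    exact h2 j.succ (by simpa [Fin.succ_lt_succ_iff] using hj)
  · intro j hj
    exact h3 j.succ (by simpa [Fin.succ_lt_succ_iff] using hj)

/-- Rigidity: if adjacent words have distinct first letters, then the letters are adjacent
in `G` and each tail is constantly the other word's first letter. -/
lemma SierpAux.adj_rigid {u v : Fin (n + 1) → V} (h : (SierpinskiGraph G (n + 1)).Adj u v)
    (h0 : u 0 ≠ v 0) : G.Adj (u 0) (v 0) ∧ Fin.tail u = (fun _ => v 0) ∧
      Fin.tail v = (fun _ => u 0) := by
  obtain ⟨i, h1, h2, h3⟩ := h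
  have hi : i = 0 := by
    by_contra hi
    exact h0 (h2 0 (Fin.pos_of_ne_zero hi))
  subst hi
  refine ⟨h1, funext fun k => ?_, funext fun k => ?_⟩
  · exact (h3 k.succ (Fin.succ_pos k)).1
  · exact (h3 k.succ (Fin.succ_pos k)).2

/-- Adjacency lifts into a fixed block. -/
lemma SierpAux.adj_cons {x : V} {α β : Fin n → V} (h : (SierpinskiGraph G n).Adj α β) :
    (SierpinskiGraph G (n + 1)).Adj (Fin.cons x α) (Fin.cons x β) := by
  obtain ⟨i, h1, h2, h3⟩ := h
  refine ⟨i.succ, by simpa using h1, ?_, ?_⟩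
  · intro j hj
    rcases Fin.eq_zero_or_eq_succ j with rfl | ⟨k, rfl⟩
    · simp
    · simp only [Fin.cons_succ]
      exact h2 k (Fin.succ_lt_succ_iff.1 hj)
  · intro j hj
    rcases Fin.eq_zero_or_eq_succ j with rfl | ⟨k, rfl⟩
    · simp [Fin.lt_def] at hj
    · simp only [Fin.cons_succ]
      exact h3 k (Fin.succ_lt_succ_iff.1 hj)

/-- Lift a walk of `S(G,n)` into the block of `S(G,n+1)` with first letter `x`. -/
def SierpAux.liftWalk (x : V) : ∀ {α β : Fin n → V}, (SierpinskiGraph G n).Walk α β →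
    (SierpinskiGraph G (n + 1)).Walk (Fin.cons x α) (Fin.cons x β)
  | _, _, .nil => .nil
  | _, _, .cons h q => .cons (SierpAux.adj_cons h) (SierpAux.liftWalk x q)

lemma SierpAux.liftWalk_length (x : V) : ∀ {α β : Fin n → V}
    (w : (SierpinskiGraph G n).Walk α β), (SierpAux.liftWalk x w).length = w.length
  | _, _, .nil => rfl
  | _, _, .cons h q => by
      simp [SierpAux.liftWalk, SierpAux.liftWalk_length x q]

/-- The number of "crossing" steps of a walk: steps that change the first letter. -/
def SierpAux.cr {u v : Fin (n + 1) → V} (W : (SierpinskiGraph G (n + 1)).Walk u v) : ℕ :=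
  W.darts.countP fun d => decide (d.toProd.1 0 ≠ d.toProd.2 0)

lemma SierpAux.cr_cons_eq {u u' v : Fin (n + 1) → V}
    (h : (SierpinskiGraph G (n + 1)).Adj u u') (q : (SierpinskiGraph G (n + 1)).Walk u' v)
    (h0 : u 0 = u' 0) : SierpAux.cr (SimpleGraph.Walk.cons h q) = SierpAux.cr q := by
  simp [SierpAux.cr, SimpleGraph.Walk.darts_cons, List.countP_cons, h0]

lemma SierpAux.cr_cons_ne {u u' v : Fin (n + 1) → V}
    (h : (SierpinskiGraph G (n + 1)).Adj u u') (q : (SierpinskiGraph G (n + 1)).Walk u' v)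
    (h0 : u 0 ≠ u' 0) : SierpAux.cr (SimpleGraph.Walk.cons h q) = SierpAux.cr q + 1 := by
  simp [SierpAux.cr, SimpleGraph.Walk.darts_cons, List.countP_cons, h0]

lemma SierpAux.cr_pos {u v : Fin (n + 1) → V} (q : (SierpinskiGraph G (n + 1)).Walk u v) :
    u 0 ≠ v 0 → 1 ≤ SierpAux.cr q := by
  induction q with
  | nil => exact fun hne => absurd rfl hne
  | @cons a c d h' q ih =>
    intro hne
    by_cases h0 : a 0 = c 0
    · rw [SierpAux.cr_cons_eq h' q h0]
      exact ih (by rwa [h0] at hne)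
    · rw [SierpAux.cr_cons_ne h' q h0]; omega

lemma SierpAux.cr_two {u v : Fin (n + 1) → V} (M : (SierpinskiGraph G (n + 1)).Walk u v) :
    u 0 = v 0 → ∀ w ∈ M.support, w 0 ≠ u 0 → 2 ≤ SierpAux.cr M := by
  induction M with
  | nil =>
    intro _ w hw hwx
    simp only [SimpleGraph.Walk.support_nil, List.mem_singleton] at hw
    subst hw; exact absurd rfl hwx
  | @cons a c d h' q ih =>
    intro huv w hw hwx
    rw [SimpleGraph.Walk.support_cons, List.mem_cons] at hw
    rcases hw with rfl | hw
    · exact absurd rfl hwx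
    · by_cases h0 : a 0 = c 0
      · rw [SierpAux.cr_cons_eq h' q h0]
        exact ih (by rwa [h0] at huv) w hw (by rwa [h0] at hwx)
      · rw [SierpAux.cr_cons_ne h' q h0]
        have : 1 ≤ SierpAux.cr q :=
          SierpAux.cr_pos q (by rw [← huv]; exact fun e => h0 e.symm)
        omega

/-- The two-token lemma: from any walk in `S(G,n+1)` one can extract two walks in `S(G,n)`,
one starting at the constant word of the first letter and one at the tail, ending (in some
order) at the constant word of the final first letter and the final tail, whose total length
is at most the length of the walk minus the number of crossing steps. -/
lemma SierpAux.tokens {u v : Fin (n + 1) → V} (W : (SierpinskiGraph G (n + 1)).Walk u v) :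
    ∃ (pp qq : Fin n → V) (A : (SierpinskiGraph G n).Walk (fun _ => u 0) pp)
      (B : (SierpinskiGraph G n).Walk (Fin.tail u) qq),
      ((pp = fun _ => v 0) ∧ qq = Fin.tail v ∨ pp = Fin.tail v ∧ (qq = fun _ => v 0)) ∧
      A.length + B.length + SierpAux.cr W ≤ W.length := by
  induction W with
  | nil => exact ⟨_, _, .nil, .nil, Or.inl ⟨rfl, rfl⟩, by simp [SierpAux.cr]⟩
  | @cons a c d h' q ih =>
    obtain ⟨pp, qq, A, B, hd, hlen⟩ := ih
    by_cases h0 : a 0 = c 0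
    · refine ⟨pp, qq, A.copy (funext fun _ => h0.symm) rfl,
        .cons (SierpAux.adj_tail h' h0) B, hd, ?_⟩
      rw [SierpAux.cr_cons_eq h' q h0]
      simp only [SimpleGraph.Walk.length_copy, SimpleGraph.Walk.length_cons]
      omega
    · obtain ⟨-, htu, htu'⟩ := SierpAux.adj_rigid h' h0
      refine ⟨qq, pp, B.copy htu' rfl, A.copy htu.symm rfl, ?_, ?_⟩
      · rcases hd with ⟨h1, h2⟩ | ⟨h1, h2⟩
        · exact Or.inr ⟨h2, h1⟩
        · exact Or.inl ⟨h2, h1⟩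
      · rw [SierpAux.cr_cons_ne h' q h0]
        simp only [SimpleGraph.Walk.length_copy, SimpleGraph.Walk.length_cons]
        omega

/-- Splitting a walk at a marked support vertex, with a witness before it. -/
lemma SierpAux.walk_split2 {W : Type*} {H : SimpleGraph W} [DecidableEq W] {w u2 : W} :
    ∀ {c b : W} (q : H.Walk c b), List.Sublist [w, u2] q.support →
    ∃ (M : H.Walk c u2) (Q : H.Walk u2 b), q = M.append Q ∧ w ∈ M.support := by
  intro c b q
  induction q with
  | nil =>
    intro hs
    have := hs.length_le
    simp at this
  | @cons x y z h' q ih =>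
    intro hs
    rw [SimpleGraph.Walk.support_cons] at hs
    cases hs with
    | cons _ hs' =>
      obtain ⟨M, Q, hEq, hwM⟩ := ih hs'
      exact ⟨.cons h' M, Q, by rw [SimpleGraph.Walk.cons_append, hEq],
        by rw [SimpleGraph.Walk.support_cons]; exact List.mem_cons_of_mem _ hwM⟩
    | cons_cons _ hs' =>
      have hu2 : u2 ∈ q.support := List.singleton_sublist.1 hs'
      refine ⟨.cons h' (q.takeUntil u2 hu2), q.dropUntil u2 hu2, ?_, ?_⟩
      · rw [SimpleGraph.Walk.cons_append, SimpleGraph.Walk.take_spec]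
      · exact SimpleGraph.Walk.start_mem_support _

lemma SierpAux.walk_split3 {W : Type*} {H : SimpleGraph W} [DecidableEq W] {u1 w u2 : W} :
    ∀ {a b : W} (p : H.Walk a b), List.Sublist [u1, w, u2] p.support →
    ∃ (P : H.Walk a u1) (M : H.Walk u1 u2) (Q : H.Walk u2 b),
      p = P.append (M.append Q) ∧ w ∈ M.support := by
  intro a b p
  induction p with
  | nil =>
    intro hs
    have := hs.length_le
    simp at this
  | @cons x y z h' q ih =>
    intro hs
    rw [SimpleGraph.Walk.support_cons] at hs
    cases hs with
    | cons _ hs' =>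
      obtain ⟨P, M, Q, hEq, hwM⟩ := ih hs'
      exact ⟨.cons h' P, M, Q, by rw [SimpleGraph.Walk.cons_append, hEq], hwM⟩
    | cons_cons _ hs' =>
      obtain ⟨M, Q, hEq, hwM⟩ := SierpAux.walk_split2 q hs'
      refine ⟨.nil, .cons h' M, Q, ?_, ?_⟩
      · rw [SimpleGraph.Walk.nil_append, SimpleGraph.Walk.cons_append, hEq]
      · rw [SimpleGraph.Walk.support_cons]; exact List.mem_cons_of_mem _ hwM

/-- From a duplicate in a `Ne`-chain we can find a subsequence `[x, y, x]` with `y ≠ x`. -/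
lemma SierpAux.dup_destutter {α : Type*} {x : α} :
    ∀ {D : List α}, D.Chain' Ne → List.Sublist [x, x] D →
      ∃ y, y ≠ x ∧ List.Sublist [x, y, x] D := by
  intro D
  induction D with
  | nil => intro _ hs; have := hs.length_le; simp at this
  | cons c l ih =>
    intro hc hs
    cases hs with
    | cons _ hs' =>
      obtain ⟨y, hy, hsub⟩ := ih hc.tail hs'
      exact ⟨y, hy, List.Sublist.cons c hsub⟩
    | cons_cons _ hs' =>
      have hx : x ∈ l := List.singleton_sublist.1 hs'
      cases l with
      | nil => cases hx
      | cons c' l' =>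
        have hne : x ≠ c' := (List.isChain_cons_cons.1 hc).1
        have hx' : x ∈ l' := by
          rcases List.mem_cons.1 hx with rfl | hx'
          · exact absurd rfl hne
          · exact hx'
        exact ⟨c', fun h => hne h.symm,
          List.Sublist.cons_cons x (List.Sublist.cons_cons c' (List.singleton_sublist.2 hx'))⟩

lemma SierpAux.destutter'_head {α : Type*} [DecidableEq α] :
    ∀ (l : List α) (a : α), ∃ tl, List.destutter' Ne a l = a :: tl := by
  intro l
  induction l with
  | nil => exact fun a => ⟨[], List.destutter'_nil _⟩
  | cons b l ih =>
    intro a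
    by_cases hab : a ≠ b
    · exact ⟨_, List.destutter'_cons_pos _ hab⟩
    · rw [List.destutter'_cons_neg _ hab]; exact ih a

/-- If consecutive elements satisfy `p ≠ q → S p q`, then the destuttered list is an
`S`-chain. -/
lemma SierpAux.chain'_destutter' {α : Type*} [DecidableEq α] {S : α → α → Prop} :
    ∀ (l : List α) (a : α), List.Chain' (fun p q => p ≠ q → S p q) (a :: l) →
      List.Chain' S (List.destutter' Ne a l) := by
  intro l
  induction l with
  | nil => intro a _; rw [List.destutter'_nil]; exact List.isChain_singleton a
  | cons b l ih =>
    intro a hc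
    by_cases hab : a ≠ b
    · rw [List.destutter'_cons_pos _ hab]
      have h1 : S a b := (List.isChain_cons_cons.1 hc).1 hab
      have h2 := ih b (List.isChain_cons_cons.1 hc).2
      obtain ⟨tl, htl⟩ := SierpAux.destutter'_head l b
      rw [htl] at h2 ⊢
      exact List.isChain_cons_cons.2 ⟨h1, h2⟩
    · rw [List.destutter'_cons_neg _ hab]
      push_neg at hab
      subst hab
      exact ih a (List.isChain_cons_cons.1 hc).2

lemma SierpAux.chain'_destutter {α : Type*} [DecidableEq α] {S : α → α → Prop}
    (l : List α) (h : List.Chain' (fun p q => p ≠ q → S p q) l) :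
    List.Chain' S (List.destutter Ne l) := by
  cases l with
  | nil => exact List.isChain_nil
  | cons a l => rw [List.destutter_cons']; exact SierpAux.chain'_destutter' l a h

end Aux

/-- if `p` is a shortest path in `S(G,t)` and the sequence of first letters of
its vertices, with consecutive duplicates removed (i.e. the sequence `v_0, v_1, …, v_r` of
first letters of the maximal blocks), has at least two terms (`r ≥ 1`), then
`v_0, v_1, …, v_r` is a path in `G` (consecutive vertices adjacent, all vertices distinct). -/
theorem stmt_1 {V : Type*} [DecidableEq V] (G : SimpleGraph V) (hconn : G.Connected)
    (hV : Nontrivial V) (t : ℕ) (ht : 1 ≤ t) {a b : Fin t → V}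
    (p : (SierpinskiGraph G t).Walk a b) (hp : p.IsPath)
    (hmin : p.length = (SierpinskiGraph G t).dist a b)
    (hr : 2 ≤ (List.destutter Ne (p.support.map fun u => u ⟨0, ht⟩)).length) :
    (List.destutter Ne (p.support.map fun u => u ⟨0, ht⟩)).Chain' G.Adj ∧
      (List.destutter Ne (p.support.map fun u => u ⟨0, ht⟩)).Nodup := by
  cases t with
  | zero => exact absurd ht (by norm_num)
  | succ n =>
  clear hr
  generalize hf : (fun u : Fin (n + 1) → V => u ⟨0, ht⟩) = f
  have hfval : ∀ u : Fin (n + 1) → V, f u = u 0 := by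
    rw [← hf]; exact fun u => rfl
  constructor
  · -- the chain part
    apply SierpAux.chain'_destutter
    apply List.isChain_map_of_isChain f ?_ p.isChain_adj_support
    intro u v huv hne
    rw [hfval u, hfval v] at hne ⊢
    rcases SierpAux.adj_head huv with h | h
    · exact absurd h hne
    · exact h
  · -- the nodup part
    by_contra hnd
    obtain ⟨x, hdup⟩ := List.exists_duplicate_iff_not_nodup.2 hnd
    have hxx : List.Sublist [x, x] (List.destutter Ne (p.support.map f)) :=
      List.duplicate_iff_sublist.1 hdup
    obtain ⟨y, hyx, hxyx⟩ :=
      SierpAux.dup_destutter (List.isChain_destutter Ne (p.support.map f)) hxx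
    have hsubL : List.Sublist [x, y, x] (p.support.map f) :=
      hxyx.trans (List.destutter_sublist Ne (p.support.map f))
    obtain ⟨l', hl'sub, hl'map⟩ := List.sublist_map_iff.1 hsubL
    rcases l' with _ | ⟨u1, _ | ⟨w, _ | ⟨u2, _ | ⟨z, l''⟩⟩⟩⟩ <;> simp at hl'map
    obtain ⟨hx1, hy1, hx2⟩ := hl'map
    obtain ⟨P, M, Q, hpEq, hwM⟩ := SierpAux.walk_split3 p hl'sub
    -- the walk M has at least 2 crossing steps
    have huv : u1 0 = u2 0 := by
      rw [← hfval u1, ← hfval u2, ← hx1, ← hx2]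
    have hwx : w 0 ≠ u1 0 := by
      rw [← hfval w, ← hfval u1, ← hy1, ← hx1]
      exact hyx
    have hcr : 2 ≤ SierpAux.cr M := SierpAux.cr_two M huv w hwM hwx
    -- extract the two tokens, giving a strictly shorter inner walk
    obtain ⟨pp, qq, A, B, hd, hlen⟩ := SierpAux.tokens M
    have hR : ∃ R : (SierpinskiGraph G n).Walk (Fin.tail u1) (Fin.tail u2),
        R.length + 2 ≤ M.length := by
      rcases hd with ⟨h1, h2⟩ | ⟨h1, h2⟩
      · exact ⟨B.copy rfl h2, by
          simp only [SimpleGraph.Walk.length_copy]; omega⟩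
      · refine ⟨(B.copy rfl h2).append (A.copy (funext fun _ => huv) h1), ?_⟩
        simp only [SimpleGraph.Walk.length_append, SimpleGraph.Walk.length_copy]
        omega
    obtain ⟨R, hRlen⟩ := hR
    -- lift R into the block of u1
    have hN : ∃ N : (SierpinskiGraph G (n + 1)).Walk u1 u2, N.length = R.length := by
      refine ⟨(SierpAux.liftWalk (u1 0) R).copy (Fin.cons_self_tail u1) ?_, ?_⟩
      · rw [huv]; exact Fin.cons_self_tail u2
      · rw [SimpleGraph.Walk.length_copy, SierpAux.liftWalk_length]
    obtain ⟨N, hNlen⟩ := hN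
    -- the shortcut walk is strictly shorter than p, contradicting minimality
    have hd1 : (SierpinskiGraph G (n + 1)).dist a b ≤ (P.append (N.append Q)).length :=
      SimpleGraph.dist_le _
    have hplen : p.length = P.length + (M.length + Q.length) := by
      rw [hpEq, SimpleGraph.Walk.length_append, SimpleGraph.Walk.length_append]
    simp only [SimpleGraph.Walk.length_append] at hd1
    omega
end

section
/- Let G=(V,E) be a connected graph with at least two vertices and let t ≥ 1 be an integer such that d_{S(G,t)}(u^t, v^t) = (2^t − 1)·d_G(u,v) for all u, v ∈ V. Then for every x, y ∈ V and every w ∈ V^t, the G-path associated to any shortest path in S(G,t+1) between the extreme vertex x^{t+1} and the vertex yw is triangle-free. -/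
set_option linter.unusedSectionVars false
set_option linter.unusedVariables false

namespace SierpAux

open SimpleGraph List

variable {V : Type*} {G : SimpleGraph V}

lemma adj_cons_s2 {t : ℕ} {u v : Fin t → V} (h : (SierpinskiGraph G t).Adj u v) (a : V) :
    (SierpinskiGraph G (t+1)).Adj (Fin.cons a u) (Fin.cons a v) := by
  obtain ⟨i, h1, h2, h3⟩ := h
  refine ⟨i.succ, by simpa using h1, ?_, ?_⟩
  · intro j hj
    rcases Fin.eq_zero_or_eq_succ j with rfl | ⟨k, rfl⟩
    · simp
    · have hk : k < i := by rwa [Fin.succ_lt_succ_iff] at hj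
      simpa using h2 k hk
  · intro j hj
    rcases Fin.eq_zero_or_eq_succ j with rfl | ⟨k, rfl⟩
    · exact absurd hj (by simp)
    · have hk : i < k := by rwa [Fin.succ_lt_succ_iff] at hj
      simpa using h3 k hk

/-- The graph homomorphism from `S(G,t)` into the block `a` of `S(G,t+1)`. -/
def liftHom (t : ℕ) (a : V) : SierpinskiGraph G t →g SierpinskiGraph G (t+1) where
  toFun := fun u => Fin.cons (α := fun _ => V) a u
  map_rel' := by intro u v h; exact adj_cons_s2 h a

@[simp] lemma liftHom_apply {t : ℕ} (a : V) (u : Fin t → V) :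
    (liftHom (G := G) t a) u = Fin.cons a u := rfl

lemma cross_adj {t : ℕ} {a b : V} (h : G.Adj a b) :
    (SierpinskiGraph G (t+1)).Adj (Fin.cons a (fun _ => b)) (Fin.cons b (fun _ => a)) := by
  refine ⟨0, by simpa using h, ?_, ?_⟩
  · intro j hj
    exact absurd hj (by simp)
  · intro j hj
    rcases Fin.eq_zero_or_eq_succ j with rfl | ⟨k, rfl⟩
    · exact absurd hj (by simp)
    · simp

lemma adj_cases {t : ℕ} {s s₁ : Fin (t+1) → V} (h : (SierpinskiGraph G (t+1)).Adj s s₁) :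
    (s 0 = s₁ 0 ∧ (SierpinskiGraph G t).Adj (Fin.tail s) (Fin.tail s₁)) ∨
    (G.Adj (s 0) (s₁ 0) ∧ Fin.tail s = (fun _ => s₁ 0) ∧ Fin.tail s₁ = (fun _ => s 0)) := by
  obtain ⟨i, h1, h2, h3⟩ := h
  rcases Fin.eq_zero_or_eq_succ i with rfl | ⟨k, rfl⟩
  · refine Or.inr ⟨h1, ?_, ?_⟩
    · funext j
      exact (h3 j.succ (Fin.succ_pos j)).1
    · funext j
      exact (h3 j.succ (Fin.succ_pos j)).2
  · refine Or.inl ⟨h2 0 (Fin.succ_pos k), ⟨k, h1, ?_, ?_⟩⟩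
    · intro j hj
      exact h2 j.succ (Fin.succ_lt_succ_iff.mpr hj)
    · intro j hj
      exact h3 j.succ (Fin.succ_lt_succ_iff.mpr hj)

lemma const_eq_cons {t : ℕ} (a : V) :
    (fun _ => a : Fin (t+1) → V) = Fin.cons a (fun _ => a) := by
  funext i
  rcases Fin.eq_zero_or_eq_succ i with rfl | ⟨k, rfl⟩ <;> simp

lemma reach_const_adj {a b : V} : ∀ (t : ℕ), G.Adj a b →
    (SierpinskiGraph G t).Reachable (fun _ => a) (fun _ => b) := by
  intro t
  induction t with
  | zero =>
    intro _
    have h0 : (fun _ => a : Fin 0 → V) = (fun _ => b) := by funext i; exact i.elim0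
    rw [h0]
  | succ t ih =>
    intro h
    rw [const_eq_cons a, const_eq_cons b]
    have r1 : (SierpinskiGraph G (t+1)).Reachable (Fin.cons a (fun _ => a))
        (Fin.cons a (fun _ => b)) := by simpa using (ih h).map (liftHom t a)
    have r2 : (SierpinskiGraph G (t+1)).Reachable (Fin.cons a (fun _ => b))
        (Fin.cons b (fun _ => a)) := (cross_adj h).reachable
    have r3 : (SierpinskiGraph G (t+1)).Reachable (Fin.cons b (fun _ => a))
        (Fin.cons b (fun _ => b)) := by simpa using (ih h).map (liftHom t b)
    exact (r1.trans r2).trans r3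

lemma reach_const_const (hconn : G.Connected) (t : ℕ) (a b : V) :
    (SierpinskiGraph G t).Reachable (fun _ => a) (fun _ => b) := by
  obtain ⟨q⟩ := hconn a b
  induction q with
  | nil => exact Reachable.refl _
  | cons h q ih => exact (reach_const_adj t h).trans ih

lemma reach_const (hconn : G.Connected) : ∀ (t : ℕ) (u : Fin t → V) (a : V),
    (SierpinskiGraph G t).Reachable u (fun _ => a) := by
  intro t
  induction t with
  | zero =>
    intro u a
    have h0 : u = (fun _ => a : Fin 0 → V) := by funext i; exact i.elim0
    rw [h0]
  | succ t ih =>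
    intro u a
    have h1 : (SierpinskiGraph G (t+1)).Reachable u (fun _ => u 0) := by
      have h2 := (ih (Fin.tail u) (u 0)).map (liftHom t (u 0))
      simp only [liftHom_apply] at h2
      rw [Fin.cons_self_tail] at h2
      rw [const_eq_cons (u 0)]
      exact h2
    exact h1.trans (reach_const_const hconn (t+1) (u 0) a)

lemma sconn (hconn : G.Connected) (t : ℕ) : (SierpinskiGraph G t).Connected := by
  have : Nonempty V := hconn.nonempty
  have a : V := Classical.arbitrary V
  constructor
  intro u v
  exact (reach_const hconn t u a).trans (reach_const hconn t v a).symm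

end SierpAux
namespace SierpAux

open SimpleGraph List

section Lists

variable {V : Type*} [DecidableEq V]

/-- tail of `List.destutter' Ne a l` -/
def dstail : V → List V → List V
  | _, [] => []
  | a, b :: l => if a = b then dstail b l else b :: dstail b l

lemma destutter'_eq_dstail : ∀ (l : List V) (a : V), List.destutter' Ne a l = a :: dstail a l := by
  intro l
  induction l with
  | nil => intro a; simp [dstail]
  | cons b l ih =>
    intro a
    by_cases h : a = b
    · rw [List.destutter'_cons, if_neg (by simpa using h), dstail, if_pos h, ih, h]
    · rw [List.destutter'_cons, if_pos (by simpa using h), dstail, if_neg h, ih]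

lemma dstail_getLast : ∀ (l : List V) (a : V),
    (a :: dstail a l).getLast (List.cons_ne_nil _ _) = (a :: l).getLast (List.cons_ne_nil _ _) := by
  intro l
  induction l with
  | nil => intro a; simp [dstail]
  | cons b l ih =>
    intro a
    rw [dstail]
    by_cases h : a = b
    · rw [if_pos h, List.getLast_cons (List.cons_ne_nil _ _), ← ih b, h]
    · rw [if_neg h, List.getLast_cons (List.cons_ne_nil _ _), ih b,
        List.getLast_cons (List.cons_ne_nil _ _)]

lemma getLast_map_cons {W : Type*} (f : W → V) : ∀ (l : List W) (a : W),
    ((a :: l).map f).getLast (by simp) = f ((a :: l).getLast (List.cons_ne_nil _ _)) := by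
  intro l
  induction l with
  | nil => intro a; simp
  | cons b l ih =>
    intro a
    have heq : ((a :: b :: l).map f) = f a :: ((b :: l).map f) := by simp
    rw [List.getLast_congr _ (by simp) heq, List.getLast_cons (by simp), ih b,
      List.getLast_cons (List.cons_ne_nil _ _)]

lemma getLast_cons_cons {a b : V} {l : List V} :
    (a :: b :: l).getLast (List.cons_ne_nil _ _) = (b :: l).getLast (List.cons_ne_nil _ _) :=
  List.getLast_cons _

end Lists

section Costs

variable {V : Type*} [DecidableEq V] {G : SimpleGraph V}

/-- Lower-bound cost function on blocks: `cost u b M w` where `u` is the entry word of the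
current block `b`, `M` the list of subsequent block letters, `w` the final word. -/
noncomputable def cost (G : SimpleGraph V) (t : ℕ) : (Fin t → V) → V → List V → (Fin t → V) → ℕ
  | u, _, [], w => (SierpinskiGraph G t).dist u w
  | u, b, c :: M, w => (SierpinskiGraph G t).dist u (fun _ => c) + 1 + cost G t (fun _ => b) c M w

/-- Letter-level version of `cost`. -/
noncomputable def costC (G : SimpleGraph V) (t : ℕ) : V → V → List V → (Fin t → V) → ℕ
  | p, _, [], w => (SierpinskiGraph G t).dist (fun _ => p) w
  | p, b, c :: M, w => (2 ^ t - 1) * G.dist p c + 1 + costC G t b c M w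

variable {t : ℕ}

lemma cost_eq_costC
    (hdist : ∀ u v : V, (SierpinskiGraph G t).dist (fun _ => u) (fun _ => v) =
      (2 ^ t - 1) * G.dist u v) :
    ∀ (M : List V) (p b : V) (w : Fin t → V),
      cost G t (fun _ => p) b M w = costC G t p b M w := by
  intro M
  induction M with
  | nil => intro p b w; simp [cost, costC]
  | cons c M ih => intro p b w; simp [cost, costC, hdist p c, ih]

lemma dist_le_one_of_adj {u u' : Fin t → V} (h : (SierpinskiGraph G t).Adj u u') :
    (SierpinskiGraph G t).dist u u' ≤ 1 := by
  simpa using SimpleGraph.dist_le h.toWalk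

lemma cost_adj_step (hconn : G.Connected) {u u' : Fin t → V}
    (h : (SierpinskiGraph G t).Adj u u') (b : V) (M : List V) (w : Fin t → V) :
    cost G t u b M w ≤ cost G t u' b M w + 1 := by
  have hs := sconn hconn t
  cases M with
  | nil =>
    have h1 : (SierpinskiGraph G t).dist u w ≤ (SierpinskiGraph G t).dist u u' +
        (SierpinskiGraph G t).dist u' w := hs.dist_triangle
    have h2 := dist_le_one_of_adj h
    simp only [cost]
    omega
  | cons c M =>
    have h1 : (SierpinskiGraph G t).dist u (fun _ => c) ≤ (SierpinskiGraph G t).dist u u' +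
        (SierpinskiGraph G t).dist u' (fun _ => c) := hs.dist_triangle
    have h2 := dist_le_one_of_adj h
    simp only [cost]
    omega

lemma costC_lipschitz (hconn : G.Connected)
    (hdist : ∀ u v : V, (SierpinskiGraph G t).dist (fun _ => u) (fun _ => v) =
      (2 ^ t - 1) * G.dist u v) :
    ∀ (M : List V) (c p p' : V) (w : Fin t → V),
      costC G t p c M w ≤ costC G t p' c M w + (2 ^ t - 1) * G.dist p p' := by
  intro M
  cases M with
  | nil =>
    intro c p p' w
    have h1 : (SierpinskiGraph G t).dist (fun _ => p) w ≤
        (SierpinskiGraph G t).dist (fun _ => p) (fun _ => p') +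
        (SierpinskiGraph G t).dist (fun _ => p') w := (sconn hconn t).dist_triangle
    rw [hdist p p'] at h1
    simp only [costC]
    omega
  | cons e M =>
    intro c p p' w
    have h1 : G.dist p e ≤ G.dist p p' + G.dist p' e := hconn.dist_triangle
    have h2 := Nat.mul_le_mul_left (2 ^ t - 1) h1
    rw [Nat.mul_add] at h2
    simp only [costC]
    omega

end Costs

end SierpAux
namespace SierpAux

open SimpleGraph List

variable {V : Type*} [DecidableEq V] {G : SimpleGraph V} {t : ℕ}

set_option linter.unusedSectionVars false

lemma walk_lb (hconn : G.Connected) :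
    ∀ {s f : Fin (t+1) → V} (q : (SierpinskiGraph G (t+1)).Walk s f),
      cost G t (Fin.tail s) (s 0) (dstail (s 0) (q.support.tail.map (fun u => u 0)))
          (Fin.tail f) ≤ q.length ∧
      List.Chain G.Adj (s 0) (dstail (s 0) (q.support.tail.map (fun u => u 0))) := by
  intro s f q
  induction q with
  | nil =>
    constructor
    · simp [dstail, cost, SimpleGraph.dist_self]
    · exact List.Chain.nil
  | @cons s s₁ f h q ih =>
    have hsup : ((SimpleGraph.Walk.cons h q).support.tail.map (fun u => u 0)) =
        s₁ 0 :: (q.support.tail.map (fun u => u 0)) := by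
      rw [SimpleGraph.Walk.support_cons]
      rw [List.tail_cons]
      conv_lhs => rw [q.support_eq_cons]
      rw [List.map_cons]
    rw [hsup]
    rcases adj_cases h with ⟨heq, htl⟩ | ⟨hadj, hts, hts₁⟩
    · have hd : dstail (s 0) (s₁ 0 :: (q.support.tail.map (fun u => u 0))) =
          dstail (s₁ 0) (q.support.tail.map (fun u => u 0)) := by
        rw [dstail, if_pos heq]
      rw [hd, SimpleGraph.Walk.length_cons]
      refine ⟨?_, by rw [heq]; exact ih.2⟩
      have h1 := ih.1
      have h2 := cost_adj_step hconn htl (s 0)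
        (dstail (s₁ 0) (q.support.tail.map (fun u => u 0))) (Fin.tail f)
      rw [heq] at h2 ⊢
      linarith
    · have hne : s 0 ≠ s₁ 0 := hadj.ne
      have hd : dstail (s 0) (s₁ 0 :: (q.support.tail.map (fun u => u 0))) =
          s₁ 0 :: dstail (s₁ 0) (q.support.tail.map (fun u => u 0)) := by
        rw [dstail, if_neg hne]
      rw [hd, SimpleGraph.Walk.length_cons]
      constructor
      · simp only [cost]
        rw [hts, SimpleGraph.dist_self]
        have h1 := ih.1
        rw [← hts₁]
        linarith
      · exact List.chain_cons.mpr ⟨hadj, ih.2⟩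

lemma walk_ub (hconn : G.Connected) :
    ∀ (M : List V) (b y : V) (u w : Fin t → V),
      List.Chain G.Adj b M → (b :: M).getLast (List.cons_ne_nil _ _) = y →
      (SierpinskiGraph G (t+1)).dist (Fin.cons b u) (Fin.cons y w) ≤ cost G t u b M w := by
  intro M
  induction M with
  | nil =>
    intro b y u w _ hl
    have hyb : b = y := by simpa using hl
    subst hyb
    obtain ⟨q, hq⟩ := (sconn hconn t).exists_walk_length_eq_dist u w
    have hle := SimpleGraph.dist_le (q.map (liftHom t b))
    rw [SimpleGraph.Walk.length_map, hq] at hle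
    simpa [cost, liftHom_apply] using hle
  | cons c M ih =>
    intro b y u w hch hl
    rcases List.chain_cons.mp hch with ⟨hbc, hch'⟩
    have hl' : ((c :: M).getLast (List.cons_ne_nil _ _)) = y := by
      rw [← hl, getLast_cons_cons]
    have hs := sconn hconn (t+1)
    have step1 : (SierpinskiGraph G (t+1)).dist (Fin.cons b u) (Fin.cons b (fun _ => c)) ≤
        (SierpinskiGraph G t).dist u (fun _ => c) := by
      obtain ⟨q, hq⟩ := (sconn hconn t).exists_walk_length_eq_dist u (fun _ => c)
      have hle := SimpleGraph.dist_le (q.map (liftHom t b))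
      rw [SimpleGraph.Walk.length_map, hq] at hle
      simpa [liftHom_apply] using hle
    have step2 : (SierpinskiGraph G (t+1)).dist (Fin.cons b (fun _ => c))
        (Fin.cons c (fun _ => b)) ≤ 1 := by
      exact SimpleGraph.dist_le (cross_adj hbc).toWalk
    have step3 := ih c y (fun _ => b) w hch' hl'
    have tri1 : (SierpinskiGraph G (t+1)).dist (Fin.cons b u) (Fin.cons y w) ≤
        (SierpinskiGraph G (t+1)).dist (Fin.cons b u) (Fin.cons b (fun _ => c)) +
        (SierpinskiGraph G (t+1)).dist (Fin.cons b (fun _ => c)) (Fin.cons y w) :=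
      hs.dist_triangle
    have tri2 : (SierpinskiGraph G (t+1)).dist (Fin.cons b (fun _ => c)) (Fin.cons y w) ≤
        (SierpinskiGraph G (t+1)).dist (Fin.cons b (fun _ => c)) (Fin.cons c (fun _ => b)) +
        (SierpinskiGraph G (t+1)).dist (Fin.cons c (fun _ => b)) (Fin.cons y w) :=
      hs.dist_triangle
    simp only [cost]
    omega

end SierpAux
namespace SierpAux

open SimpleGraph List

variable {V : Type*} [DecidableEq V] {G : SimpleGraph V} {t : ℕ}

lemma costC_nil (p b : V) (w : Fin t → V) :
    costC G t p b [] w = (SierpinskiGraph G t).dist (fun _ => p) w := rfl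

lemma costC_cons (p b c : V) (M : List V) (w : Fin t → V) :
    costC G t p b (c :: M) w = (2 ^ t - 1) * G.dist p c + 1 + costC G t b c M w := rfl

lemma exchange (hconn : G.Connected)
    (hdist : ∀ u v : V, (SierpinskiGraph G t).dist (fun _ => u) (fun _ => v) =
      (2 ^ t - 1) * G.dist u v) (w : Fin t → V) :
    ∀ (W : List V) (m u : V),
      List.Chain G.Adj u W →
      (∀ a b l, W = a :: b :: l → ¬ G.Adj u b) →
      (∃ l₁ a b c l₂, u :: W = l₁ ++ a :: b :: c :: l₂ ∧ G.Adj a c) →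
      ∃ W', List.Chain G.Adj u W' ∧
        (u :: W').getLast (List.cons_ne_nil _ _) = (u :: W).getLast (List.cons_ne_nil _ _) ∧
        costC G t m u W' w + 1 ≤ costC G t m u W w := by
  intro W
  induction W with
  | nil =>
    intro m u _ _ htri
    exfalso
    obtain ⟨l₁, a, b, c, l₂, heq, -⟩ := htri
    have hlen := congrArg List.length heq
    simp [List.length_append] at hlen
    omega
  | cons v rest ih =>
    intro m u hch hnp htri
    rcases List.chain_cons.mp hch with ⟨huv, hchv⟩
    cases rest with
    | nil =>
      exfalso
      obtain ⟨l₁, a, b, c, l₂, heq, -⟩ := htri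
      have hlen := congrArg List.length heq
      simp [List.length_append] at hlen
      omega
    | cons u' rest2 =>
      rcases List.chain_cons.mp hchv with ⟨hvu', hchu'⟩
      cases rest2 with
      | nil =>
        exfalso
        obtain ⟨l₁, a, b, c, l₂, heq, hac⟩ := htri
        have hlen := congrArg List.length heq
        simp [List.length_append] at hlen
        have hl1 : l₁ = [] := List.eq_nil_of_length_eq_zero (by omega)
        subst hl1
        simp only [List.nil_append] at heq
        obtain ⟨rfl, rfl, rfl, -⟩ := by simpa using heq
        exact hnp _ _ _ rfl hac
      | cons z tl =>
        rcases List.chain_cons.mp hchu' with ⟨hu'z, hchz⟩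
        by_cases hvz : G.Adj v z
        · have hdvz : G.dist v z = 1 := SimpleGraph.dist_eq_one_iff_adj.mpr hvz
          by_cases huu' : u = u'
          · -- double drop of v and u'
            refine ⟨z :: tl, List.chain_cons.mpr ⟨huu' ▸ hu'z, hchz⟩, ?_, ?_⟩
            · simp only [getLast_cons_cons]
            · have h1 : G.dist m z ≤ G.dist m v + G.dist v z := hconn.dist_triangle
              rw [hdvz] at h1
              have h2 := Nat.mul_le_mul_left (2 ^ t - 1) h1
              rw [Nat.mul_add, Nat.mul_one] at h2
              have hduu' : G.dist u u' = 0 := by rw [huu', SimpleGraph.dist_self]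
              have hcc : costC G t u z tl w = costC G t u' z tl w := by rw [huu']
              rw [costC_cons, costC_cons, costC_cons, costC_cons, hcc, hduu', hdvz,
                Nat.mul_zero, Nat.mul_one]
              linarith
          · -- single drop of u'
            have hdz : G.dist u z ≤ G.dist u u' := by
              by_contra hgt
              push_neg at hgt
              have e1 : G.dist u z ≤ G.dist u u' + G.dist u' z := hconn.dist_triangle
              have e2 : G.dist u' z = 1 := SimpleGraph.dist_eq_one_iff_adj.mpr hu'z
              have e3 : G.dist u z ≤ G.dist u v + G.dist v z := hconn.dist_triangle
              have e4 : G.dist u v = 1 := SimpleGraph.dist_eq_one_iff_adj.mpr huv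
              have e5 : G.dist u u' = 0 ∨ G.dist u u' = 1 := by omega
              rcases e5 with e5 | e5
              · exact huu' (hconn.dist_eq_zero_iff.mp e5)
              · exact hnp _ _ _ rfl (SimpleGraph.dist_eq_one_iff_adj.mp e5)
            refine ⟨v :: z :: tl,
              List.chain_cons.mpr ⟨huv, List.chain_cons.mpr ⟨hvz, hchz⟩⟩, ?_, ?_⟩
            · simp only [getLast_cons_cons]
            · have hlip := costC_lipschitz hconn hdist tl z v u' w
              have hd1 : G.dist v u' = 1 := SimpleGraph.dist_eq_one_iff_adj.mpr hvu'
              rw [hd1, Nat.mul_one] at hlip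
              have h2 := Nat.mul_le_mul_left (2 ^ t - 1) hdz
              rw [costC_cons, costC_cons, costC_cons, costC_cons, costC_cons, hdvz,
                Nat.mul_one]
              linarith
        · -- recurse
          have htri' : ∃ l₁ a b c l₂, v :: u' :: z :: tl = l₁ ++ a :: b :: c :: l₂ ∧
              G.Adj a c := by
            obtain ⟨l₁, a, b, c, l₂, heq, hac⟩ := htri
            cases l₁ with
            | nil =>
              exfalso
              simp only [List.nil_append] at heq
              obtain ⟨rfl, rfl, rfl, -⟩ := by simpa using heq
              exact hnp _ _ _ rfl hac
            | cons p l₁' =>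
              rw [List.cons_append] at heq
              injection heq with h0 h1
              exact ⟨l₁', a, b, c, l₂, h1, hac⟩
          have hnp' : ∀ a b l, (u' :: z :: tl) = a :: b :: l → ¬ G.Adj v b := by
            intro a b l heq
            injection heq with e1 e2
            injection e2 with e2 e3
            subst e1; subst e2
            exact hvz
          obtain ⟨W2, hc2, hl2, hcost2⟩ := ih u v hchv hnp' htri'
          refine ⟨v :: W2, List.chain_cons.mpr ⟨huv, hc2⟩, ?_, ?_⟩
          · simp only [getLast_cons_cons] at hl2 ⊢
            exact hl2
          · rw [costC_cons, costC_cons]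
            linarith

end SierpAux
namespace SierpAux

open SimpleGraph List

variable {V : Type*} [DecidableEq V] {G : SimpleGraph V} {t : ℕ}

lemma getLast_map' {W : Type*} (f : W → V) (l : List W) (h : l ≠ []) :
    (l.map f).getLast (by simpa using h) = f (l.getLast h) := by
  cases l with
  | nil => exact absurd rfl h
  | cons a l => exact getLast_map_cons f l a

lemma exists_decomp {α : Type*} : ∀ (L : List α) (i : ℕ) (h : i + 2 < L.length),
    ∃ (l₁ : List α) (c₁ : α) (l₂ : List α),
      L = l₁ ++ (L[i]'(by omega)) :: c₁ :: (L[i+2]'h) :: l₂ := by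
  intro L
  induction L with
  | nil => intro i h; simp at h
  | cons a L ih =>
    intro i h
    cases i with
    | zero =>
      match L, h with
      | c₁ :: c₂ :: l₂, _ => exact ⟨[], c₁, l₂, by simp⟩
    | succ i' =>
      obtain ⟨l₁, c₁, l₂, heq⟩ := ih i' (by simp only [List.length_cons] at h; omega)
      refine ⟨a :: l₁, c₁, l₂, ?_⟩
      rw [List.cons_append, List.getElem_cons_succ, List.getElem_cons_succ]
      exact congrArg (List.cons a) heq

end SierpAux


open SierpAux

/-- if `d_{S(G,t)}(u^t, v^t) = (2^t − 1)·d_G(u,v)` for all `u, v`, then for every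
`x, y ∈ V` and `w ∈ V^t`, the `G`-path (the sequence of first letters of the maximal blocks,
obtained by removing consecutive duplicates) associated to any shortest path in `S(G,t+1)`
between the extreme vertex `x^{t+1}` and `yw` is triangle-free: no two vertices at
distance two along the path are adjacent in `G`. -/
theorem stmt_2 {V : Type*} [DecidableEq V] (G : SimpleGraph V) (hconn : G.Connected)
    (hV : Nontrivial V) (t : ℕ) (ht : 1 ≤ t)
    (hdist : ∀ u v : V, (SierpinskiGraph G t).dist (fun _ => u) (fun _ => v) =
      (2 ^ t - 1) * G.dist u v)
    (x y : V) (w : Fin t → V)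
    (p : (SierpinskiGraph G (t + 1)).Walk (fun _ => x) (Fin.cons y w))
    (hp : p.IsPath)
    (hmin : p.length = (SierpinskiGraph G (t + 1)).dist (fun _ => x) (Fin.cons y w))
    (L : List V) (hL : L = List.destutter Ne (p.support.map fun u => u 0)) :
    ∀ (i : ℕ) (h2 : i + 2 < L.length),
      ¬ G.Adj (L.get ⟨i, by omega⟩) (L.get ⟨i + 2, h2⟩) := by

  intro i h2 hadj
  simp only [List.get_eq_getElem] at hadj
  set rest := p.support.tail.map (fun u => u 0) with hrest
  set M : List V := dstail x rest with hM
  -- the support heads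
  have hsupp : p.support.map (fun u => u 0) = x :: rest := by
    conv_lhs => rw [p.support_eq_cons]
    rfl
  have hLM : L = x :: M := by
    rw [hL, hsupp, List.destutter_cons', destutter'_eq_dstail]
  -- lower bound and chain
  have hlb : cost G t (fun _ => x) x M w ≤ p.length ∧ List.Chain G.Adj x M :=
    walk_lb hconn p
  have hchain : List.Chain G.Adj x M := hlb.2
  have hlb1 : costC G t x x M w ≤ p.length := by
    rw [← cost_eq_costC hdist]; exact hlb.1
  -- last letter is y
  have hgl : (x :: M).getLast (List.cons_ne_nil _ _) = y := by
    rw [hM, dstail_getLast rest x]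
    have e1 : (x :: rest).getLast (List.cons_ne_nil _ _) =
        (p.support.map (fun u => u 0)).getLast (by simp [p.support_ne_nil]) :=
      List.getLast_congr _ _ hsupp.symm
    have e2 := getLast_map' (fun u : Fin (t+1) → V => u 0) p.support p.support_ne_nil
    rw [p.getLast_support] at e2
    rw [e1, e2]
    simp
  -- M has length ≥ 2
  have hlen : 3 ≤ L.length := by omega
  rw [hLM] at hlen
  obtain ⟨M0, M1, T, hM2⟩ : ∃ M0 M1 T, M = M0 :: M1 :: T := by
    match M, hlen with
    | M0 :: M1 :: T, _ => exact ⟨M0, M1, T, rfl⟩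
  rw [hM2] at hchain hlb1 hgl hLM
  rcases List.chain_cons.mp hchain with ⟨hxM0, hch0⟩
  rcases List.chain_cons.mp hch0 with ⟨hM0M1, hch1⟩
  -- the triangle, as a decomposition
  have htri : ∃ l₁ a b c l₂, x :: M0 :: M1 :: T = l₁ ++ a :: b :: c :: l₂ ∧ G.Adj a c := by
    obtain ⟨l₁, c₁, l₂, heq⟩ := exists_decomp L i h2
    exact ⟨l₁, _, c₁, _, l₂, by rw [← hLM]; exact heq, hadj⟩
  -- produce a strictly better chain
  have hbetter : ∃ M', List.Chain G.Adj x M' ∧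
      (x :: M').getLast (List.cons_ne_nil _ _) = y ∧
      costC G t x x M' w + 1 ≤ costC G t x x (M0 :: M1 :: T) w := by
    by_cases hxM1 : G.Adj x M1
    · refine ⟨M1 :: T, List.chain_cons.mpr ⟨hxM1, hch1⟩, ?_, ?_⟩
      · rw [← hgl]
        simp only [getLast_cons_cons]
      · have hlip := costC_lipschitz hconn hdist T M1 x M0 w
        have hd0 : G.dist x M0 = 1 := SimpleGraph.dist_eq_one_iff_adj.mpr hxM0
        rw [hd0, Nat.mul_one] at hlip
        rw [costC_cons, costC_cons, costC_cons, hd0, Nat.mul_one]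
        linarith
    · have hnp : ∀ a b l, (M0 :: M1 :: T) = a :: b :: l → ¬ G.Adj x b := by
        intro a b l heq
        injection heq with e1 e2
        injection e2 with e2 e3
        subst e2
        exact hxM1
      obtain ⟨M', hc', hl', hcost'⟩ :=
        exchange hconn hdist w (M0 :: M1 :: T) x x hchain hnp htri
      exact ⟨M', hc', by rw [hl']; exact hgl, hcost'⟩
  obtain ⟨M', hc', hl', hcost'⟩ := hbetter
  -- upper bound from the better chain
  have hub := walk_ub hconn M' x y (fun _ => x) w hc' hl'
  rw [cost_eq_costC hdist] at hub
  rw [← const_eq_cons x] at hub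
  rw [← hmin] at hub
  omega
end

section
/- Let G=(V,E) be a connected graph with at least two vertices. For any x, y ∈ V and any integer t ≥ 1, the distance in the generalized Sierpiński graph S(G,t) between the extreme vertices x^t and y^t satisfies d_{S(G,t)}(x^t, y^t) = (2^t − 1)·d_G(x,y). -/
/-- Prepending a fixed letter is a graph homomorphism between Sierpiński levels. -/
def sierCons {V : Type*} (G : SimpleGraph V) (t : ℕ) (c : V) :
    SierpinskiGraph G t →g SierpinskiGraph G (t + 1) where
  toFun u := Fin.cons c u
  map_rel' := by
    rintro u v ⟨i, h1, h2, h3⟩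
    refine ⟨i.succ, by simpa using h1, ?_, ?_⟩
    · intro j hj
      induction j using Fin.cases with
      | zero => simp
      | succ j' =>
        simp only [Fin.cons_succ]
        exact h2 j' (by simpa [Fin.succ_lt_succ_iff] using hj)
    · intro j hj
      induction j using Fin.cases with
      | zero => exact absurd hj (by simp [Fin.lt_def])
      | succ j' =>
        have := h3 j' (by simpa [Fin.succ_lt_succ_iff] using hj)
        simpa using this

lemma sier_edge_walk {V : Type*} (G : SimpleGraph V) {a b : V} (hab : G.Adj a b) :
    ∀ t : ℕ, ∃ p : (SierpinskiGraph G t).Walk (fun _ => a) (fun _ => b),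
      p.length = 2 ^ t - 1 := by
  intro t
  induction t with
  | zero =>
    refine ⟨SimpleGraph.Walk.nil.copy rfl (funext fun j => j.elim0), ?_⟩
    simp
  | succ t ih =>
    obtain ⟨p, hp⟩ := ih
    have hca : (Fin.cons a (fun _ => a) : Fin (t+1) → V) = fun _ => a :=
      funext fun j => by induction j using Fin.cases <;> simp
    have hcb : (Fin.cons b (fun _ => b) : Fin (t+1) → V) = fun _ => b :=
      funext fun j => by induction j using Fin.cases <;> simp
    have hadj : (SierpinskiGraph G (t+1)).Adj (Fin.cons a (fun _ => b))
        (Fin.cons b (fun _ => a)) := by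
      refine ⟨0, by simpa using hab, ?_, ?_⟩
      · intro j hj
        exact absurd hj (by simp [Fin.lt_def])
      · intro j hj
        induction j using Fin.cases with
        | zero => exact absurd hj (by simp [Fin.lt_def])
        | succ j' => simp
    refine ⟨((p.map (sierCons G t a)).copy hca rfl).append
      (SimpleGraph.Walk.cons hadj ((p.map (sierCons G t b)).copy rfl hcb)), ?_⟩
    have h1 : 1 ≤ 2 ^ t := Nat.one_le_two_pow
    have h2 : 2 ^ (t + 1) = 2 ^ t * 2 := pow_succ 2 t
    simp only [SimpleGraph.Walk.length_append, SimpleGraph.Walk.length_cons,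
      SimpleGraph.Walk.length_copy, SimpleGraph.Walk.length_map, hp]
    have e1 : ((p.map (sierCons G t a)).copy hca rfl).length = p.length :=
      (SimpleGraph.Walk.length_copy _ _ _).trans (SimpleGraph.Walk.length_map _ _)
    have e2 : ((p.map (sierCons G t b)).copy rfl hcb).length = p.length :=
      (SimpleGraph.Walk.length_copy _ _ _).trans (SimpleGraph.Walk.length_map _ _)
    show ((p.map (sierCons G t a)).copy hca rfl).length
      + (((p.map (sierCons G t b)).copy rfl hcb).length + 1) = _
    omega

lemma sier_walk {V : Type*} (G : SimpleGraph V) (t : ℕ) :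
    ∀ {x y : V} (p : G.Walk x y), ∃ q : (SierpinskiGraph G t).Walk (fun _ => x) (fun _ => y),
      q.length = (2 ^ t - 1) * p.length := by
  intro x y p
  induction p with
  | nil => exact ⟨SimpleGraph.Walk.nil, by simp⟩
  | cons h p ih =>
    obtain ⟨q, hq⟩ := ih
    obtain ⟨r, hr⟩ := sier_edge_walk G h t
    refine ⟨r.append q, ?_⟩
    simp [SimpleGraph.Walk.length_append, hq, hr, Nat.mul_succ]
    ring

lemma geom_two (m : ℕ) : ∑ k ∈ Finset.range m, (2:ℤ) ^ k = 2 ^ m - 1 := by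
  induction m with
  | zero => simp
  | succ m ih => rw [Finset.sum_range_succ, ih, pow_succ]; ring

/-- The weight function used for the lower bound. -/
noncomputable def sierF {V : Type*} (G : SimpleGraph V) (t : ℕ) (y : V) (u : Fin t → V) : ℤ :=
  ∑ j : Fin t, (2:ℤ) ^ (t - 1 - j.val) * (G.dist (u j) y : ℤ)

lemma geom_tail (t : ℕ) (i : Fin t) :
    ∑ j ∈ Finset.Ioi i, (2:ℤ) ^ (t - 1 - j.val) = 2 ^ (t - 1 - i.val) - 1 := by
  have h1 : ∑ j ∈ Finset.Ioi i, (2:ℤ) ^ (t - 1 - j.val)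
      = ∑ j ∈ Finset.range t, (if i.val < j then (2:ℤ) ^ (t - 1 - j) else 0) := by
    rw [← Fin.sum_univ_eq_sum_range (fun j => if i.val < j then (2:ℤ) ^ (t - 1 - j) else 0) t]
    rw [← Finset.sum_filter]
    apply Finset.sum_congr
    · ext j
      simp only [Finset.mem_Ioi, Finset.mem_filter, Finset.mem_univ, true_and, Fin.lt_def]
    · intros; rfl
  rw [h1, ← Finset.sum_filter]
  have h2 : Finset.filter (fun j => i.val < j) (Finset.range t) = Finset.Ico (i.val + 1) t := by
    ext j
    simp only [Finset.mem_filter, Finset.mem_range, Finset.mem_Ico]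
    omega
  rw [h2, Finset.sum_Ico_eq_sum_range]
  have hi := i.is_lt
  have h3 : t - (i.val + 1) = t - 1 - i.val := by omega
  rw [h3]
  set s := t - 1 - i.val with hs
  have h4 : ∀ k ∈ Finset.range s, (2:ℤ) ^ (t - 1 - (i.val + 1 + k)) = (2:ℤ) ^ (s - 1 - k) := by
    intro k hk
    have := Finset.mem_range.mp hk
    congr 1
    omega
  rw [Finset.sum_congr rfl h4, Finset.sum_range_reflect (fun k => (2:ℤ) ^ k) s, geom_two]

lemma sierF_step {V : Type*} (G : SimpleGraph V) (hconn : G.Connected) (t : ℕ) (y : V)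
    {u v : Fin t → V} (h : (SierpinskiGraph G t).Adj u v) :
    |sierF G t y u - sierF G t y v| ≤ 1 := by
  obtain ⟨i, h1, h2, h3⟩ := h
  set D : ℤ := (G.dist (u i) y : ℤ) - (G.dist (v i) y : ℤ) with hD
  have key : sierF G t y u - sierF G t y v = D := by
    have : sierF G t y u - sierF G t y v
        = ∑ j : Fin t, (2:ℤ) ^ (t - 1 - j.val) * ((G.dist (u j) y : ℤ) - G.dist (v j) y) := by
      unfold sierF
      rw [← Finset.sum_sub_distrib]
      apply Finset.sum_congr rfl
      intros; ring
    rw [this]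
    have hsub : ∑ j : Fin t, (2:ℤ) ^ (t - 1 - j.val) * ((G.dist (u j) y : ℤ) - G.dist (v j) y)
        = ∑ j ∈ Finset.Ici i, (2:ℤ) ^ (t - 1 - j.val) * ((G.dist (u j) y : ℤ) - G.dist (v j) y) := by
      symm
      apply Finset.sum_subset (Finset.subset_univ _)
      intro j _ hj
      have hji : j < i := by
        simp only [Finset.mem_Ici, not_le] at hj
        exact hj
      rw [h2 j hji]
      ring
    rw [hsub, ← Finset.Ioi_insert, Finset.sum_insert (by simp)]
    have htail : ∀ j ∈ Finset.Ioi i,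
        (2:ℤ) ^ (t - 1 - j.val) * ((G.dist (u j) y : ℤ) - G.dist (v j) y)
          = (2:ℤ) ^ (t - 1 - j.val) * (-D) := by
      intro j hj
      obtain ⟨hu, hv⟩ := h3 j (Finset.mem_Ioi.mp hj)
      rw [hu, hv, hD]
      ring
    rw [Finset.sum_congr rfl htail, ← Finset.sum_mul, geom_tail]
    rw [hD]
    ring
  rw [key]
  have hle : G.dist (u i) (v i) ≤ 1 := by
    have := SimpleGraph.dist_le (SimpleGraph.Walk.cons h1 SimpleGraph.Walk.nil)
    simpa using this
  have hle2 : G.dist (v i) (u i) ≤ 1 := by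
    have := SimpleGraph.dist_le (SimpleGraph.Walk.cons h1.symm SimpleGraph.Walk.nil)
    simpa using this
  have t1 := hconn.dist_triangle (u := u i) (v := v i) (w := y)
  have t2 := hconn.dist_triangle (u := v i) (v := u i) (w := y)
  rw [abs_le]
  refine ⟨by rw [hD]; omega, by rw [hD]; omega⟩

lemma sierF_walk {V : Type*} (G : SimpleGraph V) (hconn : G.Connected) (t : ℕ) (y : V)
    {u v : Fin t → V} (p : (SierpinskiGraph G t).Walk u v) :
    |sierF G t y u - sierF G t y v| ≤ p.length := by
  induction p with
  | nil => simp
  | cons h p ih =>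
    have h1 := sierF_step G hconn t y h
    calc |sierF G t y _ - sierF G t y _| ≤ _ + _ := abs_sub_le _ _ _
      _ ≤ _ := by
        push_cast [SimpleGraph.Walk.length_cons]
        linarith

/-- for a connected graph `G` with at least two vertices, any `x, y ∈ V` and
`t ≥ 1`, the distance in `S(G,t)` between the extreme vertices `x^t` and `y^t` is
`(2^t − 1)·d_G(x,y)`. -/
theorem stmt_4 {V : Type*} (G : SimpleGraph V) (hconn : G.Connected) (hV : Nontrivial V)
    (t : ℕ) (ht : 1 ≤ t) (x y : V) :
    (SierpinskiGraph G t).dist (fun _ => x) (fun _ => y) = (2 ^ t - 1) * G.dist x y := by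
  obtain ⟨p0, hp0⟩ := hconn.exists_walk_length_eq_dist x y
  obtain ⟨q, hq⟩ := sier_walk G t p0
  apply le_antisymm
  · calc (SierpinskiGraph G t).dist _ _ ≤ q.length := SimpleGraph.dist_le q
      _ = (2 ^ t - 1) * G.dist x y := by rw [hq, hp0]
  · obtain ⟨r, hr⟩ := (SimpleGraph.Reachable.exists_walk_length_eq_dist ⟨q⟩ :)
    have hw := sierF_walk G hconn t y r
    have hfy : sierF G t y (fun _ => y) = 0 := by
      unfold sierF; simp [SimpleGraph.dist_self]
    have hfx : sierF G t y (fun _ => x) = ((2:ℤ) ^ t - 1) * G.dist x y := by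
      unfold sierF
      rw [← Finset.sum_mul]
      congr 1
      rw [Fin.sum_univ_eq_sum_range (fun j => (2:ℤ) ^ (t - 1 - j)) t]
      rw [Finset.sum_range_reflect (fun j => (2:ℤ) ^ j) t]
      exact geom_two t
    rw [hr, hfy, hfx, sub_zero] at hw
    have h2t : 1 ≤ 2 ^ t := Nat.one_le_two_pow
    have : ((2:ℤ) ^ t - 1) * G.dist x y ≤ ((SierpinskiGraph G t).dist (fun _ => x) fun _ => y : ℤ) := by
      calc ((2:ℤ) ^ t - 1) * G.dist x y ≤ |((2:ℤ) ^ t - 1) * G.dist x y| := le_abs_self _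
        _ ≤ _ := hw
    have hc : (((2 ^ t - 1) * G.dist x y : ℕ) : ℤ) = ((2:ℤ) ^ t - 1) * G.dist x y := by
      push_cast [Nat.cast_sub h2t]
      ring
    exact_mod_cast hc ▸ this
end

section
/- Let G=(V,E) be a connected graph with at least two vertices, let t ≥ 2 be an integer, let x ∈ V and let w = x^{j-1} z_j z_{j+1} ⋯ z_t ∈ V^t with 1 ≤ j ≤ t−1 and x ≠ z_j. Then d_{S(G,t)}(x^t, w) = min_{P_i ∈ 𝒫(x,z_j)} { d_{S(G,t-j)}( (z_j^{(i)})^{t-j}, z_{j+1}⋯z_t ) } + (2^{t-j+1} − 1)·d_G(x, z_j) − (2^{t-j} − 1), where the minimum is over all shortest paths P_i between x and z_j in G, and z_j^{(i)} denotes the neighbor of z_j lying on P_i. -/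
namespace Sierp

variable {V : Type*} (G : SimpleGraph V)

lemma adj_cons {t : ℕ} (a : V) {u v : Fin t → V}
    (h : (SierpinskiGraph G t).Adj u v) :
    (SierpinskiGraph G (t+1)).Adj (Fin.cons a u) (Fin.cons a v) := by
  obtain ⟨i, h1, h2, h3⟩ := h
  refine ⟨i.succ, by simpa using h1, ?_, ?_⟩
  · intro j hj
    refine Fin.cases ?_ (fun j' hj' => ?_) j hj
    · intro _; simp
    · simpa using h2 j' (by simpa [Fin.succ_lt_succ_iff] using hj')
  · intro j hj
    refine Fin.cases ?_ (fun j' hj' => ?_) j hj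
    · intro hj'; exact absurd hj' (by simp [Fin.lt_iff_val_lt_val])
    · simpa using h3 j' (by simpa [Fin.succ_lt_succ_iff] using hj')

lemma tail_adj {t : ℕ} {u v : Fin (t+1) → V}
    (h : (SierpinskiGraph G (t+1)).Adj u v) (he : u 0 = v 0) :
    (SierpinskiGraph G t).Adj (Fin.tail u) (Fin.tail v) := by
  obtain ⟨i, h1, h2, h3⟩ := h
  have hi : i ≠ 0 := by rintro rfl; exact (G.ne_of_adj h1) he
  obtain ⟨i', rfl⟩ : ∃ i', i = i'.succ := ⟨i.pred hi, (Fin.succ_pred i hi).symm⟩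
  refine ⟨i', h1, ?_, ?_⟩
  · intro j hj
    exact h2 j.succ (by simpa [Fin.succ_lt_succ_iff] using hj)
  · intro j hj
    exact h3 j.succ (by simpa [Fin.succ_lt_succ_iff] using hj)

lemma adj_head_ne {t : ℕ} {u v : Fin (t+1) → V}
    (h : (SierpinskiGraph G (t+1)).Adj u v) (hne : u 0 ≠ v 0) :
    G.Adj (u 0) (v 0) ∧ u = Fin.cons (u 0) (fun _ => v 0) ∧
      v = Fin.cons (v 0) (fun _ => u 0) := by
  obtain ⟨i, h1, h2, h3⟩ := h
  have hi : i = 0 := by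
    by_contra hi
    exact hne (h2 0 (Fin.pos_of_ne_zero hi))
  subst hi
  refine ⟨h1, ?_, ?_⟩ <;> funext j <;>
    refine Fin.cases ?_ (fun j' => ?_) j
  · simp
  · simpa using (h3 j'.succ (Fin.succ_pos j')).1
  · simp
  · simpa using (h3 j'.succ (Fin.succ_pos j')).2

lemma adj_bridge {t : ℕ} {p q : V} (h : G.Adj p q) :
    (SierpinskiGraph G (t+1)).Adj (Fin.cons p (fun _ => q)) (Fin.cons q (fun _ => p)) := by
  refine ⟨0, by simpa using h, fun j hj => absurd hj (by simp), fun j hj => ?_⟩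
  obtain ⟨j', rfl⟩ : ∃ j', j = j'.succ :=
    ⟨j.pred (Fin.pos_iff_ne_zero.mp hj), (Fin.succ_pred j _).symm⟩
  simp


open SimpleGraph

open scoped Classical in
/-- The claimed distance in `S(G,t)` from the extreme vertex `x^t` to `u`. -/
noncomputable def fD : (t : ℕ) → V → (Fin t → V) → ℕ
  | 0, _, _ => 0
  | (t+1), x, u =>
    if u 0 = x then fD t x (Fin.tail u)
    else sInf {n | ∃ y, G.Adj y (u 0) ∧ G.dist x y + 1 = G.dist x (u 0) ∧
          n = fD t y (Fin.tail u)}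
        + (2 ^ (t+1) - 1) * G.dist x (u 0) - (2 ^ t - 1)

variable {G}

lemma fD_succ_pos {t : ℕ} {x : V} {u : Fin (t+1) → V} (h : u 0 = x) :
    fD G (t+1) x u = fD G t x (Fin.tail u) := by
  rw [fD, if_pos h]

lemma fD_succ_neg {t : ℕ} {x : V} {u : Fin (t+1) → V} (h : u 0 ≠ x) :
    fD G (t+1) x u =
      sInf {n | ∃ y, G.Adj y (u 0) ∧ G.dist x y + 1 = G.dist x (u 0) ∧
          n = fD G t y (Fin.tail u)}
        + (2 ^ (t+1) - 1) * G.dist x (u 0) - (2 ^ t - 1) := by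
  rw [fD, if_neg h]

lemma fD_const_self (t : ℕ) (x : V) : fD G t x (fun _ => x) = 0 := by
  induction t with
  | zero => rfl
  | succ t ih => rw [fD_succ_pos (x := x) rfl]; exact ih

lemma dist_getVert_le (hconn : G.Connected) {x z : V} (q : G.Walk x z) (i : ℕ) :
    G.dist x (q.getVert i) ≤ i := by
  induction q generalizing i with
  | nil => simp [Walk.getVert, SimpleGraph.dist_self]
  | @cons a b c h p ih =>
    cases i with
    | zero => simp
    | succ i =>
      calc G.dist a (p.getVert i) ≤ G.dist a b + G.dist b (p.getVert i) :=
            hconn.dist_triangle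
        _ ≤ 1 + i := by
            have h1 : G.dist a b = 1 := SimpleGraph.dist_eq_one_iff_adj.mpr h
            have := ih i
            omega
        _ = i + 1 := by omega

lemma exists_pred (hconn : G.Connected) {x z : V} (hzx : z ≠ x) :
    ∃ y, G.Adj y z ∧ G.dist x y + 1 = G.dist x z := by
  obtain ⟨q, hq⟩ := hconn.exists_walk_length_eq_dist x z
  have hd : 0 < G.dist x z := hconn.pos_dist_of_ne (Ne.symm hzx)
  have hl : 0 < q.length := by omega
  refine ⟨q.getVert (q.length - 1), ?_, ?_⟩
  · have h1 := q.adj_getVert_succ (i := q.length - 1) (by omega)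
    have h2 : q.length - 1 + 1 = q.length := by omega
    rw [h2, q.getVert_length] at h1
    exact h1
  · have h1 : G.dist x (q.getVert (q.length - 1)) ≤ q.length - 1 :=
      dist_getVert_le hconn q _
    have h2 : G.dist x z ≤ G.dist x (q.getVert (q.length - 1)) + 1 := by
      calc G.dist x z ≤ G.dist x (q.getVert (q.length - 1)) +
            G.dist (q.getVert (q.length - 1)) z := hconn.dist_triangle
        _ ≤ G.dist x (q.getVert (q.length - 1)) + 1 := by
            have h3 := q.adj_getVert_succ (i := q.length - 1) (by omega)
            have h4 : q.length - 1 + 1 = q.length := by omega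
            rw [h4, q.getVert_length] at h3
            have := SimpleGraph.dist_eq_one_iff_adj.mpr h3
            omega
    omega

lemma setY_nonempty (hconn : G.Connected) {x z : V} (hzx : z ≠ x) (g : V → ℕ) :
    {n | ∃ y, G.Adj y z ∧ G.dist x y + 1 = G.dist x z ∧ n = g y}.Nonempty := by
  obtain ⟨y, hy1, hy2⟩ := exists_pred hconn hzx
  exact ⟨g y, y, hy1, hy2, rfl⟩

lemma fD_const (hconn : G.Connected) (t : ℕ) (x b : V) :
    fD G t x (fun _ => b) = (2 ^ t - 1) * G.dist x b := by
  induction t generalizing x b with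
  | zero => simp [fD]
  | succ t ih =>
    by_cases h : b = x
    · subst h
      rw [fD_const_self]
      simp [SimpleGraph.dist_self]
    · rw [fD_succ_neg h]
      have htail : Fin.tail (fun _ => b : Fin (t+1) → V) = (fun _ => b) := rfl
      have hset : {n | ∃ y, G.Adj y ((fun _ => b : Fin (t+1) → V) 0) ∧
            G.dist x y + 1 = G.dist x ((fun _ => b : Fin (t+1) → V) 0) ∧
            n = fD G t y (Fin.tail (fun _ => b : Fin (t+1) → V))} = {2 ^ t - 1} := by
        ext n
        simp only [Set.mem_setOf_eq, Set.mem_singleton_iff]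
        constructor
        · rintro ⟨y, hy1, hy2, rfl⟩
          rw [htail, ih]
          have : G.dist y b = 1 := SimpleGraph.dist_eq_one_iff_adj.mpr hy1
          rw [this, mul_one]
        · rintro rfl
          obtain ⟨y, hy1, hy2⟩ := exists_pred hconn h
          refine ⟨y, hy1, hy2, ?_⟩
          rw [htail, ih]
          have : G.dist y b = 1 := SimpleGraph.dist_eq_one_iff_adj.mpr hy1
          rw [this, mul_one]
      rw [hset, csInf_singleton]
      have hd : 1 ≤ G.dist x b := hconn.pos_dist_of_ne (fun hh => h hh.symm)
      have h1 : (1:ℕ) ≤ 2 ^ t := Nat.one_le_two_pow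
      have h2 : (2:ℕ) ^ (t+1) = 2 * 2 ^ t := by ring
      have h3 : (2 ^ (t+1) - 1) * G.dist x b ≥ 2 ^ (t+1) - 1 :=
        Nat.le_mul_of_pos_right _ hd
      omega


lemma fD_cons_const_x (hconn : G.Connected) (t : ℕ) (x b : V) :
    fD G (t+1) x (Fin.cons x (fun _ => b)) = (2 ^ t - 1) * G.dist x b := by
  rw [fD_succ_pos (x := x) (by simp), Fin.tail_cons, fD_const hconn]

lemma fD_cons_const (hconn : G.Connected) {t : ℕ} {x c : V} (b : V) (hc : c ≠ x) :
    fD G (t+1) x (Fin.cons c (fun _ => b)) =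
      sInf {n | ∃ y, G.Adj y c ∧ G.dist x y + 1 = G.dist x c ∧
          n = (2 ^ t - 1) * G.dist y b}
        + (2 ^ (t+1) - 1) * G.dist x c - (2 ^ t - 1) := by
  rw [fD_succ_neg (by simpa using hc)]
  simp only [Fin.cons_zero, Fin.tail_cons]
  have hy : ∀ y : V, fD G t y (fun _ => b) = (2 ^ t - 1) * G.dist y b :=
    fun y => fD_const hconn t y b
  simp only [hy]

lemma sInf_S_le (hconn : G.Connected) {x p q : V} (hp : p ≠ x)
    (h : G.Adj p q) (hab : G.dist x p = G.dist x q) (t : ℕ) :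
    sInf {n | ∃ y, G.Adj y p ∧ G.dist x y + 1 = G.dist x p ∧
        n = (2 ^ t - 1) * G.dist y q} ≤
      sInf {n | ∃ y, G.Adj y q ∧ G.dist x y + 1 = G.dist x q ∧
        n = (2 ^ t - 1) * G.dist y p} := by
  have hdp : 1 ≤ G.dist x p := hconn.pos_dist_of_ne (fun hh => hp hh.symm)
  have hq : q ≠ x := by
    intro hh
    subst hh
    rw [SimpleGraph.dist_self] at hab
    omega
  have hneV : ({n | ∃ y, G.Adj y q ∧ G.dist x y + 1 = G.dist x q ∧
      n = (2 ^ t - 1) * G.dist y p}).Nonempty :=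
    setY_nonempty hconn hq (fun y => (2 ^ t - 1) * G.dist y p)
  obtain ⟨y, hy1, hy2, hy3⟩ := Nat.sInf_mem hneV
  have hyq : G.dist y q = 1 := SimpleGraph.dist_eq_one_iff_adj.mpr hy1
  by_cases hyp : G.dist y p = 1
  · have hadj : G.Adj y p := SimpleGraph.dist_eq_one_iff_adj.mp hyp
    calc sInf {n | ∃ y, G.Adj y p ∧ G.dist x y + 1 = G.dist x p ∧
            n = (2 ^ t - 1) * G.dist y q}
        ≤ (2 ^ t - 1) * G.dist y q := Nat.sInf_le ⟨y, hadj, by omega, rfl⟩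
      _ = sInf {n | ∃ y, G.Adj y q ∧ G.dist x y + 1 = G.dist x q ∧
            n = (2 ^ t - 1) * G.dist y p} := by rw [hy3, hyq, hyp]
  · have hyp0 : y ≠ p := by
      intro hh
      subst hh
      omega
    have hge : 2 ≤ G.dist y p := by
      have h0 : 0 < G.dist y p := hconn.pos_dist_of_ne hyp0
      omega
    have hle2 : G.dist y p ≤ 2 := by
      have t1 : G.dist y p ≤ G.dist y q + G.dist q p := hconn.dist_triangle
      have t3 : G.dist q p = 1 := SimpleGraph.dist_eq_one_iff_adj.mpr h.symm
      omega
    have hneU : ({n | ∃ y, G.Adj y p ∧ G.dist x y + 1 = G.dist x p ∧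
        n = (2 ^ t - 1) * G.dist y q}).Nonempty :=
      setY_nonempty hconn hp (fun y => (2 ^ t - 1) * G.dist y q)
    obtain ⟨y', hy1', hy2', hy3'⟩ := Nat.sInf_mem hneU
    have hle2' : G.dist y' q ≤ 2 := by
      have t1 : G.dist y' q ≤ G.dist y' p + G.dist p q := hconn.dist_triangle
      have t2 : G.dist y' p = 1 := SimpleGraph.dist_eq_one_iff_adj.mpr hy1'
      have t3 : G.dist p q = 1 := SimpleGraph.dist_eq_one_iff_adj.mpr h
      omega
    rw [hy3, hy3']
    have : G.dist y' q ≤ G.dist y p := by omega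
    exact Nat.mul_le_mul_left _ this

lemma fLip0 (hconn : G.Connected) (t : ℕ) (x : V) {p q : V} (h : G.Adj p q) :
    fD G (t+1) x (Fin.cons p (fun _ => q)) ≤ fD G (t+1) x (Fin.cons q (fun _ => p)) + 1 := by
  have h1 : (1:ℕ) ≤ 2 ^ t := Nat.one_le_two_pow
  have h2 : (2:ℕ) ^ (t+1) = 2 * 2 ^ t := by ring
  have hpq : p ≠ q := G.ne_of_adj h
  by_cases hp : p = x
  · subst hp
    rw [fD_cons_const_x hconn]
    have hq : q ≠ p := fun hh => hpq hh.symm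
    rw [fD_cons_const hconn p hq]
    have hdq : G.dist p q = 1 := SimpleGraph.dist_eq_one_iff_adj.mpr h
    have hset : {n | ∃ y, G.Adj y q ∧ G.dist p y + 1 = G.dist p q ∧
        n = (2 ^ t - 1) * G.dist y p} = {0} := by
      ext n
      simp only [Set.mem_setOf_eq, Set.mem_singleton_iff]
      constructor
      · rintro ⟨y, hy1, hy2, rfl⟩
        have h0 : G.dist p y = 0 := by omega
        have : p = y := (hconn.dist_eq_zero_iff).mp h0
        subst this
        simp [SimpleGraph.dist_self]
      · rintro rfl
        exact ⟨p, h, by simp [SimpleGraph.dist_self, hdq], by simp [SimpleGraph.dist_self]⟩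
    rw [hset, csInf_singleton, hdq]
    omega
  · by_cases hq : q = x
    · subst hq
      rw [fD_cons_const_x hconn]
      rw [fD_cons_const hconn q hp]
      have hdp : G.dist q p = 1 := SimpleGraph.dist_eq_one_iff_adj.mpr h.symm
      have hset : {n | ∃ y, G.Adj y p ∧ G.dist q y + 1 = G.dist q p ∧
          n = (2 ^ t - 1) * G.dist y q} = {0} := by
        ext n
        simp only [Set.mem_setOf_eq, Set.mem_singleton_iff]
        constructor
        · rintro ⟨y, hy1, hy2, rfl⟩
          have h0 : G.dist q y = 0 := by omega
          have : q = y := (hconn.dist_eq_zero_iff).mp h0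
          subst this
          simp [SimpleGraph.dist_self]
        · rintro rfl
          exact ⟨q, h.symm, by simp [SimpleGraph.dist_self, hdp],
            by simp [SimpleGraph.dist_self]⟩
      rw [hset, csInf_singleton, hdp]
      omega
    · -- both p, q ≠ x
      rw [fD_cons_const hconn q hp, fD_cons_const hconn p hq]
      have ha : 1 ≤ G.dist x p := hconn.pos_dist_of_ne (fun hh => hp hh.symm)
      have hb : 1 ≤ G.dist x q := hconn.pos_dist_of_ne (fun hh => hq hh.symm)
      have hdpq : G.dist p q = 1 := SimpleGraph.dist_eq_one_iff_adj.mpr h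
      have hdqp : G.dist q p = 1 := SimpleGraph.dist_eq_one_iff_adj.mpr h.symm
      have hab1 : G.dist x q ≤ G.dist x p + 1 := by
        have := hconn.dist_triangle (u := x) (v := p) (w := q)
        omega
      have hab2 : G.dist x p ≤ G.dist x q + 1 := by
        have := hconn.dist_triangle (u := x) (v := q) (w := p)
        omega
      rcases Nat.lt_trichotomy (G.dist x p) (G.dist x q) with hlt | heq | hgt
      · -- dist x q = dist x p + 1
        have hbq : G.dist x q = G.dist x p + 1 := by omega
        -- sInf of q-side set is 0 (witness y = p)
        have h0mem : (0:ℕ) ∈ {n | ∃ y, G.Adj y q ∧ G.dist x y + 1 = G.dist x q ∧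
            n = (2 ^ t - 1) * G.dist y p} :=
          ⟨p, h, by omega, by simp [SimpleGraph.dist_self]⟩
        have hs2 : sInf {n | ∃ y, G.Adj y q ∧ G.dist x y + 1 = G.dist x q ∧
            n = (2 ^ t - 1) * G.dist y p} = 0 := Nat.le_zero.mp (Nat.sInf_le h0mem)
        -- p-side set: every element and some element equal 2*(2^t-1)
        have hkey : ∀ y, G.Adj y p → G.dist x y + 1 = G.dist x p →
            G.dist y q = 2 := by
          intro y hy1 hy2
          have t1 : G.dist x q ≤ G.dist x y + G.dist y q := hconn.dist_triangle
          have t2 : G.dist y q ≤ G.dist y p + G.dist p q := hconn.dist_triangle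
          have t3 : G.dist y p = 1 := SimpleGraph.dist_eq_one_iff_adj.mpr hy1
          omega
        have hneU : ({n | ∃ y, G.Adj y p ∧ G.dist x y + 1 = G.dist x p ∧
            n = (2 ^ t - 1) * G.dist y q}).Nonempty :=
          setY_nonempty hconn hp (fun y => (2 ^ t - 1) * G.dist y q)
        obtain ⟨y', hy1', hy2', hy3'⟩ := Nat.sInf_mem hneU
        have hs1 : sInf {n | ∃ y, G.Adj y p ∧ G.dist x y + 1 = G.dist x p ∧
            n = (2 ^ t - 1) * G.dist y q} = (2 ^ t - 1) * 2 := by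
          rw [hy3', hkey y' hy1' hy2']
        rw [hs1, hs2, hbq]
        have hC : 2 ^ (t+1) - 1 ≤ (2 ^ (t+1) - 1) * G.dist x p :=
          Nat.le_mul_of_pos_right _ ha
        have hE : (2 ^ (t+1) - 1) * (G.dist x p + 1) =
            (2 ^ (t+1) - 1) * G.dist x p + (2 ^ (t+1) - 1) := by ring
        rw [hE]
        omega
      · -- equal levels
        have hle1 := sInf_S_le hconn hp h heq t
        have hle2 := sInf_S_le hconn hq h.symm heq.symm t
        have heqInf : sInf {n | ∃ y, G.Adj y p ∧ G.dist x y + 1 = G.dist x p ∧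
            n = (2 ^ t - 1) * G.dist y q} =
            sInf {n | ∃ y, G.Adj y q ∧ G.dist x y + 1 = G.dist x q ∧
            n = (2 ^ t - 1) * G.dist y p} := le_antisymm hle1 hle2
        rw [heqInf, heq]
        omega
      · -- dist x p = dist x q + 1
        have hap : G.dist x p = G.dist x q + 1 := by omega
        have h0mem : (0:ℕ) ∈ {n | ∃ y, G.Adj y p ∧ G.dist x y + 1 = G.dist x p ∧
            n = (2 ^ t - 1) * G.dist y q} :=
          ⟨q, h.symm, by omega, by simp [SimpleGraph.dist_self]⟩
        have hs1 : sInf {n | ∃ y, G.Adj y p ∧ G.dist x y + 1 = G.dist x p ∧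
            n = (2 ^ t - 1) * G.dist y q} = 0 := Nat.le_zero.mp (Nat.sInf_le h0mem)
        have hkey : ∀ y, G.Adj y q → G.dist x y + 1 = G.dist x q →
            G.dist y p = 2 := by
          intro y hy1 hy2
          have t1 : G.dist x p ≤ G.dist x y + G.dist y p := hconn.dist_triangle
          have t2 : G.dist y p ≤ G.dist y q + G.dist q p := hconn.dist_triangle
          have t3 : G.dist y q = 1 := SimpleGraph.dist_eq_one_iff_adj.mpr hy1
          omega
        have hneV : ({n | ∃ y, G.Adj y q ∧ G.dist x y + 1 = G.dist x q ∧
            n = (2 ^ t - 1) * G.dist y p}).Nonempty :=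
          setY_nonempty hconn hq (fun y => (2 ^ t - 1) * G.dist y p)
        obtain ⟨y', hy1', hy2', hy3'⟩ := Nat.sInf_mem hneV
        have hs2 : sInf {n | ∃ y, G.Adj y q ∧ G.dist x y + 1 = G.dist x q ∧
            n = (2 ^ t - 1) * G.dist y p} = (2 ^ t - 1) * 2 := by
          rw [hy3', hkey y' hy1' hy2']
        rw [hs1, hs2, hap]
        have hC : 2 ^ (t+1) - 1 ≤ (2 ^ (t+1) - 1) * G.dist x q :=
          Nat.le_mul_of_pos_right _ hb
        have hE : (2 ^ (t+1) - 1) * (G.dist x q + 1) =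
            (2 ^ (t+1) - 1) * G.dist x q + (2 ^ (t+1) - 1) := by ring
        rw [hE]
        omega


lemma fLip (hconn : G.Connected) : ∀ (t : ℕ) (x : V) {u v : Fin t → V},
    (SierpinskiGraph G t).Adj u v → fD G t x u ≤ fD G t x v + 1 := by
  intro t
  induction t with
  | zero =>
    intro x u v h
    obtain ⟨i, -, -⟩ := h
    exact i.elim0
  | succ t ih =>
    intro x u v h
    by_cases he : u 0 = v 0
    · have htail := tail_adj G h he
      by_cases hx : u 0 = x
      · rw [fD_succ_pos hx, fD_succ_pos (he ▸ hx)]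
        exact ih x htail
      · have hvx : v 0 ≠ x := fun hh => hx (he.trans hh)
        rw [fD_succ_neg hx, fD_succ_neg hvx]
        rw [← he]
        have hd : 1 ≤ G.dist x (u 0) := hconn.pos_dist_of_ne (fun hh => hx hh.symm)
        have hneV : ({n | ∃ y, G.Adj y (u 0) ∧ G.dist x y + 1 = G.dist x (u 0) ∧
            n = fD G t y (Fin.tail v)}).Nonempty :=
          setY_nonempty hconn hx (fun y => fD G t y (Fin.tail v))
        obtain ⟨y0, hy1, hy2, hy3⟩ := Nat.sInf_mem hneV
        have hle : sInf {n | ∃ y, G.Adj y (u 0) ∧ G.dist x y + 1 = G.dist x (u 0) ∧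
            n = fD G t y (Fin.tail u)} ≤ fD G t y0 (Fin.tail u) :=
          Nat.sInf_le ⟨y0, hy1, hy2, rfl⟩
        have hih := ih y0 htail
        have h1 : (1:ℕ) ≤ 2 ^ t := Nat.one_le_two_pow
        have h2 : (2:ℕ) ^ (t+1) = 2 * 2 ^ t := by ring
        have hC : 2 ^ (t+1) - 1 ≤ (2 ^ (t+1) - 1) * G.dist x (u 0) :=
          Nat.le_mul_of_pos_right _ hd
        omega
    · obtain ⟨hadj, hu, hv⟩ := adj_head_ne G h he
      calc fD G (t+1) x u = fD G (t+1) x (Fin.cons (u 0) (fun _ => v 0)) := by rw [← hu]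
        _ ≤ fD G (t+1) x (Fin.cons (v 0) (fun _ => u 0)) + 1 := fLip0 hconn t x hadj
        _ = fD G (t+1) x v + 1 := by rw [← hv]

lemma fD_le_of_walk (hconn : G.Connected) {t : ℕ} (x : V) {u v : Fin t → V}
    (p : (SierpinskiGraph G t).Walk u v) :
    fD G t x v ≤ fD G t x u + p.length := by
  induction p with
  | nil => simp
  | @cons a b c hadj p ih =>
    have h1 : fD G t x b ≤ fD G t x a + 1 := fLip hconn t x hadj.symm
    simp only [SimpleGraph.Walk.length_cons]
    omega


variable (G)

/-- Prepending a fixed letter embeds `S(G,t)` into `S(G,t+1)`. -/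
def consHom (t : ℕ) (a : V) : SierpinskiGraph G t →g SierpinskiGraph G (t+1) where
  toFun u := Fin.cons a u
  map_rel' := adj_cons G a

variable {G}

lemma cons_const (t : ℕ) (a : V) :
    (Fin.cons a (fun _ => a) : Fin (t+1) → V) = fun _ => a := by
  funext j
  refine Fin.cases ?_ (fun j' => ?_) j <;> simp

lemma extUB_adj (t : ℕ) {a b : V} (h : G.Adj a b) :
    ∃ p : (SierpinskiGraph G t).Walk (fun _ => a) (fun _ => b),
      p.length ≤ 2 ^ t - 1 := by
  induction t with
  | zero =>
    have : (fun _ => a : Fin 0 → V) = (fun _ => b) := Subsingleton.elim _ _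
    exact ⟨SimpleGraph.Walk.nil.copy rfl this, by simp⟩
  | succ t ih =>
    obtain ⟨p, hp⟩ := ih
    refine ⟨(((p.map (consHom G t a)).copy
      (id (cons_const t a) : consHom G t a (fun _ => a) = fun _ => a)
      (id rfl : consHom G t a (fun _ => b) = Fin.cons a (fun _ => b))).append
      ((adj_bridge G h).toWalk)).append
      ((p.map (consHom G t b)).copy
      (id rfl : consHom G t b (fun _ => a) = Fin.cons b (fun _ => a))
      (id (cons_const t b) : consHom G t b (fun _ => b) = fun _ => b)), ?_⟩
    have h1 : (1:ℕ) ≤ 2 ^ t := Nat.one_le_two_pow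
    have h2 : (2:ℕ) ^ (t+1) = 2 * 2 ^ t := by ring
    simp only [SimpleGraph.Walk.length_append, SimpleGraph.Walk.length_copy,
      SimpleGraph.Walk.length_map, SimpleGraph.Adj.toWalk,
      SimpleGraph.Walk.length_cons, SimpleGraph.Walk.length_nil]
    omega

lemma extUB_walk (t : ℕ) {a b : V} (q : G.Walk a b) :
    ∃ p : (SierpinskiGraph G t).Walk (fun _ => a) (fun _ => b),
      p.length ≤ (2 ^ t - 1) * q.length := by
  induction q with
  | nil => exact ⟨SimpleGraph.Walk.nil, by simp⟩
  | @cons a c b hadj q ih =>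
    obtain ⟨p1, hp1⟩ := extUB_adj t hadj
    obtain ⟨p2, hp2⟩ := ih
    refine ⟨p1.append p2, ?_⟩
    simp only [SimpleGraph.Walk.length_append, SimpleGraph.Walk.length_cons]
    have : (2 ^ t - 1) * (q.length + 1) = (2 ^ t - 1) * q.length + (2 ^ t - 1) := by ring
    omega

lemma extUB (hconn : G.Connected) (t : ℕ) (a b : V) :
    ∃ p : (SierpinskiGraph G t).Walk (fun _ => a) (fun _ => b),
      p.length ≤ (2 ^ t - 1) * G.dist a b := by
  obtain ⟨q, hq⟩ := hconn.exists_walk_length_eq_dist a b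
  obtain ⟨p, hp⟩ := extUB_walk t q
  exact ⟨p, by rw [← hq]; exact hp⟩

lemma fUB (hconn : G.Connected) : ∀ (t : ℕ) (x : V) (u : Fin t → V),
    ∃ p : (SierpinskiGraph G t).Walk (fun _ => x) u, p.length ≤ fD G t x u := by
  intro t
  induction t with
  | zero =>
    intro x u
    have : (fun _ => x : Fin 0 → V) = u := Subsingleton.elim _ _
    exact ⟨SimpleGraph.Walk.nil.copy rfl this, by simp [fD]⟩
  | succ t ih =>
    intro x u
    by_cases h : u 0 = x
    · obtain ⟨p, hp⟩ := ih x (Fin.tail u)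
      have hcst : Fin.cons x (Fin.tail u) = u := by rw [← h]; exact Fin.cons_self_tail u
      refine ⟨((p.map (consHom G t x)).copy
        (id (cons_const t x) : consHom G t x (fun _ => x) = fun _ => x)
        (id hcst : consHom G t x (Fin.tail u) = u)), ?_⟩
      rw [fD_succ_pos h]
      simpa using hp
    · have hz : u 0 ≠ x := h
      have hd : 1 ≤ G.dist x (u 0) := hconn.pos_dist_of_ne (fun hh => hz hh.symm)
      have hneA : ({n | ∃ y, G.Adj y (u 0) ∧ G.dist x y + 1 = G.dist x (u 0) ∧
          n = fD G t y (Fin.tail u)}).Nonempty :=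
        setY_nonempty hconn hz (fun y => fD G t y (Fin.tail u))
      obtain ⟨y, hy1, hy2, hy3⟩ := Nat.sInf_mem hneA
      obtain ⟨W1, hW1⟩ := extUB hconn (t+1) x y
      obtain ⟨p2, hp2⟩ := extUB_adj t (hy1 : G.Adj y (u 0))
      obtain ⟨p3, hp3⟩ := ih y (Fin.tail u)
      refine ⟨((W1.append ((p2.map (consHom G t y)).copy
        (id (cons_const t y) : consHom G t y (fun _ => y) = fun _ => y)
        (id rfl : consHom G t y (fun _ => u 0) = Fin.cons y (fun _ => u 0)))).append
        ((adj_bridge G hy1).toWalk)).append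
        ((p3.map (consHom G t (u 0))).copy
        (id rfl : consHom G t (u 0) (fun _ => y) = Fin.cons (u 0) (fun _ => y))
        (id (Fin.cons_self_tail u) : consHom G t (u 0) (Fin.tail u) = u)), ?_⟩
      rw [fD_succ_neg hz]
      simp only [SimpleGraph.Walk.length_append, SimpleGraph.Walk.length_copy,
        SimpleGraph.Walk.length_map, SimpleGraph.Adj.toWalk,
        SimpleGraph.Walk.length_cons, SimpleGraph.Walk.length_nil]
      have h1 : (1:ℕ) ≤ 2 ^ t := Nat.one_le_two_pow
      have h2 : (2:ℕ) ^ (t+1) = 2 * 2 ^ t := by ring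
      have hE : (2 ^ (t+1) - 1) * G.dist x y + (2 ^ (t+1) - 1) =
          (2 ^ (t+1) - 1) * G.dist x (u 0) := by
        rw [← hy2]; ring
      have hC : 2 ^ (t+1) - 1 ≤ (2 ^ (t+1) - 1) * G.dist x (u 0) :=
        Nat.le_mul_of_pos_right _ hd
      omega

lemma dist_fD (hconn : G.Connected) (t : ℕ) (x : V) (u : Fin t → V) :
    (SierpinskiGraph G t).dist (fun _ => x) u = fD G t x u := by
  obtain ⟨p, hp⟩ := fUB hconn t x u
  have hle : (SierpinskiGraph G t).dist (fun _ => x) u ≤ fD G t x u :=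
    le_trans (SimpleGraph.dist_le p) hp
  have hreach : (SierpinskiGraph G t).Reachable (fun _ => x) u := ⟨p⟩
  obtain ⟨q, hq⟩ := hreach.exists_walk_length_eq_dist
  have hge : fD G t x u ≤ (SierpinskiGraph G t).dist (fun _ => x) u := by
    have := fD_le_of_walk hconn x q
    rw [fD_const_self, hq] at this
    omega
  omega


open SimpleGraph in
lemma setEq (hconn : G.Connected) {x z : V} (hzx : z ≠ x) (g : V → ℕ) :
    {d : ℕ | ∃ q : G.Walk x z, q.IsPath ∧ q.length = G.dist x z ∧
        d = g (q.getVert (q.length - 1))} =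
    {n | ∃ y, G.Adj y z ∧ G.dist x y + 1 = G.dist x z ∧ n = g y} := by
  have hd : 0 < G.dist x z := hconn.pos_dist_of_ne (fun hh => hzx hh.symm)
  ext n
  simp only [Set.mem_setOf_eq]
  constructor
  · rintro ⟨q, hq1, hq2, rfl⟩
    have hl : 0 < q.length := by omega
    refine ⟨q.getVert (q.length - 1), ?_, ?_, rfl⟩
    · have h1 := q.adj_getVert_succ (i := q.length - 1) (by omega)
      have h2 : q.length - 1 + 1 = q.length := by omega
      rw [h2, q.getVert_length] at h1
      exact h1
    · have h1 : G.dist x (q.getVert (q.length - 1)) ≤ q.length - 1 :=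
        dist_getVert_le hconn q _
      have h2 : G.dist x z ≤ G.dist x (q.getVert (q.length - 1)) + 1 := by
        calc G.dist x z ≤ G.dist x (q.getVert (q.length - 1)) +
              G.dist (q.getVert (q.length - 1)) z := hconn.dist_triangle
          _ ≤ G.dist x (q.getVert (q.length - 1)) + 1 := by
              have h3 := q.adj_getVert_succ (i := q.length - 1) (by omega)
              have h4 : q.length - 1 + 1 = q.length := by omega
              rw [h4, q.getVert_length] at h3
              have := SimpleGraph.dist_eq_one_iff_adj.mpr h3
              omega
      omega
  · rintro ⟨y, hy1, hy2, rfl⟩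
    obtain ⟨p, hp⟩ := hconn.exists_walk_length_eq_dist x y
    have hlen : (p.concat hy1).length = G.dist x z := by
      rw [Walk.length_concat, hp]
      exact hy2
    refine ⟨p.concat hy1, Walk.isPath_of_length_eq_dist _ hlen, hlen, ?_⟩
    have hgv : (p.concat hy1).getVert ((p.concat hy1).length - 1) = y := by
      rw [Walk.length_concat, Nat.add_sub_cancel, Walk.concat_eq_append,
        Walk.getVert_append]
      simp
    rw [hgv]

lemma fD_cast {t t' : ℕ} (h : t = t') (x : V) (u : Fin t → V) :
    fD G t x u = fD G t' x (fun i => u (Fin.cast h.symm i)) := by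
  subst h
  rfl

lemma main_j (hconn : G.Connected) (m : ℕ) (x z : V) (hzx : z ≠ x) :
    ∀ (jj : ℕ) (w : Fin (jj+1+m) → V),
      (∀ i : Fin (jj+1+m), (i : ℕ) < jj → w i = x) →
      w ⟨jj, by omega⟩ = z →
      fD G (jj+1+m) x w =
        sInf {n | ∃ y, G.Adj y z ∧ G.dist x y + 1 = G.dist x z ∧
            n = fD G m y (fun i : Fin m => w ⟨jj+1+(i:ℕ), by omega⟩)}
          + (2 ^ (m+1) - 1) * G.dist x z - (2 ^ m - 1) := by
  intro jj
  induction jj with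
  | zero =>
    intro w hpre hz
    have hcast : 0+1+m = m+1 := by omega
    rw [fD_cast hcast]
    set w' : Fin (m+1) → V := fun i => w (Fin.cast hcast.symm i) with hw'
    have hw0 : w' 0 = z := by
      rw [hw']
      exact hz
    rw [fD_succ_neg (by rw [hw0]; exact hzx), hw0]
    have htail : Fin.tail w' = (fun i : Fin m => w ⟨0+1+(i:ℕ), by omega⟩) := by
      funext i
      show w (Fin.cast hcast.symm i.succ) = w ⟨0+1+(i:ℕ), _⟩
      congr 1
      apply Fin.ext
      simp
      omega
    rw [htail]
  | succ jj ih =>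
    intro w hpre hz
    have hcast : jj+1+1+m = (jj+1+m)+1 := by omega
    rw [fD_cast hcast]
    set w' : Fin ((jj+1+m)+1) → V := fun i => w (Fin.cast hcast.symm i) with hw'
    have hw0 : w' 0 = x := by
      rw [hw']
      exact hpre ⟨0, by omega⟩ (by simp)
    rw [fD_succ_pos hw0]
    have h1 := ih (Fin.tail w') ?_ ?_
    · rw [h1]
      have hsuf : (fun i : Fin m => Fin.tail w' ⟨jj+1+(i:ℕ), by omega⟩) =
          (fun i : Fin m => w ⟨jj+1+1+(i:ℕ), by omega⟩) := by
        funext i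
        show w (Fin.cast hcast.symm (Fin.succ ⟨jj+1+(i:ℕ), by omega⟩)) = _
        congr 1
        apply Fin.ext
        simp
        omega
      rw [hsuf]
    · intro i hi
      show w (Fin.cast hcast.symm i.succ) = x
      exact hpre ⟨(i:ℕ)+1, by omega⟩ (by simpa using hi)
    · show w (Fin.cast hcast.symm (Fin.succ ⟨jj, by omega⟩)) = z
      exact hz

end Sierp

/-- with `t = j + m` (`1 ≤ j ≤ t − 1`, i.e. `j, m ≥ 1`), let
`w = x^{j-1} z_j z_{j+1} ⋯ z_t` with `z_j = z ≠ x`. Then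
`d_{S(G,t)}(x^t, w) = min_{P_i ∈ 𝒫(x,z)} d_{S(G,m)}((z^{(i)})^m, z_{j+1}⋯z_t)
  + (2^{m+1} − 1)·d_G(x,z) − (2^m − 1)`,
the minimum running over all shortest `x`–`z` paths `P_i` in `G`, where `z^{(i)}` is the
neighbour of `z` on `P_i` (the penultimate vertex of the path). -/
theorem stmt_5 {V : Type*} (G : SimpleGraph V) (hconn : G.Connected) (hV : Nontrivial V)
    (j m : ℕ) (hj : 1 ≤ j) (hm : 1 ≤ m)
    (x z : V) (w : Fin (j + m) → V)
    (hpre : ∀ i : Fin (j + m), (i : ℕ) < j - 1 → w i = x)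
    (hz : w ⟨j - 1, by omega⟩ = z) (hzx : z ≠ x) :
    (SierpinskiGraph G (j + m)).dist (fun _ => x) w =
      sInf { d : ℕ | ∃ q : G.Walk x z, q.IsPath ∧ q.length = G.dist x z ∧
          d = (SierpinskiGraph G m).dist (fun _ => q.getVert (q.length - 1))
                (fun i : Fin m => w (Fin.natAdd j i)) }
        + (2 ^ (m + 1) - 1) * G.dist x z - (2 ^ m - 1) := by
  obtain ⟨jj, rfl⟩ : ∃ jj, j = jj + 1 := ⟨j - 1, by omega⟩
  rw [Sierp.dist_fD hconn]
  have hdists : ∀ y : V, (SierpinskiGraph G m).dist (fun _ => y)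
      (fun i : Fin m => w (Fin.natAdd (jj+1) i)) =
      Sierp.fD G m y (fun i : Fin m => w (Fin.natAdd (jj+1) i)) :=
    fun y => Sierp.dist_fD hconn m y _
  have hsets : { d : ℕ | ∃ q : G.Walk x z, q.IsPath ∧ q.length = G.dist x z ∧
          d = (SierpinskiGraph G m).dist (fun _ => q.getVert (q.length - 1))
                (fun i : Fin m => w (Fin.natAdd (jj+1) i)) } =
      {n | ∃ y, G.Adj y z ∧ G.dist x y + 1 = G.dist x z ∧
          n = Sierp.fD G m y (fun i : Fin m => w (Fin.natAdd (jj+1) i))} := by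
    simp only [hdists]
    exact Sierp.setEq hconn hzx (fun y => Sierp.fD G m y (fun i : Fin m => w (Fin.natAdd (jj+1) i)))
  rw [hsets]
  exact Sierp.main_j hconn m x z hzx jj w (fun i hi => hpre i hi) hz
end

section
/- Let t ≥ 1 and n ≥ 2 be integers, let K_n = (V,E) be the complete graph on n vertices, let x ∈ V and let w = z_1 z_2 ⋯ z_t ∈ V^t. Then the distance in the generalized Sierpiński graph S(K_n, t) between the extreme vertex x^t and w is d_{S(K_n,t)}(x^t, w) = Σ_{i : z_i ≠ x} 2^{t-i}. -/
lemma two_pow_sum (m : ℕ) : ∑ k ∈ Finset.range m, 2 ^ k = 2 ^ m - 1 := by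
  induction m with
  | zero => simp
  | succ m ih =>
    rw [Finset.sum_range_succ, ih]
    have := Nat.one_le_two_pow (n := m)
    rw [pow_succ]
    omega

lemma tail_sum (t : ℕ) (i : Fin t) :
    (∑ j : Fin t, if i < j then 2 ^ (t - 1 - (j : ℕ)) else 0) = 2 ^ (t - 1 - (i : ℕ)) - 1 := by
  have hi : (i : ℕ) < t := i.isLt
  simp only [Fin.lt_def]
  rw [Fin.sum_univ_eq_sum_range (fun m => if (i : ℕ) < m then 2 ^ (t - 1 - m) else 0) t]
  rw [← Finset.sum_range_reflect]
  have h1 : ∀ j ∈ Finset.range t,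
      (if (i : ℕ) < t - 1 - j then 2 ^ (t - 1 - (t - 1 - j)) else 0)
        = (if j < t - 1 - (i : ℕ) then 2 ^ j else 0) := by
    intro j hj
    rw [Finset.mem_range] at hj
    have he : t - 1 - (t - 1 - j) = j := by omega
    rw [he]
    split_ifs with h h' h' <;> first | rfl | omega
  rw [Finset.sum_congr rfl h1]
  rw [← Finset.sum_subset (Finset.range_subset_range.mpr (by omega : t - 1 - (i : ℕ) ≤ t))
    (fun j _ hj => by rw [Finset.mem_range] at hj; rw [if_neg (by omega)])]
  rw [Finset.sum_congr rfl (fun j hj => if_pos (Finset.mem_range.mp hj))]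
  exact two_pow_sum _

lemma f_split {t n : ℕ} (x : Fin n) (u : Fin t → Fin n) (i : Fin t) :
    (∑ j : Fin t, if u j = x then 0 else 2 ^ (t - 1 - (j : ℕ))) =
      (∑ j : Fin t, if j < i then (if u j = x then 0 else 2 ^ (t - 1 - (j : ℕ))) else 0)
      + (if u i = x then 0 else 2 ^ (t - 1 - (i : ℕ)))
      + (∑ j : Fin t, if i < j then (if u j = x then 0 else 2 ^ (t - 1 - (j : ℕ))) else 0) := by
  have key : ∀ j : Fin t, (if u j = x then 0 else 2 ^ (t - 1 - (j : ℕ))) =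
      (if j < i then (if u j = x then 0 else 2 ^ (t - 1 - (j : ℕ))) else 0)
      + (if j = i then (if u j = x then 0 else 2 ^ (t - 1 - (j : ℕ))) else 0)
      + (if i < j then (if u j = x then 0 else 2 ^ (t - 1 - (j : ℕ))) else 0) := by
    intro j
    rcases lt_trichotomy j i with h | h | h
    · simp [h, h.ne, h.asymm]
    · subst h; simp
    · simp [h, h.ne', h.asymm]
  rw [Finset.sum_congr rfl (fun j _ => key j), Finset.sum_add_distrib, Finset.sum_add_distrib,
    Finset.sum_ite_eq' Finset.univ i (fun j => if u j = x then 0 else 2 ^ (t - 1 - (j : ℕ)))]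
  simp

lemma f_adj {t n : ℕ} (x : Fin n) {u v : Fin t → Fin n}
    (h : (SierpinskiGraph (⊤ : SimpleGraph (Fin n)) t).Adj u v) :
    (∑ i : Fin t, if v i = x then 0 else 2 ^ (t - 1 - (i : ℕ))) ≤
      (∑ i : Fin t, if u i = x then 0 else 2 ^ (t - 1 - (i : ℕ))) + 1 := by
  obtain ⟨i, h1, h2, h3⟩ := h
  have hne : u i ≠ v i := by simpa using h1.ne
  rw [f_split x u i, f_split x v i]
  have hpre : (∑ j : Fin t, if j < i then (if v j = x then 0 else 2 ^ (t - 1 - (j : ℕ))) else 0)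
      = (∑ j : Fin t, if j < i then (if u j = x then 0 else 2 ^ (t - 1 - (j : ℕ))) else 0) := by
    refine Finset.sum_congr rfl fun j _ => ?_
    by_cases hj : j < i
    · rw [h2 j hj]
    · simp [hj]
  have htail : ∀ (a : Fin t → Fin n) (c : Fin n), (∀ j : Fin t, i < j → a j = c) →
      (∑ j : Fin t, if i < j then (if a j = x then 0 else 2 ^ (t - 1 - (j : ℕ))) else 0)
        = if c = x then 0 else 2 ^ (t - 1 - (i : ℕ)) - 1 := by
    intro a c hc
    have : (∑ j : Fin t, if i < j then (if a j = x then 0 else 2 ^ (t - 1 - (j : ℕ))) else 0)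
        = ∑ j : Fin t, if c = x then 0 else (if i < j then 2 ^ (t - 1 - (j : ℕ)) else 0) := by
      refine Finset.sum_congr rfl fun j _ => ?_
      by_cases hj : i < j
      · rw [hc j hj]
        by_cases hx : c = x <;> simp [hj, hx]
      · by_cases hx : c = x <;> simp [hj, hx]
    rw [this]
    by_cases hx : c = x
    · simp [hx]
    · simp only [hx, if_false]
      exact tail_sum t i
  rw [htail u (v i) (fun j hj => (h3 j hj).1), htail v (u i) (fun j hj => (h3 j hj).2), hpre]
  have hpos : 1 ≤ 2 ^ (t - 1 - (i : ℕ)) := Nat.one_le_two_pow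
  by_cases hux : u i = x <;> by_cases hvx : v i = x
  · exact absurd (hux.trans hvx.symm) hne
  · simp only [hux, hvx, if_true, if_false]; omega
  · simp only [hux, hvx, if_true, if_false]; omega
  · simp only [hux, hvx, if_false]; omega

lemma f_walk {t n : ℕ} (x : Fin n) {u v : Fin t → Fin n}
    (p : (SierpinskiGraph (⊤ : SimpleGraph (Fin n)) t).Walk u v) :
    (∑ i : Fin t, if v i = x then 0 else 2 ^ (t - 1 - (i : ℕ))) ≤
      (∑ i : Fin t, if u i = x then 0 else 2 ^ (t - 1 - (i : ℕ))) + p.length := by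
  induction p with
  | nil => simp
  | @cons a b c h p ih =>
    have := f_adj x h
    rw [SimpleGraph.Walk.length_cons]
    omega

lemma walk_exists {t n : ℕ} (x : Fin n) : ∀ (m : ℕ) (w : Fin t → Fin n),
    (∑ i : Fin t, if w i = x then 0 else 2 ^ (t - 1 - (i : ℕ))) = m →
    ∃ p : (SierpinskiGraph (⊤ : SimpleGraph (Fin n)) t).Walk (fun _ => x) w, p.length = m := by
  intro m
  induction m using Nat.strong_induction_on with
  | _ m ih =>
    intro w hw
    by_cases h0 : w = fun _ => x
    · subst h0
      simp only [if_pos rfl, Finset.sum_const_zero] at hw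
      exact ⟨SimpleGraph.Walk.nil, by simp [← hw]⟩
    · have hex : ∃ i : Fin t, w i ≠ x := by
        by_contra hc
        push_neg at hc
        exact h0 (funext hc)
      set s : Finset (Fin t) := Finset.univ.filter (fun i => w i ≠ x) with hs
      have hsne : s.Nonempty := by
        obtain ⟨i, hi⟩ := hex
        exact ⟨i, by simp [hs, hi]⟩
      set i : Fin t := s.max' hsne with hidef
      have hiw : w i ≠ x := by
        have := s.max'_mem hsne
        simpa [hs] using this
      have hmax : ∀ j : Fin t, i < j → w j = x := by
        intro j hj
        by_contra hc
        have : j ≤ i := s.le_max' j (by simp [hs, hc])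
        exact absurd hj (not_lt.mpr this)
      set v : Fin t → Fin n := fun j => if j < i then w j else if j = i then x else w i with hv
      have hvlt : ∀ j : Fin t, j < i → v j = w j := by
        intro j hj
        show (if j < i then w j else if j = i then x else w i) = w j
        rw [if_pos hj]
      have hvgt : ∀ j : Fin t, i < j → v j = w i := by
        intro j hj
        show (if j < i then w j else if j = i then x else w i) = w i
        rw [if_neg hj.asymm, if_neg hj.ne']
      have hvi : v i = x := by
        show (if i < i then w i else if i = i then x else w i) = x
        rw [if_neg (lt_irrefl i), if_pos rfl]
      have hadj : (SierpinskiGraph (⊤ : SimpleGraph (Fin n)) t).Adj v w := by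
        refine ⟨i, ?_, fun j hj => hvlt j hj, fun j hj => ⟨?_, ?_⟩⟩
        · rw [hvi]
          simp only [SimpleGraph.top_adj]
          exact fun hc => hiw hc.symm
        · exact hvgt j hj
        · rw [hvi]
          exact hmax j hj
      have hfv : (∑ j : Fin t, if v j = x then 0 else 2 ^ (t - 1 - (j : ℕ))) + 1 = m := by
        rw [← hw, f_split x v i, f_split x w i]
        have h1 : (∑ j : Fin t, if j < i then (if v j = x then 0 else 2 ^ (t - 1 - (j : ℕ))) else 0)
            = (∑ j : Fin t, if j < i then (if w j = x then 0 else 2 ^ (t - 1 - (j : ℕ))) else 0) := by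
          refine Finset.sum_congr rfl fun j _ => ?_
          by_cases hj : j < i
          · rw [if_pos hj, if_pos hj, hvlt j hj]
          · rw [if_neg hj, if_neg hj]
        have h2 : (∑ j : Fin t, if i < j then (if v j = x then 0 else 2 ^ (t - 1 - (j : ℕ))) else 0)
            = 2 ^ (t - 1 - (i : ℕ)) - 1 := by
          have : ∀ j : Fin t, (if i < j then (if v j = x then 0 else 2 ^ (t - 1 - (j : ℕ))) else 0)
              = (if i < j then 2 ^ (t - 1 - (j : ℕ)) else 0) := by
            intro j
            by_cases hj : i < j
            · rw [if_pos hj, if_pos hj, hvgt j hj, if_neg hiw]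
            · rw [if_neg hj, if_neg hj]
          rw [Finset.sum_congr rfl (fun j _ => this j)]
          exact tail_sum t i
        have h3 : (∑ j : Fin t, if i < j then (if w j = x then 0 else 2 ^ (t - 1 - (j : ℕ))) else 0)
            = 0 := by
          refine Finset.sum_eq_zero fun j _ => ?_
          by_cases hj : i < j
          · rw [if_pos hj, if_pos (hmax j hj)]
          · rw [if_neg hj]
        rw [h1, h2, h3, hvi, if_pos rfl, if_neg hiw]
        have hpos : 1 ≤ 2 ^ (t - 1 - (i : ℕ)) := Nat.one_le_two_pow
        omega
      obtain ⟨p, hp⟩ := ih (m - 1) (by omega) v (by omega)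
      exact ⟨p.concat hadj, by rw [SimpleGraph.Walk.length_concat, hp]; omega⟩

/-- in the Sierpiński graph of the complete graph `K_n` (`n ≥ 2`), for any vertex
`x` and word `w = z_1 z_2 ⋯ z_t` (0-indexed here, so paper index `i` corresponds to position
`i - 1` and exponent `t - i = t - 1 - (i-1)`),
`d_{S(K_n,t)}(x^t, w) = Σ_{i : z_i ≠ x} 2^{t-i}`. -/
theorem stmt_6 (t n : ℕ) (ht : 1 ≤ t) (hn : 2 ≤ n) (x : Fin n) (w : Fin t → Fin n) :
    (SierpinskiGraph (⊤ : SimpleGraph (Fin n)) t).dist (fun _ => x) w =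
      ∑ i : Fin t, if w i = x then 0 else 2 ^ (t - 1 - (i : ℕ)) := by
  obtain ⟨p, hp⟩ := walk_exists x _ w rfl
  refine le_antisymm (hp ▸ SimpleGraph.dist_le p) ?_
  obtain ⟨q, hq⟩ := p.reachable.exists_walk_length_eq_dist
  have h1 := f_walk x q
  have h2 : (∑ i : Fin t, if x = x then 0 else 2 ^ (t - 1 - (i : ℕ))) = 0 := by
    simp
  simp at h1
  omega
end

section
/- Let u and v be two different vertices in a finite tree T. If v is an eccentric vertex for u (i.e., d_T(u,v) = ε(u)), then v is a leaf of T and ε(v) = D(T). -/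
/-- Eccentricity of a vertex: the maximum distance to any other vertex. -/
noncomputable def eccent {V : Type*} (G : SimpleGraph V) (v : V) : ℕ := ⨆ u, G.dist v u

/-- Diameter: maximum eccentricity. -/
noncomputable def graphDiam {V : Type*} (G : SimpleGraph V) : ℕ := ⨆ v, eccent G v

/-- Radius: minimum eccentricity. -/
noncomputable def graphRadius {V : Type*} (G : SimpleGraph V) : ℕ := ⨅ v, eccent G v


open SimpleGraph hiding eccent

section TreeLemmas

set_option linter.unusedSectionVars false

variable {V : Type*} [DecidableEq V] {T : SimpleGraph V}

lemma tree_path_length (hT : T.IsTree) {a b : V} {p : T.Walk a b} (hp : p.IsPath) :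
    p.length = T.dist a b := by
  obtain ⟨w, hw⟩ := hT.isConnected.exists_walk_length_eq_dist a b
  have huniq : (⟨p, hp⟩ : T.Path a b) = w.toPath := hT.IsAcyclic.path_unique _ _
  have h1 : p.length ≤ T.dist a b := by
    have h0 : p.length = w.bypass.length := by
      have := congrArg (fun q : T.Path a b => (q : T.Walk a b).length) huniq
      simpa [Walk.toPath] using this
    calc p.length = w.bypass.length := h0
      _ ≤ w.length := w.length_bypass_le
      _ = T.dist a b := hw
  exact le_antisymm h1 (dist_le p)

lemma tree_dist_split (hT : T.IsTree) {a b w : V} {p : T.Walk a b} (hp : p.IsPath)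
    (hw : w ∈ p.support) :
    T.dist a w + T.dist w b = T.dist a b := by
  rw [← tree_path_length hT (hp.takeUntil hw), ← tree_path_length hT (hp.dropUntil hw),
    ← tree_path_length hT hp, ← Walk.length_append, Walk.take_spec]

lemma tree_exists_path (hT : T.IsTree) (a b : V) :
    ∃ p : T.Walk a b, p.IsPath := by
  obtain ⟨w⟩ := hT.isConnected.preconnected a b
  exact ⟨w.bypass, w.bypass_isPath⟩

lemma tree_append_isPath {a b c : V} {p : T.Walk a b} {q : T.Walk b c}
    (hp : p.IsPath) (hq : q.IsPath)
    (h : ∀ w, w ∈ p.support → w ∈ q.support → w = b) :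
    (p.append q).IsPath := by
  rw [Walk.isPath_def, Walk.support_append]
  refine List.Nodup.append hp.support_nodup hq.support_nodup.tail ?_
  intro w hwp hwq
  have hb : w = b := h w hwp (List.mem_of_mem_tail hwq)
  subst hb
  have h2 := hq.support_nodup
  rw [Walk.support_eq_cons] at h2
  exact (List.nodup_cons.mp h2).1 hwq

lemma tree_foot (hT : T.IsTree) {x y : V} (p : T.Walk x y) (hp : p.IsPath) (v : V) :
    ∃ m, ∃ _ : m ∈ p.support,
      T.dist v x = T.dist v m + T.dist m x ∧ T.dist v y = T.dist v m + T.dist m y := by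
  obtain ⟨m, hargm⟩ : ∃ m, m ∈ p.support.argmin (T.dist v) := by
    cases h : p.support.argmin (T.dist v) with
    | none => exact absurd (List.argmin_eq_none.mp h) p.support_ne_nil
    | some m => exact ⟨m, by simp [h]⟩
  have hmem : m ∈ p.support := List.argmin_mem hargm
  have hmin : ∀ w ∈ p.support, T.dist v m ≤ T.dist v w :=
    fun w hw => List.le_of_mem_argmin hw hargm
  obtain ⟨q, hq⟩ := tree_exists_path hT v m
  have key : ∀ w, w ∈ q.support → w ∈ p.support → w = m := by
    intro w hwq hwp
    have h1 := tree_dist_split hT hq hwq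
    have h2 := hmin w hwp
    have h3 : T.dist w m = 0 := by omega
    exact (hT.isConnected.dist_eq_zero_iff).mp h3
  refine ⟨m, hmem, ?_, ?_⟩
  · have hr : ((p.takeUntil m hmem).reverse).IsPath := (hp.takeUntil hmem).reverse
    have hap : (q.append (p.takeUntil m hmem).reverse).IsPath := by
      refine tree_append_isPath hq hr ?_
      intro w hw1 hw2
      refine key w hw1 ?_
      rw [Walk.support_reverse] at hw2
      exact p.support_takeUntil_subset hmem (List.mem_reverse.mp hw2)
    have := tree_path_length hT hap
    rw [Walk.length_append, Walk.length_reverse] at this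
    rw [tree_path_length hT hq] at this
    rw [tree_path_length hT (hp.takeUntil hmem)] at this
    rw [← this, SimpleGraph.dist_comm (u := x) (v := m)]
  · have hs : (p.dropUntil m hmem).IsPath := hp.dropUntil hmem
    have hap : (q.append (p.dropUntil m hmem)).IsPath := by
      refine tree_append_isPath hq hs ?_
      intro w hw1 hw2
      exact key w hw1 (p.support_dropUntil_subset hmem hw2)
    have := tree_path_length hT hap
    rw [Walk.length_append] at this
    rw [tree_path_length hT hq] at this
    rw [tree_path_length hT hs] at this
    omega

lemma tree_between (hT : T.IsTree) {x y m n : V} {p : T.Walk x y} (hp : p.IsPath)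
    (hm : m ∈ p.support) (hn : n ∈ p.support) :
    T.dist n y = T.dist n m + T.dist m y ∨ T.dist n x = T.dist n m + T.dist m x := by
  have hsplit := tree_dist_split hT hp hm
  have hsplit' := tree_dist_split hT hp hn
  have hcase : n ∈ (p.takeUntil m hm).support ∨ n ∈ (p.dropUntil m hm).support := by
    rw [← Walk.mem_support_append_iff, Walk.take_spec]
    exact hn
  rcases hcase with h1 | h2
  · left
    have h3 := tree_dist_split hT (hp.takeUntil hm) h1
    omega
  · right
    have h3 := tree_dist_split hT (hp.dropUntil hm) h2
    have c1 : T.dist n x = T.dist x n := SimpleGraph.dist_comm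
    have c2 : T.dist n m = T.dist m n := SimpleGraph.dist_comm
    have c3 : T.dist m x = T.dist x m := SimpleGraph.dist_comm
    omega

end TreeLemmas

/-- in a finite tree `T`, if `v ≠ u` is an eccentric vertex for `u`
(i.e. `d_T(u,v) = ε(u)`), then `v` is a leaf and `ε(v) = D(T)`. -/
theorem stmt_12 {V : Type*} [Fintype V] (T : SimpleGraph V) [DecidableRel T.Adj]
    (hT : T.IsTree) (u v : V) (huv : u ≠ v)
    (hecc : T.dist u v = eccent T u) :
    T.degree v = 1 ∧ eccent T v = graphDiam T := by
  classical
  haveI : Nonempty V := ⟨u⟩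
  have hconn := hT.isConnected
  have hbdd : ∀ f : V → ℕ, BddAbove (Set.range f) := fun f => (Set.finite_range f).bddAbove
  have hub : ∀ z, T.dist u z ≤ T.dist u v := by
    intro z
    rw [hecc]
    exact le_ciSup (hbdd _) z
  have hd : 0 < T.dist u v := hconn.pos_dist_of_ne huv
  -- every neighbor of v is at distance (dist u v) - 1 from u
  have nbr : ∀ w, T.Adj v w → T.dist u w + 1 = T.dist u v := by
    intro w hw
    have h1 : T.dist u v ≤ T.dist u w + 1 := by
      have ht := hconn.dist_triangle (u := u) (v := w) (w := v)
      have hw1 : T.dist w v = 1 := SimpleGraph.dist_eq_one_iff_adj.mpr hw.symm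
      omega
    have h2 : T.dist u w ≤ T.dist u v := hub w
    have h3 : T.dist u w ≠ T.dist u v := by
      intro he
      obtain ⟨q, hq⟩ := tree_exists_path hT u w
      by_cases hv : v ∈ q.support
      · have hs := tree_dist_split hT hq hv
        have hw1 : T.dist v w = 1 := SimpleGraph.dist_eq_one_iff_adj.mpr hw
        omega
      · have hqp : (q.concat hw.symm).IsPath := by
          rw [← SimpleGraph.Walk.isPath_reverse_iff, SimpleGraph.Walk.reverse_concat]
        
          rw [SimpleGraph.Walk.cons_isPath_iff]
          refine ⟨hq.reverse, ?_⟩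
          rw [SimpleGraph.Walk.support_reverse]
          simpa using hv
        have hl := tree_path_length hT hqp
        rw [SimpleGraph.Walk.length_concat] at hl
        have hql := tree_path_length hT hq
        omega
    omega
  -- existence of a neighbor
  obtain ⟨p0, hp0⟩ := tree_exists_path hT v u
  have hnil : ¬ p0.Nil := SimpleGraph.Walk.not_nil_of_ne (Ne.symm huv)
  obtain ⟨w0, hadj0, q0, rfl⟩ := SimpleGraph.Walk.not_nil_iff.mp hnil
  -- uniqueness of the neighbor
  have uniq : ∀ w, T.Adj v w → w = w0 := by
    intro w hw
    by_contra hne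
    obtain ⟨q1, hq1⟩ := tree_exists_path hT u w
    obtain ⟨q2, hq2⟩ := tree_exists_path hT u w0
    have hL1 := tree_path_length hT hq1
    have hL2 := tree_path_length hT hq2
    have hnw1 := nbr w hw
    have hnw2 := nbr w0 hadj0
    have hv1 : v ∉ q1.support := by
      intro hv
      have hs := tree_dist_split hT hq1 hv
      have : 0 < T.dist v w := hconn.pos_dist_of_ne hw.ne
      omega
    have hv2 : v ∉ q2.support := by
      intro hv
      have hs := tree_dist_split hT hq2 hv
      have : 0 < T.dist v w0 := hconn.pos_dist_of_ne hadj0.ne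
      omega
    have hr1 : (q1.concat hw.symm).IsPath := by
      rw [← SimpleGraph.Walk.isPath_reverse_iff, SimpleGraph.Walk.reverse_concat,
        SimpleGraph.Walk.cons_isPath_iff]
      exact ⟨hq1.reverse, by rw [SimpleGraph.Walk.support_reverse]; simpa using hv1⟩
    have hr2 : (q2.concat hadj0.symm).IsPath := by
      rw [← SimpleGraph.Walk.isPath_reverse_iff, SimpleGraph.Walk.reverse_concat,
        SimpleGraph.Walk.cons_isPath_iff]
      exact ⟨hq2.reverse, by rw [SimpleGraph.Walk.support_reverse]; simpa using hv2⟩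
    have heq : (⟨q1.concat hw.symm, hr1⟩ : T.Path u v) = ⟨q2.concat hadj0.symm, hr2⟩ :=
      hT.IsAcyclic.path_unique _ _
    have heq' : (q1.concat hw.symm) = (q2.concat hadj0.symm) := congrArg Subtype.val heq
    have heqr := congrArg SimpleGraph.Walk.reverse heq'
    rw [SimpleGraph.Walk.reverse_concat, SimpleGraph.Walk.reverse_concat] at heqr
    exact hne (by simpa using congrArg (fun z : T.Walk v u => z.getVert 1) heqr)
  have hdeg : T.degree v = 1 := by
    have hset : T.neighborFinset v = {w0} := by
      ext x
      simp only [SimpleGraph.mem_neighborFinset, Finset.mem_singleton]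
      exact ⟨fun hx => uniq x hx, fun hx => hx ▸ hadj0⟩
    rw [← SimpleGraph.card_neighborFinset_eq_degree, hset, Finset.card_singleton]
  refine ⟨hdeg, ?_⟩
  -- Part 2
  have key : ∀ w y', T.dist w y' ≤ eccent T v := by
    intro w y'
    by_cases hwy : w = y'
    · subst hwy; simp [SimpleGraph.dist_self]
    obtain ⟨p, hp⟩ := tree_exists_path hT w y'
    obtain ⟨m, hm, hm1, hm2⟩ := tree_foot hT p hp v
    obtain ⟨n, hn, hn1, hn2⟩ := tree_foot hT p hp u
    have hxy : T.dist w m + T.dist m y' = T.dist w y' := tree_dist_split hT hp hm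
    have htri : T.dist u v ≤ T.dist u n + T.dist n m + T.dist m v := by
      have t1 := hconn.dist_triangle (u := u) (v := n) (w := v)
      have t2 := hconn.dist_triangle (u := n) (v := m) (w := v)
      omega
    have hle1 : T.dist v w ≤ eccent T v := le_ciSup (hbdd _) w
    have hle2 : T.dist v y' ≤ eccent T v := le_ciSup (hbdd _) y'
    have hu1 := hub w
    have hu2 := hub y'
    have c1 : T.dist w m = T.dist m w := SimpleGraph.dist_comm
    have c2 : T.dist m v = T.dist v m := SimpleGraph.dist_comm
    rcases tree_between hT hp hm hn with h | h
    · omega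
    · omega
  apply le_antisymm
  · exact le_ciSup (hbdd _) v
  · show (⨆ w, eccent T w) ≤ eccent T v
    refine ciSup_le fun w => ?_
    show (⨆ y', T.dist w y') ≤ eccent T v
    exact ciSup_le fun y' => key w y'
end

section
/- Let T=(V,E) be a tree with at least three vertices, let u, v ∈ V and let t ≥ 2 be an integer. If ε_T(u) ≥ ε_T(v), then ε_{S(T,t)}(u^t) ≥ ε_{S(T,t)}(v^t), where ε_{S(T,t)} denotes eccentricity in the generalized Sierpiński graph S(T,t). -/
open SimpleGraph hiding eccent
set_option linter.unusedSectionVars false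
set_option linter.unusedVariables false


section Generic
variable {α : Type*} {β : Type*} {G : SimpleGraph α} {H : SimpleGraph β}

lemma weak_hom_walk (f : α → β) (hf : ∀ {x y}, G.Adj x y → H.Adj (f x) (f y) ∨ f x = f y) :
    ∀ {u v : α} (W : G.Walk u v), ∃ W' : H.Walk (f u) (f v), W'.length ≤ W.length := by
  intro u v W
  induction W with
  | nil => exact ⟨.nil, le_rfl⟩
  | cons h p ih =>
    obtain ⟨W', hW'⟩ := ih
    rcases hf h with h' | h'
    · exact ⟨.cons h' W', by simp only [Walk.length_cons]; omega⟩
    · exact ⟨W'.copy h'.symm rfl, by simp only [Walk.length_copy, Walk.length_cons]; omega⟩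

lemma weak_hom_dist (f : α → β) (hf : ∀ {x y}, G.Adj x y → H.Adj (f x) (f y) ∨ f x = f y)
    {u v : α} (hr : G.Reachable u v) : H.dist (f u) (f v) ≤ G.dist u v := by
  obtain ⟨W, hW⟩ := hr.exists_walk_length_eq_dist
  obtain ⟨W', hW'⟩ := weak_hom_walk f hf W
  calc H.dist (f u) (f v) ≤ W'.length := dist_le W'
    _ ≤ W.length := hW'
    _ = G.dist u v := hW

lemma cut_walk_aux (hc : G.Connected) (f : α → Prop) {s s' : α}
    (hcut : ∀ ⦃a b⦄, G.Adj a b → f a → ¬ f b → a = s ∧ b = s') :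
    ∀ {u v : α} (W : G.Walk u v), f u → ¬ f v →
      G.dist u s + 1 + G.dist s' v ≤ W.length := by
  intro u v W
  induction W with
  | nil => intro h1 h2; exact absurd h1 h2
  | @cons u w v h p ih =>
    intro hu hv
    by_cases hw : f w
    · have h1 := ih hw hv
      have h2 : G.dist u s ≤ G.dist u w + G.dist w s := hc.dist_triangle
      have h3 : G.dist u w = 1 := dist_eq_one_iff_adj.mpr h
      simp only [Walk.length_cons]
      omega
    · obtain ⟨rfl, rfl⟩ := hcut h hu hw
      have h1 := dist_le p
      simp only [Walk.length_cons, SimpleGraph.dist_self]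
      omega

lemma dist_decomp_of_cut (hc : G.Connected) (f : α → Prop) {s s' : α} (hss : G.Adj s s')
    (hcut : ∀ ⦃a b⦄, G.Adj a b → f a → ¬ f b → a = s ∧ b = s')
    {u v : α} (hu : f u) (hv : ¬ f v) :
    G.dist u v = G.dist u s + 1 + G.dist s' v := by
  apply le_antisymm
  · have h1 : G.dist u v ≤ G.dist u s + G.dist s v := hc.dist_triangle
    have h2 : G.dist s v ≤ G.dist s s' + G.dist s' v := hc.dist_triangle
    have h3 : G.dist s s' = 1 := dist_eq_one_iff_adj.mpr hss
    omega
  · obtain ⟨W, hW⟩ := (hc u v).exists_walk_length_eq_dist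
    rw [← hW]
    exact cut_walk_aux hc f hcut W hu hv

lemma dist_getVert_le (hc : G.Connected) {a b : α} (W : G.Walk a b) (i k : ℕ)
    (h : i + k ≤ W.length) : G.dist (W.getVert i) (W.getVert (i + k)) ≤ k := by
  induction k with
  | zero => simp [SimpleGraph.dist_self]
  | succ k ih =>
    have h1 : G.dist (W.getVert (i + k)) (W.getVert (i + k + 1)) = 1 :=
      dist_eq_one_iff_adj.mpr (W.adj_getVert_succ (by omega))
    have h2 : G.dist (W.getVert i) (W.getVert (i + (k + 1))) ≤
        G.dist (W.getVert i) (W.getVert (i + k)) + G.dist (W.getVert (i + k)) (W.getVert (i + k + 1)) := by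
      have := hc.dist_triangle (u := W.getVert i) (v := W.getVert (i + k)) (w := W.getVert (i + k + 1))
      simpa [← Nat.add_assoc] using this
    have h3 := ih (by omega)
    omega

lemma isPath_append {u v w : α} {p : G.Walk u v} {q : G.Walk v w}
    (hp : p.IsPath) (hq : q.IsPath)
    (hdisj : ∀ x, x ∈ p.support → x ∈ q.support → x = v) :
    (p.append q).IsPath := by
  rw [Walk.isPath_def, Walk.support_append]
  apply List.Nodup.append hp.support_nodup
  · have := hq.support_nodup
    rw [q.support_eq_cons] at this
    exact this.of_cons
  · intro x hx1 hx2
    have hx2' : x ∈ q.support := by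
      rw [q.support_eq_cons]; exact List.mem_cons_of_mem _ hx2
    have : x = v := hdisj x hx1 hx2'
    subst this
    have := hq.support_nodup
    rw [q.support_eq_cons] at this
    exact (List.nodup_cons.mp this).1 hx2

end Generic


set_option linter.unusedSectionVars false

section TreePart
variable {V : Type*} [DecidableEq V] {T : SimpleGraph V} (hT : T.IsTree)

include hT

lemma tree_path_length_eq_dist {x y : V} {p : T.Walk x y} (hp : p.IsPath) :
    p.length = T.dist x y := by
  obtain ⟨W, hW⟩ := (hT.isConnected x y).exists_walk_length_eq_dist
  have h1 : W.bypass.IsPath := Walk.bypass_isPath W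
  have h2 : p = W.bypass := (hT.existsUnique_path x y).unique hp h1
  have h3 : W.bypass.length ≤ W.length := Walk.length_bypass_le W
  have h4 : T.dist x y ≤ p.length := dist_le p
  have h5 := congrArg Walk.length h2
  omega

lemma tree_dist_split_s13 {x y c : V} {p : T.Walk x y} (hp : p.IsPath) (hc : c ∈ p.support) :
    T.dist x c + T.dist c y = p.length := by
  have h1 := tree_path_length_eq_dist hT (hp.takeUntil hc)
  have h2 := tree_path_length_eq_dist hT (hp.dropUntil hc)
  have h3 := congrArg Walk.length (p.take_spec hc)
  rw [Walk.length_append] at h3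
  omega

lemma tree_exists_geodesic (x y : V) : ∃ p : T.Walk x y, p.IsPath ∧ p.length = T.dist x y := by
  exact ⟨((hT.isConnected x y).some).bypass, Walk.bypass_isPath _,
    tree_path_length_eq_dist hT (Walk.bypass_isPath _)⟩

lemma tree_first_step {x y : V} (hxy : x ≠ y) :
    ∃ b, T.Adj x b ∧ T.dist b y + 1 = T.dist x y := by
  obtain ⟨p, hp, hlen⟩ := tree_exists_geodesic hT x y
  cases p with
  | nil => exact absurd rfl hxy
  | @cons _ b _ h q =>
    refine ⟨b, h, ?_⟩
    have h1 : T.dist b y ≤ q.length := dist_le q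
    have h2 : T.dist x y ≤ 1 + T.dist b y := by
      have := (hT.isConnected).dist_triangle (u := x) (v := b) (w := y)
      have hxb : T.dist x b = 1 := dist_eq_one_iff_adj.mpr h
      omega
    simp only [Walk.length_cons] at hlen
    omega

lemma tree_no_triangle {a b c : V} (hab : T.Adj a b) (hbc : T.Adj b c) (hac : T.Adj a c) :
    False := by
  have h1 : (Walk.cons hac Walk.nil : T.Walk a c).IsPath := by
    simp [Walk.isPath_def, hac.ne]
  have h2 : (Walk.cons hab (Walk.cons hbc Walk.nil) : T.Walk a c).IsPath := by
    simp [Walk.isPath_def, hab.ne, hbc.ne, hac.ne]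
  have h3 := (hT.existsUnique_path a c).unique h1 h2
  have := congrArg Walk.length h3
  simp at this

lemma tree_dist_eq_zero {x y : V} (h : T.dist x y = 0) : x = y := by
  by_contra hne
  have := (hT.isConnected).pos_dist_of_ne hne
  omega
  
lemma tree_adj_dist_ne {c n z : V} (hcn : T.Adj c n) : T.dist z c ≠ T.dist z n := by
  intro he
  set m := T.dist z c with hm
  rcases Nat.eq_zero_or_pos m with h0 | hpos
  · have h1 : z = c := tree_dist_eq_zero hT (by omega)
    have h2 : z = n := tree_dist_eq_zero hT (by omega)
    exact hcn.ne (h1 ▸ h2)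
  · obtain ⟨p, hp, hlen⟩ := tree_exists_geodesic hT z n
    have hcp : c ∉ p.support := by
      intro hmem
      have := tree_dist_split_s13 hT hp hmem
      have hcn0 : T.dist c n = 0 := by omega
      exact hcn.ne (tree_dist_eq_zero hT hcn0)
    have hQ : (p.append (Walk.cons hcn.symm Walk.nil)).IsPath := by
      apply isPath_append hp (by simp [Walk.isPath_def, hcn.ne'])
      intro x hx1 hx2
      simp only [Walk.support_cons, Walk.support_nil, List.mem_cons, List.not_mem_nil,
        or_false, List.mem_singleton] at hx2
      rcases hx2 with rfl | rfl
      · rfl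
      · exact absurd hx1 hcp
    have := tree_path_length_eq_dist hT hQ
    rw [Walk.length_append] at this
    simp only [Walk.length_cons, Walk.length_nil] at this
    omega

lemma tree_unique_closer {c n₁ n₂ z : V} (h1 : T.Adj n₁ c) (h2 : T.Adj n₂ c)
    (hd1 : T.dist z n₁ + 1 = T.dist z c) (hd2 : T.dist z n₂ + 1 = T.dist z c) :
    n₁ = n₂ := by
  have key : ∀ (n : V) (hn : T.Adj n c), T.dist z n + 1 = T.dist z c →
      ∃ (Q : T.Walk z c), Q.IsPath ∧ Q.getVert (T.dist z c - 1) = n := by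
    intro n hn hd
    obtain ⟨p, hp, hlen⟩ := tree_exists_geodesic hT z n
    have hcp : c ∉ p.support := by
      intro hmem
      have := tree_dist_split_s13 hT hp hmem
      omega
    refine ⟨p.append (Walk.cons hn Walk.nil), ?_, ?_⟩
    · apply isPath_append hp (by simp [Walk.isPath_def, hn.ne])
      intro x hx1 hx2
      simp only [Walk.support_cons, Walk.support_nil, List.mem_cons, List.not_mem_nil,
        or_false, List.mem_singleton] at hx2
      rcases hx2 with rfl | rfl
      · rfl
      · exact absurd hx1 hcp
    · have hg : (p.append (Walk.cons hn Walk.nil)).getVert p.length = n := by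
        rw [Walk.getVert_append]
        simp [Walk.getVert_length]
      rw [hlen] at hg
      have : T.dist z c - 1 = T.dist z n := by omega
      rw [this]
      exact hg
  obtain ⟨Q1, hQ1, hg1⟩ := key n₁ h1 hd1
  obtain ⟨Q2, hQ2, hg2⟩ := key n₂ h2 hd2
  have := (hT.existsUnique_path z c).unique hQ1 hQ2
  rw [this] at hg1
  rw [← hg1, ← hg2]

lemma tree_cut_adj {a b x y : V} (hab : T.Adj a b) (hxy : T.Adj x y)
    (hx : T.dist x a < T.dist x b) (hy : T.dist y b < T.dist y a) : x = a ∧ y = b := by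
  have hc := hT.isConnected
  have dab : T.dist a b = 1 := dist_eq_one_iff_adj.mpr hab
  have dxy : T.dist x y = 1 := dist_eq_one_iff_adj.mpr hxy
  have dba : T.dist b a = 1 := by rw [SimpleGraph.dist_comm]; exact dab
  have tri1 : T.dist x b ≤ T.dist x a + T.dist a b := hc.dist_triangle
  have tri2 : T.dist y a ≤ T.dist y b + T.dist b a := hc.dist_triangle
  have dxb : T.dist x b = T.dist x a + 1 := by omega
  have dya : T.dist y a = T.dist y b + 1 := by omega
  have tri3 : T.dist y a ≤ T.dist y x + T.dist x a := hc.dist_triangle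
  have tri4 : T.dist x a ≤ T.dist x y + T.dist y a := hc.dist_triangle
  have tri5 : T.dist x b ≤ T.dist x y + T.dist y b := hc.dist_triangle
  have dyx : T.dist y x = 1 := by rw [SimpleGraph.dist_comm]; exact dxy
  have hne : T.dist a x ≠ T.dist a y := tree_adj_dist_ne hT hxy
  have hax : T.dist a x = T.dist x a := dist_comm ..
  have hay : T.dist a y = T.dist y a := dist_comm ..
  set m := T.dist x a with hm
  by_cases hcase : T.dist y a = m + 1
  · have dyb : T.dist y b = m := by omega
    rcases Nat.eq_zero_or_pos m with h0 | hpos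
    · have hxa : x = a := tree_dist_eq_zero hT (by omega)
      have hyb : y = b := tree_dist_eq_zero hT (by omega)
      exact ⟨hxa, hyb⟩
    · exfalso
      obtain ⟨r, hr, hrlen⟩ := tree_exists_geodesic hT x a
      have hbr : b ∉ r.support := by
        intro hmem
        have := tree_dist_split_s13 hT hr hmem
        omega
      have hs : (r.append (Walk.cons hab Walk.nil)).IsPath := by
        apply isPath_append hr (by simp [Walk.isPath_def, hab.ne])
        intro c hc1 hc2
        simp only [Walk.support_cons, Walk.support_nil, List.mem_cons, List.not_mem_nil,
          or_false, List.mem_singleton] at hc2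
        rcases hc2 with rfl | rfl
        · rfl
        · exact absurd hc1 hbr
      obtain ⟨P, hP, hPlen⟩ := tree_exists_geodesic hT y b
      have hxP : x ∉ P.support := by
        intro hmem
        have := tree_dist_split_s13 hT hP hmem
        omega
      have hq : (Walk.cons hxy P).IsPath := hP.cons hxP
      have hqs := (hT.existsUnique_path x b).unique hq hs
      have h1 : (Walk.cons hxy P).getVert 1 = y := by
        simp [Walk.getVert_cons_succ, Walk.getVert_zero]
      rcases Nat.lt_or_ge 1 m with hm2 | hm1
      · -- m ≥ 2 : s.getVert 1 is on r
        have h2 : (r.append (Walk.cons hab Walk.nil)).getVert 1 = r.getVert 1 := by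
          rw [Walk.getVert_append]
          simp only [hrlen]
          rw [if_pos (by omega)]
        have hy1 : y = r.getVert 1 := by rw [← h1, hqs, h2]
        have hmem : r.getVert 1 ∈ r.support :=
          Walk.mem_support_iff_exists_getVert.mpr ⟨1, rfl, by omega⟩
        have hsplit := tree_dist_split_s13 hT hr hmem
        have hd1 : T.dist x (r.getVert 1) ≤ 1 := by
          have := dist_getVert_le hc r 0 1 (by omega)
          simpa [Walk.getVert_zero, Nat.zero_add] using this
        rw [← hy1] at hsplit hd1
        omega
      · -- m = 1 : second vertex of s is a, so y = a
        have hm1' : m = 1 := by omega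
        have h2 : (r.append (Walk.cons hab Walk.nil)).getVert 1 = a := by
          rw [Walk.getVert_append]
          rw [if_neg (by omega)]
          have e : 1 - r.length = 0 := by omega
          rw [e]
          exact Walk.getVert_zero _
        have hy1 : y = a := by rw [← h1, hqs, h2]
        rw [hy1] at hcase
        simp [SimpleGraph.dist_self] at hcase
  · exfalso
    omega

lemma tree_proj {p q : V} {P : T.Walk p q} (hP : P.IsPath) (hPlen : P.length = T.dist p q)
    (x : V) :
    ∃ i : ℕ, i ≤ P.length ∧
      T.dist p (P.getVert i) = i ∧ T.dist (P.getVert i) q = P.length - i ∧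
      T.dist x p = T.dist x (P.getVert i) + i ∧
      T.dist x q = T.dist x (P.getVert i) + (P.length - i) := by
  have hc := hT.isConnected
  obtain ⟨m, hmS, hmin⟩ := Finset.exists_min_image P.support.toFinset (fun c => T.dist x c)
    ⟨p, List.mem_toFinset.mpr P.start_mem_support⟩
  have hmem : m ∈ P.support := List.mem_toFinset.mp hmS
  have hmin' : ∀ c ∈ P.support, T.dist x m ≤ T.dist x c := fun c hcs =>
    hmin c (List.mem_toFinset.mpr hcs)
  obtain ⟨i, hgv, hile⟩ := Walk.mem_support_iff_exists_getVert.mp hmem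
  have hpm : T.dist p (P.getVert i) ≤ i := by
    have := dist_getVert_le hc P 0 i (by omega)
    simpa [Walk.getVert_zero, Nat.zero_add] using this
  have hmq : T.dist (P.getVert i) q ≤ P.length - i := by
    have := dist_getVert_le hc P i (P.length - i) (by omega)
    have h2 : i + (P.length - i) = P.length := by omega
    rw [h2] at this
    simpa [Walk.getVert_length] using this
  have hsplit : T.dist p m + T.dist m q = P.length := tree_dist_split_s13 hT hP hmem
  rw [hgv] at hmq hpm
  have hpm' : T.dist p m = i := by omega
  have hmq' : T.dist m q = P.length - i := by omega
  -- gates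
  obtain ⟨R, hR, hRlen⟩ := tree_exists_geodesic hT x m
  have gate : ∀ (y : V) (Q : T.Walk m y), Q.IsPath → Q.support ⊆ P.support →
      T.dist x y = T.dist x m + Q.length := by
    intro y Q hQ hQsub
    have hW : (R.append Q).IsPath := by
      apply isPath_append hR hQ
      intro c hc1 hc2
      have hcP : c ∈ P.support := hQsub hc2
      have h1 := tree_dist_split_s13 hT hR hc1
      have h2 := hmin' c hcP
      have : T.dist c m = 0 := by omega
      exact tree_dist_eq_zero hT this
    have := tree_path_length_eq_dist hT hW
    rw [Walk.length_append] at this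
    omega
  have gatep : T.dist x p = T.dist x m + T.dist m p := by
    have h1 := gate p (P.takeUntil m hmem).reverse ((hP.takeUntil hmem).reverse) ?sub
    case sub =>
      rw [Walk.support_reverse]
      intro c hcs
      exact Walk.support_takeUntil_subset _ hmem (List.mem_reverse.mp hcs)
    rw [h1, Walk.length_reverse]
    congr 1
    have := tree_path_length_eq_dist hT (hP.takeUntil hmem)
    rw [this, dist_comm]
  have gateq : T.dist x q = T.dist x m + T.dist m q := by
    have h1 := gate q (P.dropUntil m hmem) (hP.dropUntil hmem) ?sub
    case sub => exact Walk.support_dropUntil_subset _ hmem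
    rw [h1]
    congr 1
    exact tree_path_length_eq_dist hT (hP.dropUntil hmem)
  rw [← hgv] at hpm' hmq' gatep gateq hmin'
  refine ⟨i, by omega, hpm', hmq', ?_, ?_⟩
  · rw [gatep]
    have : T.dist (P.getVert i) p = i := by rw [SimpleGraph.dist_comm]; exact hpm'
    omega
  · rw [gateq]
    omega

lemma tree_dist_le_max {p q : V} (hmax : ∀ a b, T.dist a b ≤ T.dist p q) (x z : V) :
    T.dist x z ≤ max (T.dist x p) (T.dist x q) := by
  have hc := hT.isConnected
  obtain ⟨P, hP, hPlen⟩ := tree_exists_geodesic hT p q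
  obtain ⟨i, hi, hpm, hmq, gxp, gxq⟩ := tree_proj hT hP hPlen x
  obtain ⟨i', hi', hpm', hmq', gzp, gzq⟩ := tree_proj hT hP hPlen z
  have tri : T.dist x z ≤ T.dist x (P.getVert i) + T.dist (P.getVert i) (P.getVert i')
      + T.dist (P.getVert i') z := by
    have t1 : T.dist x z ≤ T.dist x (P.getVert i) + T.dist (P.getVert i) z := hc.dist_triangle
    have t2 : T.dist (P.getVert i) z ≤ T.dist (P.getVert i) (P.getVert i')
        + T.dist (P.getVert i') z := hc.dist_triangle
    omega
  have hzp : T.dist z p ≤ T.dist p q := by rw [SimpleGraph.dist_comm]; exact hmax p z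
  have hzq : T.dist z q ≤ T.dist p q := hmax z q
  have czp : T.dist (P.getVert i') z = T.dist z (P.getVert i') := dist_comm ..
  rcases le_total i i' with hii | hii
  · apply le_max_of_le_right
    have hdm : T.dist (P.getVert i) (P.getVert i') ≤ i' - i := by
      have := dist_getVert_le hc P i (i' - i) (by omega)
      have h2 : i + (i' - i) = i' := by omega
      rwa [h2] at this
    omega
  · apply le_max_of_le_left
    have hdm : T.dist (P.getVert i) (P.getVert i') ≤ i - i' := by
      have := dist_getVert_le hc P i' (i - i') (by omega)
      have h2 : i' + (i - i') = i := by omega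
      rw [h2] at this
      rw [SimpleGraph.dist_comm]
      exact this
    omega

lemma tree_two_nbr_bound {p q c z n : V} (hmax : ∀ a b, T.dist a b ≤ T.dist p q)
    (hD : 1 ≤ T.dist p q) (hz : T.Adj c z) (hn : T.Adj c n) (hzn : z ≠ n) (y : V) :
    T.dist c y + 1 ≤ T.dist p q := by
  have hc := hT.isConnected
  by_cases hyc : y = c
  · subst hyc; simp [SimpleGraph.dist_self]; omega
  by_contra hcon
  push_neg at hcon
  have hcy : T.dist p q ≤ T.dist c y := by omega
  have hyz : T.dist y z ≤ T.dist p q := hmax y z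
  have hyn : T.dist y n ≤ T.dist p q := hmax y n
  have hyc' : T.dist y c = T.dist c y := dist_comm ..
  have tz : T.dist y c ≤ T.dist y z + 1 := by
    have t := hc.dist_triangle (u := y) (v := z) (w := c)
    have : T.dist z c = 1 := by rw [SimpleGraph.dist_comm]; exact dist_eq_one_iff_adj.mpr hz
    omega
  have tz' : T.dist y z ≤ T.dist y c + 1 := by
    have t := hc.dist_triangle (u := y) (v := c) (w := z)
    have : T.dist c z = 1 := dist_eq_one_iff_adj.mpr hz
    omega
  have tn : T.dist y c ≤ T.dist y n + 1 := by
    have t := hc.dist_triangle (u := y) (v := n) (w := c)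
    have : T.dist n c = 1 := by rw [SimpleGraph.dist_comm]; exact dist_eq_one_iff_adj.mpr hn
    omega
  have tn' : T.dist y n ≤ T.dist y c + 1 := by
    have t := hc.dist_triangle (u := y) (v := c) (w := n)
    have : T.dist c n = 1 := dist_eq_one_iff_adj.mpr hn
    omega
  have nez : T.dist y c ≠ T.dist y z := tree_adj_dist_ne hT hz
  have nen : T.dist y c ≠ T.dist y n := tree_adj_dist_ne hT hn
  have hz1 : T.dist y z + 1 = T.dist y c := by omega
  have hn1 : T.dist y n + 1 = T.dist y c := by omega
  exact hzn (tree_unique_closer hT hz.symm hn.symm hz1 hn1)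

end TreePart

section Sierp
variable {V : Type*} [DecidableEq V] {T : SimpleGraph V}

lemma S_adj_cons {t : ℕ} {w w' : Fin t → V} (a : V)
    (h : (SierpinskiGraph T t).Adj w w') :
    (SierpinskiGraph T (t+1)).Adj (Fin.cons a w) (Fin.cons a w') := by
  obtain ⟨i, h1, h2, h3⟩ := h
  refine ⟨i.succ, by simpa using h1, ?_, ?_⟩
  · intro j hj
    induction j using Fin.cases with
    | zero => simp
    | succ k =>
      simp only [Fin.cons_succ]
      exact h2 k (by rwa [Fin.succ_lt_succ_iff] at hj)
  · intro j hj
    induction j using Fin.cases with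
    | zero => exact absurd hj (Fin.not_lt_zero _)
    | succ k =>
      simp only [Fin.cons_succ]
      exact h3 k (by rwa [Fin.succ_lt_succ_iff] at hj)

lemma S_adj_bridge {t : ℕ} {a b : V} (h : T.Adj a b) :
    (SierpinskiGraph T (t+1)).Adj (Fin.cons a (fun _ => b)) (Fin.cons b (fun _ => a)) := by
  refine ⟨0, by simpa using h, ?_, ?_⟩
  · intro j hj; exact absurd hj (Fin.not_lt_zero _)
  · intro j hj
    induction j using Fin.cases with
    | zero => exact absurd hj (lt_irrefl _)
    | succ k => constructor <;> simp

lemma S_adj_cases {t : ℕ} {u v : Fin (t+1) → V}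
    (h : (SierpinskiGraph T (t+1)).Adj u v) :
    (u 0 = v 0 ∧ (SierpinskiGraph T t).Adj (Fin.tail u) (Fin.tail v)) ∨
      (T.Adj (u 0) (v 0) ∧ u = Fin.cons (u 0) (fun _ => v 0) ∧
        v = Fin.cons (v 0) (fun _ => u 0)) := by
  obtain ⟨i, h1, h2, h3⟩ := h
  induction i using Fin.cases with
  | zero =>
    right
    refine ⟨h1, ?_, ?_⟩
    · funext j
      induction j using Fin.cases with
      | zero => simp
      | succ k =>
        simp only [Fin.cons_succ]
        exact (h3 k.succ (Fin.succ_pos k)).1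
    · funext j
      induction j using Fin.cases with
      | zero => simp
      | succ k =>
        simp only [Fin.cons_succ]
        exact (h3 k.succ (Fin.succ_pos k)).2
  | succ i =>
    left
    refine ⟨h2 0 (Fin.succ_pos i), i, h1, ?_, ?_⟩
    · intro j hj
      exact h2 j.succ (by rwa [Fin.succ_lt_succ_iff])
    · intro j hj
      exact h3 j.succ (by rwa [Fin.succ_lt_succ_iff])

lemma cons_const {t : ℕ} (x : V) : (Fin.cons x (fun _ => x) : Fin (t+1) → V) = fun _ => x := by
  funext j
  induction j using Fin.cases with
  | zero => simp
  | succ k => simp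

def consHom (T : SimpleGraph V) (t : ℕ) (a : V) :
    SierpinskiGraph T t →g SierpinskiGraph T (t+1) where
  toFun := fun w => Fin.cons a w
  map_rel' := fun {x y} h => S_adj_cons a h

variable (hT : T.IsTree)
include hT

lemma S_conn : ∀ t, (SierpinskiGraph T t).Connected := by
  intro t
  induction t with
  | zero =>
    rw [SimpleGraph.connected_iff]
    refine ⟨?_, ⟨fun i => i.elim0⟩⟩
    intro u v
    have : u = v := funext fun i => i.elim0
    rw [this]
  | succ t ih =>
    have key : ∀ n (a b : V) (w w' : Fin t → V), T.dist a b = n →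
        (SierpinskiGraph T (t+1)).Reachable (Fin.cons a w) (Fin.cons b w') := by
      intro n
      induction n with
      | zero =>
        intro a b w w' hd
        have hab : a = b := tree_dist_eq_zero hT hd
        subst hab
        simpa [consHom] using Reachable.map (consHom T t a) (ih.preconnected w w')
      | succ n ihn =>
        intro a b w w' hd
        have hab : a ≠ b := by
          intro he; rw [he] at hd; simp [SimpleGraph.dist_self] at hd
        obtain ⟨c, hac, hcd⟩ := tree_first_step hT hab
        have r1 : (SierpinskiGraph T (t+1)).Reachable (Fin.cons a w)
            (Fin.cons a (fun _ => c)) := by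
          simpa [consHom] using
            Reachable.map (consHom T t a) (ih.preconnected w (fun _ => c))
        have r2 := (S_adj_bridge (t := t) hac).reachable
        have r3 := ihn c b (fun _ => a) w' (by omega)
        exact r1.trans (r2.trans r3)
    rw [SimpleGraph.connected_iff]
    refine ⟨?_, ?_⟩
    · intro u v
      have hu : u = Fin.cons (u 0) (Fin.tail u) := (Fin.cons_self_tail u).symm
      have hv : v = Fin.cons (v 0) (Fin.tail v) := (Fin.cons_self_tail v).symm
      rw [hu, hv]
      exact key _ _ _ _ _ rfl
    · exact (hT.isConnected.nonempty).elim fun x => ⟨fun _ => x⟩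

noncomputable def stepTo (a z : V) : V :=
  if h : a = z then a else (tree_first_step hT h).choose

lemma stepTo_spec {a z : V} (h : a ≠ z) :
    T.Adj a (stepTo hT a z) ∧ T.dist (stepTo hT a z) z + 1 = T.dist a z := by
  rw [stepTo, dif_neg h]
  exact (tree_first_step hT h).choose_spec

lemma stepTo_adj {a z : V} (h : T.Adj a z) : stepTo hT a z = z := by
  obtain ⟨h1, h2⟩ := stepTo_spec hT h.ne
  have h3 : T.dist a z = 1 := dist_eq_one_iff_adj.mpr h
  exact tree_dist_eq_zero hT (by omega)

lemma stepTo_eq_aux {a x y : V} (hxy : T.Adj x y) (hx : x ≠ a) (hy : y ≠ a)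
    (hd : T.dist a y = T.dist a x + 1) : stepTo hT a x = stepTo hT a y := by
  have hc := hT.isConnected
  obtain ⟨hs1, hs2⟩ := stepTo_spec hT (Ne.symm hy)
  obtain ⟨ht1, ht2⟩ := stepTo_spec hT (Ne.symm hx)
  set s := stepTo hT a y
  set r := stepTo hT a x
  have h1 : T.dist r y ≤ T.dist r x + 1 := by
    have := hc.dist_triangle (u := r) (v := x) (w := y)
    have hxy1 : T.dist x y = 1 := dist_eq_one_iff_adj.mpr hxy
    omega
  have h2 : T.dist a y ≤ 1 + T.dist r y := by
    have := hc.dist_triangle (u := a) (v := r) (w := y)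
    have : T.dist a r = 1 := dist_eq_one_iff_adj.mpr ht1
    omega
  have h3 : T.dist y r + 1 = T.dist y a := by
    rw [SimpleGraph.dist_comm, SimpleGraph.dist_comm (v := a)]
    omega
  have h4 : T.dist y s + 1 = T.dist y a := by
    rw [SimpleGraph.dist_comm, SimpleGraph.dist_comm (v := a)]
    omega
  exact tree_unique_closer hT ht1.symm hs1.symm h3 h4

lemma stepTo_eq_of_adj {a x y : V} (hxy : T.Adj x y) (hx : x ≠ a) (hy : y ≠ a) :
    stepTo hT a x = stepTo hT a y := by
  have hc := hT.isConnected
  have hne : T.dist a x ≠ T.dist a y := tree_adj_dist_ne hT hxy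
  have t1 : T.dist a y ≤ T.dist a x + 1 := by
    have := hc.dist_triangle (u := a) (v := x) (w := y)
    have : T.dist x y = 1 := dist_eq_one_iff_adj.mpr hxy
    omega
  have t2 : T.dist a x ≤ T.dist a y + 1 := by
    have := hc.dist_triangle (u := a) (v := y) (w := x)
    have : T.dist y x = 1 := dist_eq_one_iff_adj.mpr hxy.symm
    omega
  rcases Nat.lt_or_ge (T.dist a x) (T.dist a y) with hlt | hge
  · exact stepTo_eq_aux hT hxy hx hy (by omega)
  · exact (stepTo_eq_aux hT hxy.symm hy hx (by omega)).symm

lemma S_dist_cons {t : ℕ} (a : V) (w w' : Fin t → V) :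
    (SierpinskiGraph T (t+1)).dist (Fin.cons a w) (Fin.cons a w') =
      (SierpinskiGraph T t).dist w w' := by
  apply le_antisymm
  · exact weak_hom_dist (G := SierpinskiGraph T t) (H := SierpinskiGraph T (t+1))
      (fun w => Fin.cons a w) (fun h => Or.inl (S_adj_cons a h))
      ((S_conn hT t).preconnected w w')
  · set ψ : (Fin (t+1) → V) → (Fin t → V) :=
      fun u => if u 0 = a then Fin.tail u else (fun _ => stepTo hT a (u 0)) with hψ
    have hf : ∀ {x y : Fin (t+1) → V}, (SierpinskiGraph T (t+1)).Adj x y →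
        (SierpinskiGraph T t).Adj (ψ x) (ψ y) ∨ ψ x = ψ y := by
      intro x y h
      rcases S_adj_cases h with ⟨h0, htl⟩ | ⟨hadj, hxform, hyform⟩
      · by_cases hx0 : x 0 = a
        · left
          have hy0 : y 0 = a := h0 ▸ hx0
          simpa [hψ, if_pos hx0, if_pos hy0] using htl
        · right
          have hy0 : ¬ (y 0 = a) := h0 ▸ hx0
          simp only [hψ, if_neg hx0, if_neg hy0, h0]
      · by_cases hxa : x 0 = a
        · right
          have hay : T.Adj a (y 0) := by rw [← hxa]; exact hadj
          have hy0 : ¬ (y 0 = a) := fun he => T.loopless.irrefl a (he ▸ hay)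
          simp only [hψ, if_pos hxa, if_neg hy0]
          rw [stepTo_adj hT hay]
          funext j
          rw [hxform]
          simp [Fin.tail]
        · by_cases hya : y 0 = a
          · right
            have hax : T.Adj a (x 0) := by rw [← hya]; exact hadj.symm
            simp only [hψ, if_neg hxa, if_pos hya]
            rw [stepTo_adj hT hax]
            funext j
            rw [hyform]
            simp [Fin.tail]
          · right
            simp only [hψ, if_neg hxa, if_neg hya]
            rw [stepTo_eq_of_adj hT hadj hxa hya]
    have hkey := weak_hom_dist (G := SierpinskiGraph T (t+1)) (H := SierpinskiGraph T t) ψ hf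
      ((S_conn hT (t+1)).preconnected (Fin.cons a w) (Fin.cons a w'))
    have e1 : ψ (Fin.cons a w) = w := by
      simp [hψ]
    have e2 : ψ (Fin.cons a w') = w' := by
      simp [hψ]
    rwa [e1, e2] at hkey

lemma S_dist_step {t : ℕ} {a b z : V} (hab : T.Adj a b) (hz : T.dist z b < T.dist z a)
    (w w' : Fin t → V) :
    (SierpinskiGraph T (t+1)).dist (Fin.cons a w) (Fin.cons z w') =
      (SierpinskiGraph T t).dist w (fun _ => b) + 1 +
      (SierpinskiGraph T (t+1)).dist (Fin.cons b (fun _ => a)) (Fin.cons z w') := by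
  have hdec := dist_decomp_of_cut (S_conn hT (t+1))
    (f := fun u : Fin (t+1) → V => T.dist (u 0) a < T.dist (u 0) b)
    (u := Fin.cons a w) (v := Fin.cons z w')
    (S_adj_bridge hab) ?hcut ?hu ?hv
  case hcut =>
    intro x y hadj hfx hfy
    rcases S_adj_cases hadj with ⟨h0, -⟩ | ⟨hxy0, hxform, hyform⟩
    · rw [h0] at hfx; exact absurd hfx hfy
    · have hne : T.dist (y 0) a ≠ T.dist (y 0) b := tree_adj_dist_ne hT hab
      have hfy' : T.dist (y 0) b < T.dist (y 0) a := by omega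
      obtain ⟨hxa, hyb⟩ := tree_cut_adj hT hab hxy0 hfx hfy'
      constructor
      · rw [hxform, hxa, hyb]
      · rw [hyform, hxa, hyb]
  case hu =>
    simp only [Fin.cons_zero, SimpleGraph.dist_self]
    have : T.dist a b = 1 := dist_eq_one_iff_adj.mpr hab
    omega
  case hv =>
    simp only [Fin.cons_zero]
    omega
  rw [hdec, S_dist_cons hT]

end Sierp

section Main
variable {V : Type*} [DecidableEq V] {T : SimpleGraph V} (hT : T.IsTree)
include hT

lemma S_chain {t : ℕ}
    (Hdist : ∀ α β : V, (SierpinskiGraph T t).dist (fun _ => α) (fun _ => β) =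
      (2^t - 1) * T.dist α β) :
    ∀ (n : ℕ) (c e z : V) (w' : Fin t → V), T.Adj c e → T.dist z e = T.dist z c + 1 →
      T.dist c z = n + 1 →
      ∃ c', T.Adj c' z ∧ (∃ m, T.Adj c' m ∧ m ≠ z) ∧
        (SierpinskiGraph T (t+1)).dist (Fin.cons c (fun _ => e)) (Fin.cons z w') =
          (n+1) * (2^(t+1) - 1) + (SierpinskiGraph T t).dist (fun _ => c') w' := by
  have hp : 2^(t+1) = 2 * 2^t := by rw [pow_succ]; ring
  have h1 : 1 ≤ 2^t := Nat.one_le_two_pow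
  intro n
  induction n with
  | zero =>
    intro c e z w' hce hze hcz
    have hzc : T.dist z c = 1 := by rw [SimpleGraph.dist_comm]; exact hcz
    have hadj : T.Adj c z := dist_eq_one_iff_adj.mp hcz
    have hR2 := S_dist_step hT hadj (z := z)
      (by simp only [SimpleGraph.dist_self]; omega) (fun _ => e) w'
    rw [hR2, S_dist_cons hT]
    have hez : T.dist e z = 2 := by rw [SimpleGraph.dist_comm]; omega
    have henez : e ≠ z := by
      intro hh; rw [hh] at hez; simp [SimpleGraph.dist_self] at hez
    refine ⟨c, hadj, ⟨e, hce, henez⟩, ?_⟩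
    rw [Hdist, hez]
    omega
  | succ n ihn =>
    intro c e z w' hce hze hcz
    have hcnez : c ≠ z := by
      intro hh; rw [hh] at hcz; simp [SimpleGraph.dist_self] at hcz
    obtain ⟨b, hcb, hbz⟩ := tree_first_step hT hcnez
    have hc1 : T.dist z c = T.dist c z := SimpleGraph.dist_comm ..
    have hc2 : T.dist z b = T.dist b z := SimpleGraph.dist_comm ..
    have hzb : T.dist z b < T.dist z c := by omega
    have hR2 := S_dist_step hT hcb hzb (fun _ => e) w'
    have heb : T.dist e b = 2 := by
      have hne : e ≠ b := by
        intro hh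
        have : T.dist z e = T.dist z b := by rw [hh]
        omega
      have hnadj : ¬ T.Adj e b := fun ha => tree_no_triangle hT hce ha hcb
      have hle : T.dist e b ≤ 2 := by
        have htr := hT.isConnected.dist_triangle (u := e) (v := c) (w := b)
        have t1 : T.dist e c = 1 := by
          rw [SimpleGraph.dist_comm]; exact dist_eq_one_iff_adj.mpr hce
        have t2 : T.dist c b = 1 := dist_eq_one_iff_adj.mpr hcb
        omega
      have hne0 : T.dist e b ≠ 0 := fun hh => hne (tree_dist_eq_zero hT hh)
      have hne1 : T.dist e b ≠ 1 := fun hh => hnadj (dist_eq_one_iff_adj.mp hh)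
      omega
    have hzc' : T.dist z c = T.dist z b + 1 := by omega
    obtain ⟨c', h1', h2', heq⟩ := ihn b c z w' hcb.symm hzc' (by omega)
    refine ⟨c', h1', h2', ?_⟩
    rw [hR2, heq, Hdist, heb]
    have hmul : (n+1+1) * (2^(t+1) - 1) = (n+1) * (2^(t+1) - 1) + (2^(t+1) - 1) := by ring
    omega

lemma S_dist_const : ∀ t (α β : V),
    (SierpinskiGraph T t).dist (fun _ => α) (fun _ => β) = (2^t - 1) * T.dist α β := by
  intro t
  induction t with
  | zero =>
    intro α β
    have he : (fun _ : Fin 0 => α) = (fun _ => β) := funext fun i => i.elim0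
    rw [he, SimpleGraph.dist_self]
    simp
  | succ t ih =>
    have hp : 2^(t+1) = 2 * 2^t := by rw [pow_succ]; ring
    have h1 : 1 ≤ 2^t := Nat.one_le_two_pow
    intro α β
    rcases hn : T.dist α β with _ | n
    · have he : α = β := tree_dist_eq_zero hT hn
      subst he
      rw [SimpleGraph.dist_self, Nat.mul_zero]
    · rcases n with _ | n
      · -- adjacent
        have hadj : T.Adj α β := dist_eq_one_iff_adj.mp hn
        have hz : T.dist β β < T.dist β α := by
          have hcm : T.dist β α = T.dist α β := SimpleGraph.dist_comm ..
          simp only [SimpleGraph.dist_self]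
          omega
        rw [← cons_const (t := t) α, ← cons_const (t := t) β,
          S_dist_step hT hadj hz, S_dist_cons hT, ih, hn]
        omega
      · -- distance ≥ 2
        have hne : α ≠ β := by
          intro hh; rw [hh, SimpleGraph.dist_self] at hn; omega
        obtain ⟨c, hαc, hcβ⟩ := tree_first_step hT hne
        have hz : T.dist β c < T.dist β α := by
          rw [SimpleGraph.dist_comm, SimpleGraph.dist_comm (v := α)]
          omega
        rw [← cons_const (t := t) α, ← cons_const (t := t) β, S_dist_step hT hαc hz]
        obtain ⟨c', hc'β, -, heq⟩ := S_chain hT ih n c α β (fun _ => β) hαc.symm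
          (by rw [SimpleGraph.dist_comm, SimpleGraph.dist_comm (v := c)]; omega)
          (by omega)
        rw [heq, ih, ih]
        have e1 : T.dist α c = 1 := dist_eq_one_iff_adj.mpr hαc
        have e2 : T.dist c' β = 1 := dist_eq_one_iff_adj.mpr hc'β
        rw [e1, e2]
        have hmul2 : (2^(t+1) - 1) * (n+1+1) = (n+1) * (2^(t+1) - 1) + (2^(t+1) - 1) := by ring
        omega

end Main

def zigW {V : Type*} : (t : ℕ) → V → V → (Fin t → V)
  | 0, _, _ => fun i => i.elim0
  | (t+1), p, q => Fin.cons p (zigW t q p)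

section Bounds
variable {V : Type*} [DecidableEq V] [Fintype V] {T : SimpleGraph V} (hT : T.IsTree)
include hT

lemma S_upper {p q : V} (hmax : ∀ a b, T.dist a b ≤ T.dist p q) (hD : 2 ≤ T.dist p q) :
    ∀ (t : ℕ) (x : V) (w : Fin t → V),
      (SierpinskiGraph T t).dist (fun _ => x) w ≤
        (2^t - 1) * eccent T x + (2^t - t - 1) * (T.dist p q - 2) := by
  have hne : Nonempty V := hT.isConnected.nonempty
  intro t
  induction t with
  | zero =>
    intro x w
    have he : (fun _ : Fin 0 => x) = w := funext fun i => i.elim0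
    rw [he, SimpleGraph.dist_self]
    exact Nat.zero_le _
  | succ t ih =>
    have hp2 : 2^(t+1) = 2 * 2^t := by rw [pow_succ]; ring
    have h1 : 1 ≤ 2^t := Nat.one_le_two_pow
    have h2 : t < 2^t := Nat.lt_two_pow_self (n := t)
    intro x w
    have hbdd : BddAbove (Set.range fun z => T.dist x z) := Finite.bddAbove_range _
    have hkecc : T.dist x (w 0) ≤ eccent T x := le_ciSup hbdd (w 0)
    have hecc1 : 1 ≤ eccent T x := by
      have e1 : T.dist x p ≤ eccent T x := le_ciSup hbdd p
      have e2 : T.dist x q ≤ eccent T x := le_ciSup hbdd q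
      have e3 : T.dist p q ≤ T.dist p x + T.dist x q := hT.isConnected.dist_triangle
      have e4 : T.dist p x = T.dist x p := SimpleGraph.dist_comm ..
      omega
    have hcoef : (2^(t+1) - (t+1) - 1) * (T.dist p q - 2)
        = (2^t - t - 1) * (T.dist p q - 2) + (2^t - 1) * (T.dist p q - 2) := by
      rw [← Nat.add_mul]
      congr 1
      omega
    have hsplit : (2^(t+1) - 1) * eccent T x
        = (2^t - 1) * eccent T x + 2^t * eccent T x := by
      rw [← Nat.add_mul]
      congr 1
      omega
    have hex : 2^t ≤ 2^t * eccent T x := Nat.le_mul_of_pos_right _ (by omega)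
    rw [← Fin.cons_self_tail w, ← cons_const (t := t) x]
    by_cases h0 : w 0 = x
    · rw [h0, S_dist_cons hT]
      have := ih x (Fin.tail w)
      omega
    · rcases hk : T.dist x (w 0) with _ | k
      · exact absurd (tree_dist_eq_zero hT hk).symm h0
      rcases k with _ | n
      · -- adjacent
        have hadj : T.Adj x (w 0) := dist_eq_one_iff_adj.mp hk
        have hz : T.dist (w 0) (w 0) < T.dist (w 0) x := by
          have hcm : T.dist (w 0) x = T.dist x (w 0) := SimpleGraph.dist_comm ..
          simp only [SimpleGraph.dist_self]
          omega
        rw [S_dist_step hT hadj hz, S_dist_cons hT, S_dist_const hT, hk]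
        have := ih x (Fin.tail w)
        omega
      · -- dist = n+2
        have hne0 : x ≠ w 0 := fun he => h0 he.symm
        obtain ⟨c, hxc, hcw⟩ := tree_first_step hT hne0
        have hc1 : T.dist (w 0) x = T.dist x (w 0) := SimpleGraph.dist_comm ..
        have hc2 : T.dist (w 0) c = T.dist c (w 0) := SimpleGraph.dist_comm ..
        have hz : T.dist (w 0) c < T.dist (w 0) x := by omega
        rw [S_dist_step hT hxc hz]
        obtain ⟨c', hc'w, ⟨m, hc'm, hmw⟩, heq⟩ := S_chain hT (S_dist_const hT t) n c x (w 0)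
          (Fin.tail w) hxc.symm (by omega) (by omega)
        rw [heq, S_dist_const hT]
        have e1 : T.dist x c = 1 := dist_eq_one_iff_adj.mpr hxc
        rw [e1]
        have hY := ih c' (Fin.tail w)
        have hecc' : eccent T c' ≤ T.dist p q - 1 := by
          apply ciSup_le
          intro y
          have := tree_two_nbr_bound hT hmax (by omega) hc'w hc'm (Ne.symm hmw) y
          omega
        have ha1 : (2^t - 1) * eccent T c' ≤ (2^t - 1) * (T.dist p q - 1) :=
          Nat.mul_le_mul_left _ hecc'
        have ha2 : (2^t - 1) * (T.dist p q - 1) = (2^t - 1) * (T.dist p q - 2) + (2^t - 1) := by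
          have hD1 : T.dist p q - 1 = (T.dist p q - 2) + 1 := by omega
          rw [hD1, Nat.mul_succ]
        have ha4 : (2^(t+1) - 1) * (n + 1 + 1) ≤ (2^(t+1) - 1) * eccent T x :=
          Nat.mul_le_mul_left _ (by omega)
        have ha5 : (2^(t+1) - 1) * (n + 1 + 1) = (n+1) * (2^(t+1) - 1) + (2^(t+1) - 1) := by
          ring
        omega

lemma S_lower : ∀ (t : ℕ) (p q x : V), (∀ a b, T.dist a b ≤ T.dist p q) → 2 ≤ T.dist p q →
    x ≠ p →
    (2^t - 1) * T.dist x p + (2^t - t - 1) * (T.dist p q - 2) ≤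
      (SierpinskiGraph T t).dist (fun _ => x) (zigW t p q) := by
  intro t
  induction t with
  | zero =>
    intro p q x _ _ _
    norm_num
  | succ t ih =>
    intro p q x hmax hD hxp
    have hp2 : 2^(t+1) = 2 * 2^t := by rw [pow_succ]; ring
    have h1 : 1 ≤ 2^t := Nat.one_le_two_pow
    have h2 : t < 2^t := Nat.lt_two_pow_self (n := t)
    have hcoef : (2^(t+1) - (t+1) - 1) * (T.dist p q - 2)
        = (2^t - t - 1) * (T.dist p q - 2) + (2^t - 1) * (T.dist p q - 2) := by
      rw [← Nat.add_mul]
      congr 1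
      omega
    have hqp : T.dist q p = T.dist p q := SimpleGraph.dist_comm ..
    have hmax' : ∀ a b, T.dist a b ≤ T.dist q p := fun a b => by
      rw [hqp]; exact hmax a b
    have hD' : 2 ≤ T.dist q p := by omega
    show _ ≤ (SierpinskiGraph T (t+1)).dist _ (Fin.cons p (zigW t q p))
    rw [← cons_const (t := t) x]
    rcases hk : T.dist x p with _ | k
    · exact absurd (tree_dist_eq_zero hT hk) hxp
    rcases k with _ | n
    · -- adjacent to p
      have hadj : T.Adj x p := dist_eq_one_iff_adj.mp hk
      have hpx : T.dist p x = T.dist x p := SimpleGraph.dist_comm ..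
      have hz : T.dist p p < T.dist p x := by
        simp only [SimpleGraph.dist_self]
        omega
      rw [S_dist_step hT hadj hz, S_dist_cons hT, S_dist_const hT, hk]
      have hxq : x ≠ q := by
        intro he
        rw [he] at hk
        omega
      have hIH := ih q p x hmax' hD' hxq
      rw [hqp] at hIH
      have htr : T.dist p q ≤ T.dist p x + T.dist x q := hT.isConnected.dist_triangle
      have hb1 : (2^t - 1) * (T.dist p q - 1) ≤ (2^t - 1) * T.dist x q :=
        Nat.mul_le_mul_left _ (by omega)
      have hb2 : (2^t - 1) * (T.dist p q - 1) = (2^t - 1) * (T.dist p q - 2) + (2^t - 1) := by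
        have hD1 : T.dist p q - 1 = (T.dist p q - 2) + 1 := by omega
        rw [hD1, Nat.mul_succ]
      omega
    · -- dist = n+2
      obtain ⟨c, hxc, hcp⟩ := tree_first_step hT hxp
      have hpx : T.dist p x = T.dist x p := SimpleGraph.dist_comm ..
      have hpc : T.dist p c = T.dist c p := SimpleGraph.dist_comm ..
      have hz : T.dist p c < T.dist p x := by omega
      rw [S_dist_step hT hxc hz]
      obtain ⟨c', hc'p, -, heq⟩ := S_chain hT (S_dist_const hT t) n c x p
        (zigW t q p) hxc.symm (by omega) (by omega)
      rw [heq, S_dist_const hT]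
      have e1 : T.dist x c = 1 := dist_eq_one_iff_adj.mpr hxc
      rw [e1]
      have ec'p : T.dist c' p = 1 := dist_eq_one_iff_adj.mpr hc'p
      have hc'q : c' ≠ q := by
        intro he
        rw [he] at ec'p
        omega
      have hIH := ih q p c' hmax' hD' hc'q
      rw [hqp] at hIH
      have htr : T.dist p q ≤ T.dist p c' + T.dist c' q := hT.isConnected.dist_triangle
      have hpc' : T.dist p c' = 1 := by rw [SimpleGraph.dist_comm]; exact ec'p
      have hb1 : (2^t - 1) * (T.dist p q - 1) ≤ (2^t - 1) * T.dist c' q :=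
        Nat.mul_le_mul_left _ (by omega)
      have hb2 : (2^t - 1) * (T.dist p q - 1) = (2^t - 1) * (T.dist p q - 2) + (2^t - 1) := by
        have hD1 : T.dist p q - 1 = (T.dist p q - 2) + 1 := by omega
        rw [hD1, Nat.mul_succ]
      have ha5 : (2^(t+1) - 1) * (n + 1 + 1) = (n+1) * (2^(t+1) - 1) + (2^(t+1) - 1) := by
        ring
      omega

end Bounds


/-- for a finite tree `T` with at least three vertices, `t ≥ 2`, and
`u, v ∈ V`: if `ε_T(u) ≥ ε_T(v)` then `ε_{S(T,t)}(u^t) ≥ ε_{S(T,t)}(v^t)`. -/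
theorem stmt_13 {V : Type*} [Fintype V] (T : SimpleGraph V) (hT : T.IsTree)
    (hcard : 3 ≤ Fintype.card V) (u v : V) (t : ℕ) (ht : 2 ≤ t)
    (h : eccent T v ≤ eccent T u) :
    eccent (SierpinskiGraph T t) (fun _ : Fin t => v) ≤
      eccent (SierpinskiGraph T t) (fun _ : Fin t => u) := by
  classical
  have hne : Nonempty V := hT.isConnected.nonempty
  obtain ⟨⟨p, q⟩, hpq⟩ := Finite.exists_max (fun pr : V × V => T.dist pr.1 pr.2)
  have hmax : ∀ a b, T.dist a b ≤ T.dist p q := fun a b => hpq (a, b)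
  have hD : 2 ≤ T.dist p q := by
    obtain ⟨a, b, hab⟩ := Fintype.exists_pair_of_one_lt_card (α := V) (by omega)
    have hthird : ∃ c, c ≠ a ∧ c ≠ b := by
      by_contra hcon
      push_neg at hcon
      have hsub : (Finset.univ : Finset V) ⊆ {a, b} := by
        intro c _
        simp only [Finset.mem_insert, Finset.mem_singleton]
        rcases eq_or_ne c a with h1 | h1
        · exact Or.inl h1
        · exact Or.inr (hcon c h1)
      have hc1 := Finset.card_le_card hsub
      have hc2 : ({a, b} : Finset V).card ≤ 2 :=
        (Finset.card_insert_le a {b}).trans (by simp)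
      rw [Finset.card_univ] at hc1
      omega
    obtain ⟨c, hca, hcb⟩ := hthird
    have d1 : 1 ≤ T.dist a b := hT.isConnected.pos_dist_of_ne hab
    have d2 : 1 ≤ T.dist a c := hT.isConnected.pos_dist_of_ne (Ne.symm hca)
    have d3 : 1 ≤ T.dist b c := hT.isConnected.pos_dist_of_ne (Ne.symm hcb)
    have m1 := hmax a b
    have m2 := hmax a c
    have m3 := hmax b c
    by_contra hcon
    push_neg at hcon
    have e1 : T.dist a b = 1 := by omega
    have e2 : T.dist a c = 1 := by omega
    have e3 : T.dist b c = 1 := by omega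
    exact tree_no_triangle hT (dist_eq_one_iff_adj.mp e1) (dist_eq_one_iff_adj.mp e3)
      (dist_eq_one_iff_adj.mp e2)
  have hup : eccent (SierpinskiGraph T t) (fun _ : Fin t => v) ≤
      (2^t - 1) * eccent T v + (2^t - t - 1) * (T.dist p q - 2) :=
    ciSup_le fun w => S_upper hT hmax hD t v w
  have hεu : eccent T u ≤ max (T.dist u p) (T.dist u q) :=
    ciSup_le fun z => tree_dist_le_max hT hmax u z
  have hecc1u : 1 ≤ eccent T u := by
    have e1 : T.dist u p ≤ eccent T u := le_ciSup (Finite.bddAbove_range _) p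
    have e2 : T.dist u q ≤ eccent T u := le_ciSup (Finite.bddAbove_range _) q
    have e3 : T.dist p q ≤ T.dist p u + T.dist u q := hT.isConnected.dist_triangle
    have e4 : T.dist p u = T.dist u p := SimpleGraph.dist_comm ..
    omega
  have hqp : T.dist q p = T.dist p q := SimpleGraph.dist_comm ..
  have hlow : (2^t - 1) * eccent T u + (2^t - t - 1) * (T.dist p q - 2) ≤
      eccent (SierpinskiGraph T t) (fun _ : Fin t => u) := by
    rcases le_total (T.dist u p) (T.dist u q) with hy | hy
    · -- use the end q
      have hεu' : eccent T u ≤ T.dist u q := hεu.trans_eq (max_eq_right hy)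
      have huq : u ≠ q := by
        intro he
        subst he
        rw [SimpleGraph.dist_self] at hεu'
        omega
      have hmax' : ∀ a b, T.dist a b ≤ T.dist q p := fun a b => by
        rw [hqp]; exact hmax a b
      have hL := S_lower hT t q p u hmax' (by omega) huq
      rw [hqp] at hL
      have hle : (SierpinskiGraph T t).dist (fun _ => u) (zigW t q p) ≤
          eccent (SierpinskiGraph T t) (fun _ : Fin t => u) :=
        le_ciSup (Finite.bddAbove_range _) (zigW t q p)
      have hm : (2^t - 1) * eccent T u ≤ (2^t - 1) * T.dist u q :=
        Nat.mul_le_mul_left _ hεu'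
      omega
    · -- use the end p
      have hεu' : eccent T u ≤ T.dist u p := hεu.trans_eq (max_eq_left hy)
      have hup' : u ≠ p := by
        intro he
        subst he
        rw [SimpleGraph.dist_self] at hεu'
        omega
      have hL := S_lower hT t p q u hmax hD hup'
      have hle : (SierpinskiGraph T t).dist (fun _ => u) (zigW t p q) ≤
          eccent (SierpinskiGraph T t) (fun _ : Fin t => u) :=
        le_ciSup (Finite.bddAbove_range _) (zigW t p q)
      have hm : (2^t - 1) * eccent T u ≤ (2^t - 1) * T.dist u p :=
        Nat.mul_le_mul_left _ hεu'
      omega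
  have hmono : (2^t - 1) * eccent T v ≤ (2^t - 1) * eccent T u :=
    Nat.mul_le_mul_left _ h
  omega
end
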